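/- arXiv:2410.04903 — 5 statements merged into one kernel-verified Lean document; each statement's English description precedes it below -/
import Mathlib

section
/- Let G be a unicyclic graph with cycle C_\gamma on vertices v_1,...,v_\gamma, where T_i is the tree attached to v_i (so the trees are pairwise disjoint and G is obtained from the disjoint union of the T_i by adding the cycle edges). Then W(G) = (n - \gamma/2) * floor(\gamma^2/4) + (\gamma - 1) * \sum_{i=1}^{\gamma} \alpha_i + \sum_{i=1}^{\gamma} W(T_i) + \sum_{1 \le i < j \le \gamma} (\ell_i \alpha_j + \ell_i \ell_j d_{C_\gamma}(v_i, v_j) + \ell_j \alpha_i), where \alpha_i = D_{T_i}(v_i), \ell_i = |V(T_i)| - 1, and n = |V(G)|. -/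
open SimpleGraph Finset

/-- The Wiener index of a graph: the sum of distances over all unordered pairs of vertices. -/
noncomputable def wienerIndex {V : Type*} [Fintype V] [DecidableEq V] (G : SimpleGraph V) : ℕ :=
  ∑ p : Sym2 V, Sym2.lift ⟨fun u v => G.dist u v, fun u v => SimpleGraph.dist_comm⟩ p

/-- `G` is the unicyclic graph `C_γ(T_1,…,T_γ)`: every vertex `x` belongs to the tree attached
at the cycle position `c x`, `v i` is the cycle vertex (root) at position `i`, the subgraph
induced on each position class is a tree, and the only edges between distinct classes are the
cycle edges joining consecutive roots. -/
def CycleAttach {V : Type*} (G : SimpleGraph V) (γ : ℕ) (c : V → ℕ) (v : ℕ → V) : Prop :=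
  (∀ x, c x < γ) ∧ (∀ i, i < γ → c (v i) = i) ∧
  (∀ i, i < γ → (G.induce {x | c x = i}).IsTree) ∧
  (∀ x y, c x ≠ c y →
    (G.Adj x y ↔ x = v (c x) ∧ y = v (c y) ∧
      ((c x + 1) % γ = c y ∨ (c y + 1) % γ = c x)))



set_option linter.unusedSectionVars false

namespace WUF
variable {V : Type*} [Fintype V] [DecidableEq V]

def cd (γ i j : ℕ) : ℕ := min (max i j - min i j) (γ - (max i j - min i j))

lemma cd_comm (γ i j : ℕ) : cd γ i j = cd γ j i := by unfold cd; omega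

lemma cd_self (γ i : ℕ) : cd γ i i = 0 := by unfold cd; omega

lemma cd_triangle {γ i j k : ℕ} (hi : i < γ) (hj : j < γ) (hk : k < γ) :
    cd γ i j ≤ cd γ i k + cd γ k j := by unfold cd; omega

lemma cd_succ {γ i : ℕ} (hγ : 3 ≤ γ) (h : i < γ) : cd γ i ((i+1) % γ) = 1 := by
  rcases Nat.lt_or_ge (i+1) γ with h'|h'
  · rw [Nat.mod_eq_of_lt h']; unfold cd; omega
  · have h2 : i + 1 = γ := by omega
    have : (i+1) % γ = 0 := by rw [h2]; exact Nat.mod_self γ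
    rw [this]; unfold cd; omega

noncomputable def td (G : SimpleGraph V) (c : V → ℕ) (i : ℕ) (x y : V) : ℕ :=
  if h : c x = i ∧ c y = i then (G.induce {z | c z = i}).dist ⟨x, h.1⟩ ⟨y, h.2⟩ else 0

noncomputable def DD (G : SimpleGraph V) (γ : ℕ) (c : V → ℕ) (v : ℕ → V) (x y : V) : ℕ :=
  if c x = c y then td G c (c x) x y
  else td G c (c x) x (v (c x)) + cd γ (c x) (c y) + td G c (c y) (v (c y)) y


lemma sum_pairs (g : ℕ → ℕ → ℚ) (γ : ℕ) :
    ∑ i ∈ range γ, ∑ j ∈ range γ, g i j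
      = (∑ i ∈ range γ, g i i) + ∑ i ∈ range γ, ∑ j ∈ Ioo i γ, (g i j + g j i) := by
  induction γ with
  | zero => simp
  | succ n ih =>
    have hIoo : ∀ i ∈ range n, ∑ j ∈ Ioo i (n+1), (g i j + g j i)
        = ∑ j ∈ Ioo i n, (g i j + g j i) + (g i n + g n i) := by
      intro i hi
      rw [mem_range] at hi
      rw [show Ioo i (n+1) = insert n (Ioo i n) by ext a; simp [Finset.mem_Ioo]; omega,
        Finset.sum_insert (by simp)]
      ring
    have hempty : Ioo n (n+1) = (∅ : Finset ℕ) := by ext a; simp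
    simp only [Finset.sum_range_succ]
    rw [Finset.sum_congr rfl hIoo, hempty, Finset.sum_add_distrib,
      Finset.sum_add_distrib, Finset.sum_add_distrib] at *
    simp only [Finset.sum_empty] at *
    linarith [ih]

lemma sum_min (γ : ℕ) : ∑ j ∈ range γ, min j (γ - j) = γ ^ 2 / 4 := by
  rcases Nat.eq_zero_or_pos γ with h|h
  · simp [h]
  have hsplit : range γ = Finset.Ico 0 (γ/2+1) ∪ Finset.Ico (γ/2+1) γ := by
    rw [Finset.range_eq_Ico]
    exact (Finset.Ico_union_Ico_eq_Ico (by omega) (by omega)).symm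
  rw [hsplit, Finset.sum_union (Finset.Ico_disjoint_Ico_consecutive _ _ _)]
  have h1 : ∑ j ∈ Finset.Ico 0 (γ/2+1), min j (γ - j) = ∑ j ∈ range (γ/2+1), j := by
    rw [← Finset.range_eq_Ico]
    refine Finset.sum_congr rfl fun j hj => ?_
    rw [mem_range] at hj
    omega
  have h2 : ∑ j ∈ Finset.Ico (γ/2+1) γ, min j (γ - j)
      = ∑ j ∈ Finset.Ico (γ/2+1) γ, (γ - j) := by
    refine Finset.sum_congr rfl fun j hj => ?_
    rw [Finset.mem_Ico] at hj
    omega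
  have h3 : ∑ j ∈ Finset.Ico (γ/2+1) γ, (γ - j) = ∑ k ∈ Finset.Ico 1 (γ - γ/2), k := by
    refine Finset.sum_nbij' (fun j => γ - j) (fun k => γ - k) ?_ ?_ ?_ ?_ ?_
    · intro a ha; rw [Finset.mem_Ico] at ha; simp only [Finset.mem_Ico]; omega
    · intro a ha; rw [Finset.mem_Ico] at ha; simp only [Finset.mem_Ico]; omega
    · intro a ha; rw [Finset.mem_Ico] at ha; omega
    · intro a ha; rw [Finset.mem_Ico] at ha; omega
    · intro a ha; rfl
  have h4 : ∑ k ∈ Finset.Ico 1 (γ - γ/2), k = ∑ k ∈ range (γ - γ/2), k := by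
    rw [Finset.range_eq_Ico, ← Finset.sum_Ico_consecutive _ (Nat.zero_le 1)
      (by omega : 1 ≤ γ - γ/2)]
    simp
  rw [h1, h2, h3, h4, Finset.sum_range_id, Finset.sum_range_id]
  rcases Nat.even_or_odd γ with ⟨k, hk⟩|⟨k, hk⟩
  · subst hk
    have e0 : k + k = 2 * k := by ring
    rw [e0]
    have e1 : (2*k)/2 = k := by omega
    rw [e1]
    have e2 : (k+1) * (k+1-1) = k*k + k := by simp; ring
    have e3 : 2*k - k = k := by omega
    have e4 : k * (k-1) = k*k - k := by
      cases k with
      | zero => rfl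
      | succ n =>
        rw [Nat.succ_sub_one]
        symm
        apply Nat.sub_eq_of_eq_add
        ring
    have e5 : (2*k)^2 = 4*(k*k) := by ring
    rw [e2, e3, e4, e5]
    have hle : k ≤ k * k := by nlinarith
    have hdvd : 2 ∣ k*k + k := by
      have h0 := (Nat.even_mul_succ_self k).two_dvd
      have e : k * (k+1) = k*k + k := by ring
      rwa [e] at h0
    omega
  · subst hk
    have e1 : (2*k+1)/2 = k := by omega
    rw [e1]
    have e2 : (k+1) * (k+1-1) = k*k + k := by simp; ring
    have e3 : 2*k+1 - k = k+1 := by omega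
    have e4 : (k+1) * (k+1-1) = k*k + k := e2
    have e5 : (2*k+1)^2 = 4*(k*k+k) + 1 := by ring
    rw [e2, e3, e4, e5]
    have hdvd : 2 ∣ k*k + k := by
      have h0 := (Nat.even_mul_succ_self k).two_dvd
      have e : k * (k+1) = k*k + k := by ring
      rwa [e] at h0
    omega

lemma cd_shift {γ i t : ℕ} (hi : i < γ) (ht : t < γ) :
    cd γ i ((i+t) % γ) = min t (γ - t) := by
  rcases Nat.lt_or_ge (i+t) γ with h|h
  · rw [Nat.mod_eq_of_lt h]; unfold cd; omega
  · rw [Nat.mod_eq_sub_mod h, Nat.mod_eq_of_lt (by omega)]; unfold cd; omega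

lemma add_mod_helper {γ i j : ℕ} (hi : i < γ) (hj : j < γ) :
    (i + (j + γ - i) % γ) % γ = j := by
  have hgpos : 0 < γ := by omega
  have h1 : (i + (j + γ - i) % γ) % γ = (i + (j + γ - i)) % γ := by
    rw [Nat.add_mod, Nat.mod_eq_of_lt (Nat.mod_lt _ hgpos), ← Nat.add_mod]
  rw [h1, show i + (j + γ - i) = γ + j by omega, Nat.add_mod_left, Nat.mod_eq_of_lt hj]

lemma row_sum {γ i : ℕ} (hi : i < γ) : ∑ j ∈ range γ, cd γ i j = γ^2/4 := by
  have hgpos : 0 < γ := by omega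
  have key : ∑ t ∈ range γ, min t (γ - t) = ∑ j ∈ range γ, cd γ i j := by
    refine Finset.sum_nbij' (fun t => (i+t) % γ) (fun j => (j + γ - i) % γ)
      ?_ ?_ ?_ ?_ ?_
    · intro a ha; simp only [mem_range]; exact Nat.mod_lt _ hgpos
    · intro a ha; simp only [mem_range]; exact Nat.mod_lt _ hgpos
    · intro a ha
      simp only [mem_range] at ha
      rcases Nat.lt_or_ge (i+a) γ with h|h
      · rw [Nat.mod_eq_of_lt h, show i + a + γ - i = a + γ by omega,
          Nat.add_mod_right, Nat.mod_eq_of_lt ha]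
      · rw [Nat.mod_eq_sub_mod h, Nat.mod_eq_of_lt (show i + a - γ < γ by omega),
          show i + a - γ + γ - i = a by omega, Nat.mod_eq_of_lt ha]
    · intro a ha
      simp only [mem_range] at ha
      exact add_mod_helper hi ha
    · intro a ha
      simp only [mem_range] at ha
      exact (cd_shift hi ha).symm
  rw [← key, sum_min]

section
variable {G : SimpleGraph V} {γ : ℕ} {c : V → ℕ} {v : ℕ → V}
variable (hγ : 3 ≤ γ) (hc : ∀ x, c x < γ) (hv : ∀ i, i < γ → c (v i) = i)
  (htree : ∀ i, i < γ → (G.induce {x | c x = i}).IsTree)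
  (hadj : ∀ x y, c x ≠ c y → (G.Adj x y ↔ x = v (c x) ∧ y = v (c y) ∧
      ((c x + 1) % γ = c y ∨ (c y + 1) % γ = c x)))

include hγ hv hadj in
lemma adj_consec {k : ℕ} (hk : k < γ) : G.Adj (v k) (v ((k+1) % γ)) := by
  have hk' : (k+1) % γ < γ := Nat.mod_lt _ (by omega)
  have h1 : c (v k) = k := hv k hk
  have h2 : c (v ((k+1) % γ)) = (k+1) % γ := hv _ hk'
  have hne : c (v k) ≠ c (v ((k+1) % γ)) := by
    rw [h1, h2]
    rcases Nat.lt_or_ge (k+1) γ with h'|h'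
    · rw [Nat.mod_eq_of_lt h']; omega
    · have : (k+1) % γ = 0 := by rw [show k+1 = γ by omega]; exact Nat.mod_self γ
      omega
  rw [hadj _ _ hne]
  refine ⟨by rw [h1], by rw [h2], Or.inl ?_⟩
  rw [h1, h2]

include hγ hv hadj in
lemma exists_walk_mod {i : ℕ} (hi : i < γ) (m : ℕ) :
    ∃ w : G.Walk (v i) (v ((i+m) % γ)), w.length = m := by
  induction m with
  | zero => exact ⟨SimpleGraph.Walk.nil.copy rfl (by simp [Nat.mod_eq_of_lt hi]), by simp⟩
  | succ m ih =>
    obtain ⟨w, hw⟩ := ih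
    have hm : (i+m) % γ < γ := Nat.mod_lt _ (by omega)
    have hadj2 : G.Adj (v ((i+m) % γ)) (v ((i+(m+1)) % γ)) := by
      have := adj_consec hγ hv hadj hm
      rwa [Nat.mod_add_mod (i+m) γ 1, show i + m + 1 = i + (m+1) by ring] at this
    exact ⟨w.concat hadj2, by simp [hw]⟩

include hγ hv hadj in
lemma exists_walk_cd {i j : ℕ} (hi : i < γ) (hj : j < γ) :
    ∃ w : G.Walk (v i) (v j), w.length = cd γ i j := by
  have key0 : i + cd γ i j = j ∨ j + cd γ i j = i ∨
      j + cd γ i j = γ + i ∨ i + cd γ i j = γ + j := by unfold cd; omega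
  have key : (i + cd γ i j) % γ = j ∨ (j + cd γ i j) % γ = i := by
    rcases key0 with h|h|h|h
    · left; rw [h, Nat.mod_eq_of_lt hj]
    · right; rw [h, Nat.mod_eq_of_lt hi]
    · right; rw [h, Nat.add_mod_left, Nat.mod_eq_of_lt hi]
    · left; rw [h, Nat.add_mod_left, Nat.mod_eq_of_lt hj]
  rcases key with h|h
  · obtain ⟨w, hw⟩ := exists_walk_mod hγ hv hadj hi (cd γ i j)
    exact ⟨w.copy rfl (by rw [h]), by simp [hw]⟩
  · obtain ⟨w, hw⟩ := exists_walk_mod hγ hv hadj hj (cd γ i j)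
    exact ⟨(w.copy rfl (by rw [h])).reverse, by simp [hw, cd_comm γ i j]⟩

include htree in
lemma td_exists_walk {i : ℕ} (hi : i < γ) {x y : V} (hx : c x = i) (hy : c y = i) :
    ∃ w : G.Walk x y, w.length = td G c i x y := by
  have hconn := (htree i hi).isConnected
  obtain ⟨p, hp⟩ := (hconn ⟨x, hx⟩ ⟨y, hy⟩).exists_walk_length_eq_dist
  refine ⟨p.map ⟨Subtype.val, fun h => h⟩, ?_⟩
  rw [SimpleGraph.Walk.length_map, hp, td, dif_pos ⟨hx, hy⟩]

include htree in
lemma td_comm {i : ℕ} (x y : V) : td G c i x y = td G c i y x := by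
  unfold td
  by_cases h : c x = i ∧ c y = i
  · rw [dif_pos h, dif_pos ⟨h.2, h.1⟩, SimpleGraph.dist_comm]
  · rw [dif_neg h, dif_neg (by tauto)]

lemma td_self {i : ℕ} (x : V) : td G c i x x = 0 := by
  unfold td
  by_cases h : c x = i ∧ c x = i
  · rw [dif_pos h, SimpleGraph.dist_self]
  · rw [dif_neg h]

include htree in
lemma td_adj_le {i : ℕ} (hi : i < γ) {a b y : V} (ha : c a = i) (hb : c b = i)
    (hy : c y = i) (hab : G.Adj a b) : td G c i a y ≤ td G c i b y + 1 := by
  have hconn := (htree i hi).isConnected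
  have h1 : (G.induce {z | c z = i}).Adj ⟨a, ha⟩ ⟨b, hb⟩ := hab
  have h2 := hconn.dist_triangle (u := (⟨a, ha⟩ : {z | c z = i})) (v := ⟨b, hb⟩) (w := ⟨y, hy⟩)
  have h3 : (G.induce {z | c z = i}).dist ⟨a, ha⟩ ⟨b, hb⟩ ≤ 1 :=
    SimpleGraph.dist_le (SimpleGraph.Walk.cons h1 SimpleGraph.Walk.nil)
  rw [td, dif_pos ⟨ha, hy⟩, td, dif_pos ⟨hb, hy⟩]
  omega

include hγ hc hv htree hadj in
lemma dist_le_DD (x y : V) : G.dist x y ≤ DD G γ c v x y := by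
  unfold DD
  by_cases h : c x = c y
  · rw [if_pos h]
    obtain ⟨w, hw⟩ := td_exists_walk htree (hc x) rfl h.symm
    exact hw ▸ SimpleGraph.dist_le w
  · rw [if_neg h]
    obtain ⟨w1, h1⟩ := td_exists_walk htree (hc x) (x := x) (y := v (c x)) rfl (hv _ (hc x))
    obtain ⟨w2, h2⟩ := exists_walk_cd hγ hv hadj (hc x) (hc y)
    obtain ⟨w3, h3⟩ := td_exists_walk htree (hc y) (hv _ (hc y)) rfl (x := v (c y)) (y := y)
    calc G.dist x y ≤ ((w1.append w2).append w3).length := SimpleGraph.dist_le _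
    _ = _ := by simp [SimpleGraph.Walk.length_append, h1, h2, h3]

include hγ hc hv htree hadj in
lemma DD_lipschitz {a b : V} (y : V) (hab : G.Adj a b) :
    DD G γ c v a y ≤ DD G γ c v b y + 1 := by
  by_cases h : c a = c b
  · -- same class: a,b adjacent in tree
    unfold DD
    by_cases h2 : c a = c y
    · rw [if_pos h2, if_pos (h ▸ h2)]
      rw [show c b = c a from h.symm]
      exact td_adj_le htree (hc a) rfl (h.symm) h2.symm hab
    · rw [if_neg h2, if_neg (fun hh => h2 (h.trans hh)), show c b = c a from h.symm]
      have := td_adj_le htree (hc a) rfl h.symm (hv _ (hc a)) hab (y := v (c a))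
      omega
  · -- cycle edge
    obtain ⟨ha, hb, hor⟩ := (hadj a b h).mp hab
    have hcd1 : cd γ (c a) (c b) = 1 := by
      rcases hor with h1|h1
      · rw [← h1]; exact cd_succ hγ (hc a)
      · rw [cd_comm, ← h1]; exact cd_succ hγ (hc b)
    unfold DD
    by_cases h2 : c a = c y
    · -- D a y = td (c a) a y; b in other class
      rw [if_pos h2, if_neg (fun hh => h (h2.trans hh.symm))]
      have e1 : td G c (c a) a y = td G c (c y) (v (c y)) y := by
        rw [← h2, ← ha]
      have e2 : td G c (c b) b (v (c b)) = 0 := by rw [← hb]; exact td_self _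
      omega
    · rw [if_neg h2]
      by_cases h3 : c b = c y
      · -- target in b's class
        rw [if_pos h3]
        have e1 : td G c (c a) a (v (c a)) = 0 := by rw [← ha]; exact td_self _
        have e2 : td G c (c y) (v (c y)) y = td G c (c b) b y := by
          rw [← h3, ← hb]
        have e3 : cd γ (c b) (c y) = 0 := by rw [← h3]; exact cd_self γ _
        have htri : cd γ (c a) (c y) ≤ cd γ (c a) (c b) + cd γ (c b) (c y) :=
          cd_triangle (hc a) (hc y) (hc b)
        omega
      · rw [if_neg h3]
        have e1 : td G c (c a) a (v (c a)) = 0 := by rw [← ha]; exact td_self _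
        have e2 : td G c (c b) b (v (c b)) = 0 := by rw [← hb]; exact td_self _
        have := cd_triangle (i := c a) (j := c y) (k := c b) (hc a) (hc y) (hc b)
        omega

lemma DD_self (y : V) : DD G γ c v y y = 0 := by
  unfold DD; rw [if_pos rfl]; exact td_self _

include hγ hc hv htree hadj in
lemma DD_le_length {x y : V} (w : G.Walk x y) : DD G γ c v x y ≤ w.length := by
  induction w with
  | nil => rw [DD_self]; exact Nat.zero_le _
  | cons hadj2 w ih =>
    rw [SimpleGraph.Walk.length_cons]
    exact le_trans (DD_lipschitz hγ hc hv htree hadj _ hadj2) (Nat.add_le_add_right ih 1)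

include hγ hc hv htree hadj in
lemma dist_eq_DD (x y : V) : G.dist x y = DD G γ c v x y := by
  refine le_antisymm (dist_le_DD hγ hc hv htree hadj x y) ?_
  -- x and y are reachable
  have hr : G.Reachable x y := by
    have h := dist_le_DD hγ hc hv htree hadj x y  -- not enough; construct walk
    by_cases h2 : c x = c y
    · obtain ⟨w, _⟩ := td_exists_walk htree (hc x) rfl h2.symm (x := x) (y := y)
      exact ⟨w⟩
    · obtain ⟨w1, _⟩ := td_exists_walk htree (hc x) (x := x) (y := v (c x)) rfl (hv _ (hc x))
      obtain ⟨w2, _⟩ := exists_walk_cd hγ hv hadj (hc x) (hc y)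
      obtain ⟨w3, _⟩ := td_exists_walk htree (hc y) (hv _ (hc y)) rfl (x := v (c y)) (y := y)
      exact ⟨(w1.append w2).append w3⟩
  obtain ⟨w, hw⟩ := hr.exists_walk_length_eq_dist
  rw [← hw]
  exact DD_le_length hγ hc hv htree hadj w

end

lemma two_mul_sym2_sum (f : V → V → ℕ)
    (hs : ∀ x y, f x y = f y x) (hd : ∀ x, f x x = 0) :
    2 * ∑ p : Sym2 V, Sym2.lift ⟨f, hs⟩ p = ∑ x : V, ∑ y : V, f x y := by
  have key := Finset.sum_fiberwise (univ ×ˢ univ) (fun xy : V × V => s(xy.1, xy.2))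
      (fun xy => f xy.1 xy.2)
  rw [Finset.sum_product] at key
  rw [← key, Finset.mul_sum]
  refine Finset.sum_congr rfl fun p _ => ?_
  induction p using Sym2.ind with
  | _ a b =>
    simp only [Sym2.lift_mk]
    by_cases hab : a = b
    · subst hab
      have : Finset.filter (fun xy : V × V => s(xy.1, xy.2) = s(a, a)) (univ ×ˢ univ)
          = {(a,a)} := by
        ext xy; simp [Sym2.eq_iff, Prod.ext_iff]
      rw [this]; simp [hd]
    · have : Finset.filter (fun xy : V × V => s(xy.1, xy.2) = s(a, b)) (univ ×ˢ univ)
          = {(a,b), (b,a)} := by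
        ext xy; simp [Sym2.eq_iff, Prod.ext_iff]
      rw [this, Finset.sum_pair (by simp [hab, Ne.symm hab] : ((a,b) : V×V) ≠ (b,a))]
      rw [hs b a]; ring

def fib (c : V → ℕ) (i : ℕ) : Finset V := Finset.univ.filter (fun x => c x = i)

noncomputable def Acl (G : SimpleGraph V) (c : V → ℕ) (v : ℕ → V) (i : ℕ) : ℕ :=
  ∑ x ∈ fib c i, td G c i (v i) x

section
variable {G : SimpleGraph V} {γ : ℕ} {c : V → ℕ} {v : ℕ → V}
variable (hγ : 3 ≤ γ) (hc : ∀ x, c x < γ) (hv : ∀ i, i < γ → c (v i) = i)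
  (htree : ∀ i, i < γ → (G.induce {x | c x = i}).IsTree)
  (hadj : ∀ x y, c x ≠ c y → (G.Adj x y ↔ x = v (c x) ∧ y = v (c y) ∧
      ((c x + 1) % γ = c y ∨ (c y + 1) % γ = c x)))

lemma two_mul_wienerIndex (H : SimpleGraph V) :
    2 * wienerIndex H = ∑ x : V, ∑ y : V, H.dist x y :=
  two_mul_sym2_sum _ _ (fun _ => SimpleGraph.dist_self)

lemma td_eq_dist {i : ℕ} {x y : V} (hx : c x = i) (hy : c y = i) :
    td G c i x y = (G.induce {z | c z = i}).dist ⟨x, hx⟩ ⟨y, hy⟩ := dif_pos ⟨hx, hy⟩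

lemma DD_eq_dist_subtype {i : ℕ} (a b : {y | c y = i}) :
    DD G γ c v ↑a ↑b = (G.induce {y | c y = i}).dist a b := by
  have ha : c ↑a = i := a.2
  have hb : c ↑b = i := b.2
  unfold DD
  rw [if_pos (ha.trans hb.symm), ha, td_eq_dist (hx := ha) (hy := hb)]

lemma diag_sum {i : ℕ} (hi : i < γ) :
    ∑ x ∈ fib c i, ∑ y ∈ fib c i, DD G γ c v x y
      = 2 * wienerIndex (G.induce {y | c y = i}) := by
  classical
  rw [two_mul_wienerIndex]
  rw [Finset.sum_subtype (p := fun x => x ∈ {y | c y = i}) (fib c i)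
    (by simp [fib]) (fun x => ∑ y ∈ fib c i, DD G γ c v x y)]
  refine Finset.sum_congr rfl fun a _ => ?_
  rw [Finset.sum_subtype (p := fun x => x ∈ {y | c y = i}) (fib c i)
    (by simp [fib]) (fun y => DD G γ c v (↑a) y)]
  refine Finset.sum_congr rfl fun b _ => ?_
  exact DD_eq_dist_subtype a b

include htree in
lemma cross_sum {i j : ℕ} (hi : i < γ) (hj : j < γ) (hij : i ≠ j) :
    ∑ x ∈ fib c i, ∑ y ∈ fib c j, DD G γ c v x y
      = (fib c j).card * Acl G c v i + (fib c i).card * ((fib c j).card * cd γ i j)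
        + (fib c i).card * Acl G c v j := by
  classical
  have hDD : ∀ x ∈ fib c i, ∀ y ∈ fib c j,
      DD G γ c v x y = td G c i x (v i) + cd γ i j + td G c j (v j) y := by
    intro x hx y hy
    rw [fib, Finset.mem_filter] at hx hy
    unfold DD
    rw [hx.2, hy.2, if_neg hij]
  calc ∑ x ∈ fib c i, ∑ y ∈ fib c j, DD G γ c v x y
      = ∑ x ∈ fib c i, ∑ y ∈ fib c j, (td G c i x (v i) + cd γ i j + td G c j (v j) y) :=
        Finset.sum_congr rfl fun x hx => Finset.sum_congr rfl fun y hy => hDD x hx y hy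
    _ = ∑ x ∈ fib c i, ((fib c j).card * (td G c i x (v i) + cd γ i j) + Acl G c v j) := by
        refine Finset.sum_congr rfl fun x hx => ?_
        rw [Finset.sum_add_distrib, Finset.sum_const, smul_eq_mul, Acl]
    _ = _ := by
        rw [Finset.sum_add_distrib, Finset.sum_const, smul_eq_mul]
        rw [← Finset.mul_sum, Finset.sum_add_distrib, Finset.sum_const, smul_eq_mul]
        have : ∑ x ∈ fib c i, td G c i x (v i) = Acl G c v i := by
          rw [Acl]
          exact Finset.sum_congr rfl fun x _ => td_comm htree x (v i)
        rw [this]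
        ring

include hγ hc hv htree hadj in
lemma main_nat :
    2 * wienerIndex G = ∑ i ∈ Finset.range γ, ∑ j ∈ Finset.range γ,
      (if i = j then 2 * wienerIndex (G.induce {y | c y = i})
       else (fib c j).card * Acl G c v i + (fib c i).card * ((fib c j).card * cd γ i j)
         + (fib c i).card * Acl G c v j) := by
  classical
  rw [two_mul_wienerIndex]
  have h1 : ∑ x : V, ∑ y : V, G.dist x y = ∑ x : V, ∑ y : V, DD G γ c v x y :=
    Finset.sum_congr rfl fun x _ => Finset.sum_congr rfl fun y _ =>
      dist_eq_DD hγ hc hv htree hadj x y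
  rw [h1]
  have hmaps : ∀ x : V, x ∈ (univ : Finset V) → c x ∈ Finset.range γ :=
    fun x _ => Finset.mem_range.mpr (hc x)
  rw [← Finset.sum_fiberwise_of_maps_to hmaps (fun x => ∑ y : V, DD G γ c v x y)]
  refine Finset.sum_congr rfl fun i hi => ?_
  have : ∀ x ∈ Finset.univ.filter (fun x => c x = i),
      ∑ y : V, DD G γ c v x y
        = ∑ j ∈ Finset.range γ, ∑ y ∈ fib c j, DD G γ c v x y := by
    intro x _
    simp only [fib]
    exact (Finset.sum_fiberwise_of_maps_to hmaps (fun y => DD G γ c v x y)).symm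
  rw [Finset.sum_congr rfl this, Finset.sum_comm]
  refine Finset.sum_congr rfl fun j hj => ?_
  rw [Finset.mem_range] at hi hj
  by_cases hij : i = j
  · subst hij
    rw [if_pos rfl]
    exact diag_sum hi
  · rw [if_neg hij]
    exact cross_sum htree hi hj hij

include hc in
lemma card_eq_sum_fib : Fintype.card V = ∑ i ∈ Finset.range γ, (fib c i).card := by
  classical
  rw [← Finset.card_univ]
  exact Finset.card_eq_sum_card_fiberwise (fun x _ => Finset.mem_range.mpr (hc x))

end

end WUF

/-- The Wiener index formula for a unicyclic graph `G = C_γ(T_1,…,T_γ)`: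
`W(G) = (n - γ/2)⌊γ²/4⌋ + (γ-1)∑α_i + ∑W(T_i) + ∑_{i<j} (ℓ_i α_j + ℓ_i ℓ_j d_{C_γ}(v_i,v_j) + ℓ_j α_i)`,
where `α_i = D_{T_i}(v_i)`, `ℓ_i = |V(T_i)| - 1` and `n = |V(G)|`. -/
theorem wiener_unicyclic_formula {V : Type*} [Fintype V] [DecidableEq V]
    (G : SimpleGraph V) (γ : ℕ) (hγ : 3 ≤ γ) (c : V → ℕ) (v : ℕ → V)
    (hattach : CycleAttach G γ c v) :
    (wienerIndex G : ℚ) =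
      ((Fintype.card V : ℚ) - (γ : ℚ) / 2) * ((γ ^ 2 / 4 : ℕ) : ℚ)
      + ((γ : ℚ) - 1) *
          ∑ i ∈ Finset.range γ,
            ((∑ x : {y | c y = i},
                if h : v i ∈ {y | c y = i} then
                  (G.induce {y | c y = i}).dist ⟨v i, h⟩ x else 0 : ℕ) : ℚ)
      + ∑ i ∈ Finset.range γ, (wienerIndex (G.induce {y | c y = i}) : ℚ)
      + ∑ i ∈ Finset.range γ, ∑ j ∈ Finset.Ioo i γ,
          (((Fintype.card {y | c y = i} : ℚ) - 1) *
              ((∑ x : {y | c y = j},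
                if h : v j ∈ {y | c y = j} then
                  (G.induce {y | c y = j}).dist ⟨v j, h⟩ x else 0 : ℕ) : ℚ)
            + ((Fintype.card {y | c y = i} : ℚ) - 1) * ((Fintype.card {y | c y = j} : ℚ) - 1) *
                ((min (j - i) (γ - (j - i)) : ℕ) : ℚ)
            + ((Fintype.card {y | c y = j} : ℚ) - 1) *
              ((∑ x : {y | c y = i},
                if h : v i ∈ {y | c y = i} then
                  (G.induce {y | c y = i}).dist ⟨v i, h⟩ x else 0 : ℕ) : ℚ)) := by
  classical
  obtain ⟨hc, hv, htree, hadj⟩ := hattach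
  have hγpos : 0 < γ := by omega
  -- notation-level facts
  have hαnat : ∀ i, i < γ →
      (∑ x : {y | c y = i}, if h : v i ∈ {y | c y = i} then
          (G.induce {y | c y = i}).dist ⟨v i, h⟩ x else 0) = WUF.Acl G c v i := by
    intro i hi
    have hm : v i ∈ {y | c y = i} := hv i hi
    have step1 : (∑ x : {y | c y = i}, if h : v i ∈ {y | c y = i} then
        (G.induce {y | c y = i}).dist ⟨v i, h⟩ x else 0)
        = ∑ x : {y | c y = i}, WUF.td G c i (v i) ↑x := by
      refine Finset.sum_congr rfl fun x _ => ?_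
      rw [dif_pos hm]
      exact (WUF.td_eq_dist (hx := hv i hi) (hy := x.2)).symm
    rw [step1, WUF.Acl]
    exact (Finset.sum_subtype _ (by simp [WUF.fib]) _).symm
  have hcard : ∀ i : ℕ, (Fintype.card {y | c y = i}) = (WUF.fib c i).card := by
    intro i
    rw [WUF.fib]
    simp [Fintype.card_subtype]
  have hmincd : ∀ i j : ℕ, i < j → j < γ →
      (min (j - i) (γ - (j - i))) = WUF.cd γ i j := by
    intro i j h1 h2
    unfold WUF.cd
    omega
  -- rewrite the goal's RHS into the clean form
  have e2 : ∑ i ∈ Finset.range γ,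
      ((∑ x : {y | c y = i}, if h : v i ∈ {y | c y = i} then
          (G.induce {y | c y = i}).dist ⟨v i, h⟩ x else 0 : ℕ) : ℚ)
      = ∑ i ∈ Finset.range γ, (WUF.Acl G c v i : ℚ) := by
    refine Finset.sum_congr rfl fun i hi => ?_
    rw [Finset.mem_range] at hi
    exact_mod_cast congrArg (Nat.cast (R := ℚ)) (hαnat i hi)
  have e4 : ∑ i ∈ Finset.range γ, ∑ j ∈ Finset.Ioo i γ,
        (((Fintype.card {y | c y = i} : ℚ) - 1) *
            ((∑ x : {y | c y = j}, if h : v j ∈ {y | c y = j} then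
                (G.induce {y | c y = j}).dist ⟨v j, h⟩ x else 0 : ℕ) : ℚ)
          + ((Fintype.card {y | c y = i} : ℚ) - 1) * ((Fintype.card {y | c y = j} : ℚ) - 1) *
              ((min (j - i) (γ - (j - i)) : ℕ) : ℚ)
          + ((Fintype.card {y | c y = j} : ℚ) - 1) *
            ((∑ x : {y | c y = i}, if h : v i ∈ {y | c y = i} then
                (G.induce {y | c y = i}).dist ⟨v i, h⟩ x else 0 : ℕ) : ℚ))
      = ∑ i ∈ Finset.range γ, ∑ j ∈ Finset.Ioo i γ,
        ((((WUF.fib c i).card : ℚ) - 1) * (WUF.Acl G c v j : ℚ)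
          + (((WUF.fib c i).card : ℚ) - 1) * (((WUF.fib c j).card : ℚ) - 1) *
              (WUF.cd γ i j : ℚ)
          + (((WUF.fib c j).card : ℚ) - 1) * (WUF.Acl G c v i : ℚ)) := by
    refine Finset.sum_congr rfl fun i hi => Finset.sum_congr rfl fun j hj => ?_
    rw [Finset.mem_range] at hi
    rw [Finset.mem_Ioo] at hj
    rw [hcard i, hcard j, hαnat i hi, hαnat j hj.2, hmincd i j hj.1 hj.2]
  rw [e2, e4]
  -- row/column sums of the cycle distance
  have hrowQ : ∀ i ∈ Finset.range γ, ∑ j ∈ Finset.range γ, (WUF.cd γ i j : ℚ)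
      = ((γ ^ 2 / 4 : ℕ) : ℚ) := by
    intro i hi
    rw [Finset.mem_range] at hi
    rw [← Nat.cast_sum]
    exact_mod_cast congrArg (Nat.cast (R := ℚ)) (WUF.row_sum hi)
  have hcolQ : ∀ j ∈ Finset.range γ, ∑ i ∈ Finset.range γ, (WUF.cd γ i j : ℚ)
      = ((γ ^ 2 / 4 : ℕ) : ℚ) := by
    intro j hj
    have hcc : ∀ i ∈ Finset.range γ, (WUF.cd γ i j : ℚ) = (WUF.cd γ j i : ℚ) := by
      intro i _; rw [WUF.cd_comm]
    rw [Finset.sum_congr rfl hcc]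
    exact hrowQ j hj
  have hN : (Fintype.card V : ℚ) = ∑ i ∈ Finset.range γ, ((WUF.fib c i).card : ℚ) := by
    rw [← Nat.cast_sum]
    exact_mod_cast congrArg (Nat.cast (R := ℚ)) (WUF.card_eq_sum_fib hc)
  -- the X sum
  have hX : ∑ i ∈ Finset.range γ, ∑ j ∈ Finset.Ioo i γ,
        ((WUF.Acl G c v i : ℚ) + (WUF.Acl G c v j : ℚ))
      = ((γ : ℚ) - 1) * ∑ i ∈ Finset.range γ, (WUF.Acl G c v i : ℚ) := by
    have hp := WUF.sum_pairs (fun i j => (WUF.Acl G c v i : ℚ) + (WUF.Acl G c v j : ℚ)) γ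
    have h1 : ∀ i ∈ Finset.range γ, ∑ j ∈ Finset.range γ,
        ((WUF.Acl G c v i : ℚ) + (WUF.Acl G c v j : ℚ))
          = (γ : ℚ) * (WUF.Acl G c v i : ℚ)
            + ∑ j ∈ Finset.range γ, (WUF.Acl G c v j : ℚ) := by
      intro i _
      rw [Finset.sum_add_distrib, Finset.sum_const, Finset.card_range, nsmul_eq_mul]
    rw [Finset.sum_congr rfl h1, Finset.sum_add_distrib, ← Finset.mul_sum,
      Finset.sum_const, Finset.card_range, nsmul_eq_mul] at hp
    have hd : ∑ i ∈ Finset.range γ, ((WUF.Acl G c v i : ℚ) + (WUF.Acl G c v i : ℚ))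
        = ∑ i ∈ Finset.range γ, (WUF.Acl G c v i : ℚ)
          + ∑ i ∈ Finset.range γ, (WUF.Acl G c v i : ℚ) := Finset.sum_add_distrib
    have h2 : ∑ i ∈ Finset.range γ, ∑ j ∈ Finset.Ioo i γ,
        (((WUF.Acl G c v i : ℚ) + (WUF.Acl G c v j : ℚ))
          + ((WUF.Acl G c v j : ℚ) + (WUF.Acl G c v i : ℚ)))
        = 2 * ∑ i ∈ Finset.range γ, ∑ j ∈ Finset.Ioo i γ,
            ((WUF.Acl G c v i : ℚ) + (WUF.Acl G c v j : ℚ)) := by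
      rw [Finset.mul_sum]
      refine Finset.sum_congr rfl fun i _ => ?_
      rw [Finset.mul_sum]
      exact Finset.sum_congr rfl fun j _ => by ring
    rw [hd, h2] at hp
    linarith [hp]
  -- the Y sum
  have hY : ∑ i ∈ Finset.range γ, ∑ j ∈ Finset.Ioo i γ,
        ((((WUF.fib c i).card : ℚ) + ((WUF.fib c j).card : ℚ) - 1) * (WUF.cd γ i j : ℚ))
      = ((Fintype.card V : ℚ) - (γ : ℚ) / 2) * ((γ ^ 2 / 4 : ℕ) : ℚ) := by
    have hp := WUF.sum_pairs
      (fun i j => ((((WUF.fib c i).card : ℚ) + ((WUF.fib c j).card : ℚ) - 1)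
        * (WUF.cd γ i j : ℚ))) γ
    have hl : ∑ i ∈ Finset.range γ, ∑ j ∈ Finset.range γ,
        ((((WUF.fib c i).card : ℚ) + ((WUF.fib c j).card : ℚ) - 1) * (WUF.cd γ i j : ℚ))
        = (2 * (∑ i ∈ Finset.range γ, ((WUF.fib c i).card : ℚ)) - (γ : ℚ))
            * ((γ ^ 2 / 4 : ℕ) : ℚ) := by
      have hsplit : ∀ i ∈ Finset.range γ, ∀ j ∈ Finset.range γ,
          ((((WUF.fib c i).card : ℚ) + ((WUF.fib c j).card : ℚ) - 1) * (WUF.cd γ i j : ℚ))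
            = (((WUF.fib c i).card : ℚ) - 1) * (WUF.cd γ i j : ℚ)
              + ((WUF.fib c j).card : ℚ) * (WUF.cd γ i j : ℚ) := by
        intro i _ j _; ring
      rw [Finset.sum_congr rfl (fun i hi =>
        Finset.sum_congr rfl (fun j hj => hsplit i hi j hj))]
      have hs1 : ∀ i ∈ Finset.range γ, ∑ j ∈ Finset.range γ,
          ((((WUF.fib c i).card : ℚ) - 1) * (WUF.cd γ i j : ℚ)
            + ((WUF.fib c j).card : ℚ) * (WUF.cd γ i j : ℚ))
          = (((WUF.fib c i).card : ℚ) - 1) * ((γ ^ 2 / 4 : ℕ) : ℚ)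
            + ∑ j ∈ Finset.range γ, ((WUF.fib c j).card : ℚ) * (WUF.cd γ i j : ℚ) := by
        intro i hi
        rw [Finset.sum_add_distrib, ← Finset.mul_sum, hrowQ i hi]
      rw [Finset.sum_congr rfl hs1, Finset.sum_add_distrib]
      have hs2 : ∑ i ∈ Finset.range γ, ∑ j ∈ Finset.range γ,
          ((WUF.fib c j).card : ℚ) * (WUF.cd γ i j : ℚ)
          = (∑ i ∈ Finset.range γ, ((WUF.fib c i).card : ℚ)) * ((γ ^ 2 / 4 : ℕ) : ℚ) := by
        rw [Finset.sum_comm, Finset.sum_mul]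
        refine Finset.sum_congr rfl fun j hj => ?_
        rw [← Finset.mul_sum, hcolQ j hj]
      have hs3 : ∑ i ∈ Finset.range γ, (((WUF.fib c i).card : ℚ) - 1) * ((γ ^ 2 / 4 : ℕ) : ℚ)
          = ((∑ i ∈ Finset.range γ, ((WUF.fib c i).card : ℚ)) - (γ : ℚ))
            * ((γ ^ 2 / 4 : ℕ) : ℚ) := by
        rw [← Finset.sum_mul, Finset.sum_sub_distrib, Finset.sum_const, Finset.card_range,
          nsmul_eq_mul, mul_one]
      rw [hs2, hs3]
      ring
    have hdg : ∑ i ∈ Finset.range γ,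
        ((((WUF.fib c i).card : ℚ) + ((WUF.fib c i).card : ℚ) - 1) * (WUF.cd γ i i : ℚ))
        = 0 := by
      refine Finset.sum_eq_zero fun i _ => ?_
      rw [WUF.cd_self]
      simp
    have hpr : ∑ i ∈ Finset.range γ, ∑ j ∈ Finset.Ioo i γ,
        (((((WUF.fib c i).card : ℚ) + ((WUF.fib c j).card : ℚ) - 1) * (WUF.cd γ i j : ℚ))
          + ((((WUF.fib c j).card : ℚ) + ((WUF.fib c i).card : ℚ) - 1) * (WUF.cd γ j i : ℚ)))
        = 2 * ∑ i ∈ Finset.range γ, ∑ j ∈ Finset.Ioo i γ,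
            ((((WUF.fib c i).card : ℚ) + ((WUF.fib c j).card : ℚ) - 1)
              * (WUF.cd γ i j : ℚ)) := by
      rw [Finset.mul_sum]
      refine Finset.sum_congr rfl fun i _ => ?_
      rw [Finset.mul_sum]
      refine Finset.sum_congr rfl fun j _ => ?_
      rw [WUF.cd_comm γ j i]
      ring
    rw [hl, hdg, hpr] at hp
    rw [hN]
    linear_combination -hp / 2
  -- the main counting identity, cast to ℚ
  have hmnQ : 2 * (wienerIndex G : ℚ) = ∑ i ∈ Finset.range γ, ∑ j ∈ Finset.range γ,
      ((if i = j then 2 * wienerIndex (G.induce {y | c y = i})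
        else (WUF.fib c j).card * WUF.Acl G c v i
          + (WUF.fib c i).card * ((WUF.fib c j).card * WUF.cd γ i j)
          + (WUF.fib c i).card * WUF.Acl G c v j : ℕ) : ℚ) := by
    exact_mod_cast congrArg (Nat.cast (R := ℚ)) (WUF.main_nat hγ hc hv htree hadj)
  have hps := WUF.sum_pairs (fun i j =>
      ((if i = j then 2 * wienerIndex (G.induce {y | c y = i})
        else (WUF.fib c j).card * WUF.Acl G c v i
          + (WUF.fib c i).card * ((WUF.fib c j).card * WUF.cd γ i j)
          + (WUF.fib c i).card * WUF.Acl G c v j : ℕ) : ℚ)) γ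
  rw [hps] at hmnQ
  have hdiagQ : ∑ i ∈ Finset.range γ,
      ((if i = i then 2 * wienerIndex (G.induce {y | c y = i})
        else (WUF.fib c i).card * WUF.Acl G c v i
          + (WUF.fib c i).card * ((WUF.fib c i).card * WUF.cd γ i i)
          + (WUF.fib c i).card * WUF.Acl G c v i : ℕ) : ℚ)
      = 2 * ∑ i ∈ Finset.range γ, (wienerIndex (G.induce {y | c y = i}) : ℚ) := by
    rw [Finset.mul_sum]
    refine Finset.sum_congr rfl fun i _ => ?_
    rw [if_pos rfl]
    push_cast
    ring
  have hoffQ : ∑ i ∈ Finset.range γ, ∑ j ∈ Finset.Ioo i γ,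
      (((if i = j then 2 * wienerIndex (G.induce {y | c y = i})
        else (WUF.fib c j).card * WUF.Acl G c v i
          + (WUF.fib c i).card * ((WUF.fib c j).card * WUF.cd γ i j)
          + (WUF.fib c i).card * WUF.Acl G c v j : ℕ) : ℚ)
       + ((if j = i then 2 * wienerIndex (G.induce {y | c y = j})
        else (WUF.fib c i).card * WUF.Acl G c v j
          + (WUF.fib c j).card * ((WUF.fib c i).card * WUF.cd γ j i)
          + (WUF.fib c j).card * WUF.Acl G c v i : ℕ) : ℚ))
      = ∑ i ∈ Finset.range γ, ∑ j ∈ Finset.Ioo i γ,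
        (2 * ((WUF.Acl G c v i : ℚ) + (WUF.Acl G c v j : ℚ))
          + 2 * ((((WUF.fib c i).card : ℚ) + ((WUF.fib c j).card : ℚ) - 1)
              * (WUF.cd γ i j : ℚ))
          + 2 * ((((WUF.fib c i).card : ℚ) - 1) * (WUF.Acl G c v j : ℚ)
            + (((WUF.fib c i).card : ℚ) - 1) * (((WUF.fib c j).card : ℚ) - 1)
                * (WUF.cd γ i j : ℚ)
            + (((WUF.fib c j).card : ℚ) - 1) * (WUF.Acl G c v i : ℚ))) := by
    refine Finset.sum_congr rfl fun i hi => Finset.sum_congr rfl fun j hj => ?_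
    rw [Finset.mem_Ioo] at hj
    have hij : i ≠ j := Nat.ne_of_lt hj.1
    rw [if_neg hij, if_neg (Ne.symm hij)]
    push_cast
    rw [WUF.cd_comm γ j i]
    ring
  have hsplitQ : ∑ i ∈ Finset.range γ, ∑ j ∈ Finset.Ioo i γ,
        (2 * ((WUF.Acl G c v i : ℚ) + (WUF.Acl G c v j : ℚ))
          + 2 * ((((WUF.fib c i).card : ℚ) + ((WUF.fib c j).card : ℚ) - 1)
              * (WUF.cd γ i j : ℚ))
          + 2 * ((((WUF.fib c i).card : ℚ) - 1) * (WUF.Acl G c v j : ℚ)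
            + (((WUF.fib c i).card : ℚ) - 1) * (((WUF.fib c j).card : ℚ) - 1)
                * (WUF.cd γ i j : ℚ)
            + (((WUF.fib c j).card : ℚ) - 1) * (WUF.Acl G c v i : ℚ)))
      = 2 * (∑ i ∈ Finset.range γ, ∑ j ∈ Finset.Ioo i γ,
          ((WUF.Acl G c v i : ℚ) + (WUF.Acl G c v j : ℚ)))
        + 2 * (∑ i ∈ Finset.range γ, ∑ j ∈ Finset.Ioo i γ,
          ((((WUF.fib c i).card : ℚ) + ((WUF.fib c j).card : ℚ) - 1) * (WUF.cd γ i j : ℚ)))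
        + 2 * (∑ i ∈ Finset.range γ, ∑ j ∈ Finset.Ioo i γ,
          ((((WUF.fib c i).card : ℚ) - 1) * (WUF.Acl G c v j : ℚ)
            + (((WUF.fib c i).card : ℚ) - 1) * (((WUF.fib c j).card : ℚ) - 1)
                * (WUF.cd γ i j : ℚ)
            + (((WUF.fib c j).card : ℚ) - 1) * (WUF.Acl G c v i : ℚ))) := by
    simp only [Finset.sum_add_distrib, ← Finset.mul_sum]
  rw [hdiagQ, hoffQ, hsplitQ, hX, hY] at hmnQ
  linarith [hmnQ]
end

section
/- Suppose c = (c_{-m},...,c_m) is a symmetric decreasing non-negative sequence (c_0 \ge c_1 = c_{-1} \ge c_2 = c_{-2} \ge ...), and x, y are non-negative sequences indexed by {-k,...,k}. Then the bilinear form \sum_{r=-k}^{k} \sum_{s=-k}^{k} c_{r-s} x_r y_s is maximized over all rearrangements of x and y when x and y are arranged in the '+' order, i.e., x^+_0 \ge x^+_1 \ge x^+_{-1} \ge x^+_2 \ge x^+_{-2} \ge ... \ge x^+_k \ge x^+_{-k} and similarly for y^+. -/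
open Finset

/-- A sequence `x : ℤ → ℝ` is in the `+` order on `{-k,…,k}` if
`x 0 ≥ x 1 ≥ x (-1) ≥ x 2 ≥ x (-2) ≥ ⋯ ≥ x k ≥ x (-k)`. -/
def PlusArranged (k : ℕ) (x : ℤ → ℝ) : Prop :=
  ∀ i : ℕ, 1 ≤ i → i ≤ k → x (i : ℤ) ≤ x (1 - (i : ℤ)) ∧ x (-(i : ℤ)) ≤ x (i : ℤ)

def Rcnt (A B : Finset ℤ) (d : ℤ) : ℕ :=
  ((A ×ˢ B).filter (fun p => p.1 - p.2 = d)).card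

def Pcnt (t : ℕ) (A B : Finset ℤ) : ℕ :=
  ((A ×ˢ B).filter (fun p => |p.1 - p.2| ≤ (t : ℤ))).card

lemma Pcnt_eq_sum (t : ℕ) (A B : Finset ℤ) :
    Pcnt t A B = ∑ d ∈ Finset.Icc (-(t:ℤ)) (t:ℤ), Rcnt A B d := by
  rw [Pcnt, Finset.card_eq_sum_card_fiberwise
    (f := fun p => p.1 - p.2) (t := Finset.Icc (-(t:ℤ)) (t:ℤ))
    (fun p hp => by
      simp only [Finset.mem_coe, Finset.mem_filter] at hp
      simpa [Finset.mem_Icc] using abs_le.mp hp.2)]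
  apply Finset.sum_congr rfl
  intro d hd
  rw [Finset.filter_filter, Rcnt]
  congr 1
  apply Finset.filter_congr
  intro p _
  simp only [Finset.mem_Icc] at hd
  constructor
  · exact fun h => h.2
  · exact fun h => ⟨by rw [h]; exact abs_le.mpr ⟨hd.1, hd.2⟩, h⟩

lemma sum_Rcnt (A B : Finset ℤ) (U : Finset ℤ) (hU : ∀ p ∈ A ×ˢ B, p.1 - p.2 ∈ U) :
    ∑ d ∈ U, Rcnt A B d = A.card * B.card := by
  rw [← Finset.card_product]
  exact (Finset.card_eq_sum_card_fiberwise hU).symm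

lemma nat_id (m a b : ℕ) (hma : m ≤ a) (hmb : m ≤ b) :
    m * (a + b - m) + (a - m) * (b - m) = a * b := by
  obtain ⟨p, rfl⟩ : ∃ p, a = m + p := ⟨a - m, by omega⟩
  obtain ⟨q, rfl⟩ : ∃ q, b = m + q := ⟨b - m, by omega⟩
  have h1 : m + p + (m + q) - m = m + p + q := by omega
  have h2 : m + p - m = p := by omega
  have h3 : m + q - m = q := by omega
  rw [h1, h2, h3]; ring

lemma card_filter_le_fin (n mm : ℕ) (h : mm ≤ n) :
    ((univ : Finset (Fin n)).filter (fun i => mm ≤ i.val)).card = n - mm := by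
  rw [← Nat.card_Ico mm n]
  apply Finset.card_bij (fun i _ => i.val)
  · intro i hi
    simp only [Finset.mem_filter, Finset.mem_univ, true_and] at hi
    simp [Finset.mem_Ico, hi, i.isLt]
  · intro i _ j _ hij
    exact Fin.val_injective hij
  · intro x hx
    simp only [Finset.mem_Ico] at hx
    exact ⟨⟨x, hx.2⟩, by simp [hx.1], rfl⟩

lemma pollard (m : ℕ) (A B : Finset ℤ) (hma : m ≤ A.card) (hmb : m ≤ B.card)
    (U : Finset ℤ) (hU : ∀ p ∈ A ×ˢ B, p.1 - p.2 ∈ U) :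
    m * (A.card + B.card - m) ≤ ∑ d ∈ U, min (Rcnt A B d) m := by
  classical
  let fA : Fin A.card ↪o ℤ := A.orderEmbOfFin rfl
  let fB : Fin B.card ↪o ℤ := B.orderEmbOfFin rfl
  have hfA : ∀ i, fA i ∈ A := fun i => Finset.orderEmbOfFin_mem A rfl i
  have hfB : ∀ j, fB j ∈ B := fun j => Finset.orderEmbOfFin_mem B rfl j
  set E : Finset (Fin A.card × Fin B.card) :=
    univ.filter (fun p => p.1.val < m ∨ p.2.val < m) with hE
  have hpred : (univ.filter (fun p : Fin A.card × Fin B.card =>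
      ¬(p.1.val < m ∨ p.2.val < m)))
      = ((univ : Finset (Fin A.card)).filter (fun i => m ≤ i.val)) ×ˢ
        ((univ : Finset (Fin B.card)).filter (fun j => m ≤ j.val)) := by
    rw [← Finset.filter_product, ← Finset.univ_product_univ]
    apply Finset.filter_congr
    intro p _
    constructor
    · intro h; exact ⟨by omega, by omega⟩
    · intro h; omega
  have hcompl : (univ.filter (fun p : Fin A.card × Fin B.card =>
      ¬(p.1.val < m ∨ p.2.val < m))).card = (A.card - m) * (B.card - m) := by
    rw [hpred, Finset.card_product, card_filter_le_fin _ _ hma, card_filter_le_fin _ _ hmb]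
  have hEcard : E.card + (A.card - m) * (B.card - m) = A.card * B.card := by
    rw [← hcompl, hE]
    rw [Finset.card_filter_add_card_filter_not]
    simp
  have hfib : E.card = ∑ d ∈ U, (E.filter (fun p => fA p.1 - fB p.2 = d)).card := by
    apply Finset.card_eq_sum_card_fiberwise
    intro p _
    exact hU (fA p.1, fB p.2) (Finset.mem_product.mpr ⟨hfA _, hfB _⟩)
  have hm' : ∀ d, (E.filter (fun p => fA p.1 - fB p.2 = d)).card ≤ m := by
    intro d
    have h := Finset.card_le_card_of_injOn (fun p => min p.1.val p.2.val)
      (s := E.filter (fun p => fA p.1 - fB p.2 = d)) (t := Finset.range m) ?_ ?_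
    · simpa using h
    · intro p hp
      simp only [Finset.mem_coe, hE, Finset.mem_filter, Finset.mem_univ, true_and] at hp
      simp only [Finset.mem_coe, Finset.mem_range]
      omega
    · intro p hp q hq hpq
      simp only [Finset.coe_filter, Set.mem_setOf_eq, hE, Finset.mem_filter,
        Finset.mem_univ, true_and] at hp hq
      simp only at hpq
      rcases lt_trichotomy p.1 q.1 with h | h | h
      · exfalso
        have h1 : fA p.1 < fA q.1 := fA.strictMono h
        have h2 : fB p.2 < fB q.2 := by
          have e1 := hp.2; have e2 := hq.2; linarith
        have h3 : p.2 < q.2 := fB.lt_iff_lt.mp h2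
        have h4 : p.1.val < q.1.val := h
        have h5 : p.2.val < q.2.val := h3
        omega
      · have h1 : fB p.2 = fB q.2 := by
          have e1 := hp.2; have e2 := hq.2
          rw [h] at e1; linarith
        have h2 : p.2 = q.2 := fB.injective h1
        exact Prod.ext h h2
      · exfalso
        have h1 : fA q.1 < fA p.1 := fA.strictMono h
        have h2 : fB q.2 < fB p.2 := by
          have e1 := hp.2; have e2 := hq.2; linarith
        have h3 : q.2 < p.2 := fB.lt_iff_lt.mp h2
        have h4 : q.1.val < p.1.val := h
        have h5 : q.2.val < p.2.val := h3
        omega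
  have hr : ∀ d, (E.filter (fun p => fA p.1 - fB p.2 = d)).card ≤ Rcnt A B d := by
    intro d
    apply Finset.card_le_card_of_injOn (fun p => (fA p.1, fB p.2))
    · intro p hp
      simp only [Finset.mem_coe, hE, Finset.mem_filter, Finset.mem_univ, true_and] at hp
      simp only [Finset.mem_coe, Rcnt, Finset.mem_filter]
      exact ⟨Finset.mem_product.mpr ⟨hfA _, hfB _⟩, hp.2⟩
    · intro p _ q _ h
      have h1 : fA p.1 = fA q.1 := congrArg Prod.fst h
      have h2 : fB p.2 = fB q.2 := congrArg Prod.snd h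
      exact Prod.ext (fA.injective h1) (fB.injective h2)
  have hmain : E.card ≤ ∑ d ∈ U, min (Rcnt A B d) m := by
    rw [hfib]
    exact Finset.sum_le_sum (fun d _ => Nat.le_min.mpr ⟨hr d, hm' d⟩)
  have hid := nat_id m A.card B.card hma hmb
  have : m * (A.card + B.card - m) ≤ E.card := by linarith
  linarith


noncomputable def Sseg (j : ℕ) : Finset ℤ := Finset.Icc (-((j/2 : ℕ) : ℤ)) (((j+1)/2 : ℕ) : ℤ)

lemma Rcnt_Icc_ge (lo1 hi1 lo2 hi2 d : ℤ) (θ : ℕ)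
    (h1 : (θ:ℤ) ≤ hi1 - lo1 + 1) (h2 : (θ:ℤ) ≤ hi2 - lo2 + 1)
    (h3 : (θ:ℤ) ≤ hi1 - lo2 - d + 1) (h4 : (θ:ℤ) ≤ hi2 + d - lo1 + 1) :
    θ ≤ Rcnt (Finset.Icc lo1 hi1) (Finset.Icc lo2 hi2) d := by
  have hcard : θ ≤ (Finset.Icc (max lo1 (lo2+d)) (min hi1 (hi2+d))).card := by
    rw [Int.card_Icc]
    omega
  refine hcard.trans ?_
  apply Finset.card_le_card_of_injOn (fun r => (r, r - d))
  · intro r hr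
    simp only [Finset.mem_coe, Finset.mem_Icc] at hr
    simp only [Finset.mem_coe, Rcnt, Finset.mem_filter, Finset.mem_product, Finset.mem_Icc]
    refine ⟨⟨⟨by omega, by omega⟩, by omega, by omega⟩, by ring⟩
  · intro r _ r' _ h
    exact congrArg Prod.fst h

lemma min_card (R M : ℕ) : ((Finset.Icc 1 M).filter (fun θ => θ ≤ R)).card = min R M := by
  have h : (Finset.Icc 1 M).filter (fun θ => θ ≤ R) = Finset.Icc 1 (min R M) := by
    ext θ
    simp only [Finset.mem_filter, Finset.mem_Icc]
    omega
  rw [h, Nat.card_Icc]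
  omega

lemma gauss (a b m0 : ℕ) : ∀ M, m0 ≤ M → M ≤ min a b →
    m0 * (a + b - m0) + ∑ θ ∈ Finset.Icc (m0+1) M, (a + b + 1 - 2*θ) = M * (a + b - M) := by
  intro M
  induction M with
  | zero =>
    intro h1 _
    have : m0 = 0 := by omega
    subst this
    simp
  | succ n ih =>
    intro h1 h2
    rcases Nat.lt_or_ge m0 (n+1) with hlt | hge
    · have hm : m0 ≤ n := by omega
      rw [Finset.sum_Icc_succ_top (by omega)]
      have hih := ih hm (by omega)
      have harith : n * (a+b-n) + (a+b+1-2*(n+1)) = (n+1)*(a+b-(n+1)) := by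
        obtain ⟨c, hc⟩ : ∃ c, a + b = 2*n+2+c := ⟨a+b-(2*n+2), by omega⟩
        have e1 : a+b-n = n+2+c := by omega
        have e2 : a+b+1-2*(n+1) = c+1 := by omega
        have e3 : a+b-(n+1) = n+1+c := by omega
        rw [e1, e2, e3]; ring
      omega
    · have : m0 = n+1 := by omega
      subst this
      rw [Finset.Icc_eq_empty (by omega)]
      simp

lemma nseg_bound (t θ ja lb : ℕ) (hθ1 : 1 ≤ θ) (hθa : θ ≤ ja + 1) (hθb : θ ≤ lb + 1) :
    min (2*t+1) ((ja+1) + (lb+1) + 1 - 2*θ) ≤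
    ((Finset.Icc (-(t:ℤ)) (t:ℤ)).filter (fun d => θ ≤ Rcnt (Sseg ja) (Sseg lb) d)).card := by
  set lo1 : ℤ := -((ja/2 : ℕ) : ℤ) with hlo1
  set hi1 : ℤ := (((ja+1)/2 : ℕ) : ℤ) with hhi1
  set lo2 : ℤ := -((lb/2 : ℕ) : ℤ) with hlo2
  set hi2 : ℤ := (((lb+1)/2 : ℕ) : ℤ) with hhi2
  set p : ℤ := lo1 - hi2 + θ - 1 with hp
  set q : ℤ := hi1 - lo2 - θ + 1 with hq
  have hsub : Finset.Icc (max p (-(t:ℤ))) (min q (t:ℤ)) ⊆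
      (Finset.Icc (-(t:ℤ)) (t:ℤ)).filter (fun d => θ ≤ Rcnt (Sseg ja) (Sseg lb) d) := by
    intro d hd
    simp only [Finset.mem_Icc, le_max_iff, max_le_iff, le_min_iff, min_le_iff] at hd
    simp only [Finset.mem_filter, Finset.mem_Icc]
    refine ⟨⟨by omega, by omega⟩, ?_⟩
    apply Rcnt_Icc_ge lo1 hi1 lo2 hi2 d θ (by omega) (by omega) (by omega) (by omega)
  have hc := Finset.card_le_card hsub
  rw [Int.card_Icc] at hc
  omega

lemma mstar_mul (a b : ℕ) : (min a b) * (a + b - min a b) = a * b := by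
  rcases le_total a b with h | h
  · rw [min_eq_left h]
    have : a + b - a = b := by omega
    rw [this]
  · rw [min_eq_right h]
    have : a + b - b = a := by omega
    rw [this, Nat.mul_comm]

lemma core (t ja lb : ℕ) (A B : Finset ℤ) (hA : A.card = ja + 1) (hB : B.card = lb + 1) :
    Pcnt t A B ≤ Pcnt t (Sseg ja) (Sseg lb) := by
  classical
  set a := ja + 1 with ha
  set b := lb + 1 with hb
  set mstar := min a b with hmstar
  set m0 := min mstar ((a+b)/2 - t) with hm0
  set W : Finset ℤ := Finset.Icc (-(t:ℤ)) (t:ℤ) with hW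
  have hWcard : W.card = 2*t+1 := by
    rw [hW, Int.card_Icc]; omega
  have hm0a : m0 ≤ a := by omega
  have hm0b : m0 ≤ b := by omega
  -- upper bound for A, B
  have hup : Pcnt t A B + m0 * (a + b - m0) ≤ (2*t+1) * m0 + a * b := by
    set U : Finset ℤ := W ∪ ((A ×ˢ B).image (fun p => p.1 - p.2)) with hUdef
    have hU : ∀ p ∈ A ×ˢ B, p.1 - p.2 ∈ U :=
      fun p hp => Finset.mem_union_right _ (Finset.mem_image_of_mem _ hp)
    have hWU : W ⊆ U := Finset.subset_union_left
    have e1 : Pcnt t A B = ∑ d ∈ W, Rcnt A B d := Pcnt_eq_sum t A B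
    have e2 : ∑ d ∈ W, Rcnt A B d ≤ ∑ d ∈ W, (m0 + (Rcnt A B d - m0)) :=
      Finset.sum_le_sum (fun d _ => by omega)
    have e3 : ∑ d ∈ W, (m0 + (Rcnt A B d - m0))
        = (2*t+1) * m0 + ∑ d ∈ W, (Rcnt A B d - m0) := by
      rw [Finset.sum_add_distrib, Finset.sum_const, hWcard, smul_eq_mul]
    have e4 : ∑ d ∈ W, (Rcnt A B d - m0) ≤ ∑ d ∈ U, (Rcnt A B d - m0) :=
      Finset.sum_le_sum_of_subset hWU
    have e5 : ∑ d ∈ U, min (Rcnt A B d) m0 + ∑ d ∈ U, (Rcnt A B d - m0) = a * b := by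
      rw [← Finset.sum_add_distrib]
      rw [show (∑ d ∈ U, (min (Rcnt A B d) m0 + (Rcnt A B d - m0)))
          = ∑ d ∈ U, Rcnt A B d from Finset.sum_congr rfl (fun d _ => by omega)]
      rw [sum_Rcnt A B U hU, hA, hB]
    have e6 := pollard m0 A B (by omega) (by omega) U hU
    rw [hA, hB] at e6
    omega
  -- lower bound for the segments
  have hlow : (2*t+1) * m0 + a * b ≤ m0 * (a + b - m0) + Pcnt t (Sseg ja) (Sseg lb) := by
    have hSA : (Sseg ja).card = a := by
      rw [Sseg, Int.card_Icc]; omega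
    have hSB : (Sseg lb).card = b := by
      rw [Sseg, Int.card_Icc]; omega
    have f1 : Pcnt t (Sseg ja) (Sseg lb) = ∑ d ∈ W, Rcnt (Sseg ja) (Sseg lb) d :=
      Pcnt_eq_sum t _ _
    have f2 : ∀ d, min (Rcnt (Sseg ja) (Sseg lb) d) mstar ≤ Rcnt (Sseg ja) (Sseg lb) d :=
      fun d => Nat.min_le_left _ _
    have f3 : ∑ d ∈ W, min (Rcnt (Sseg ja) (Sseg lb) d) mstar
        = ∑ θ ∈ Finset.Icc 1 mstar, ((W.filter (fun d => θ ≤ Rcnt (Sseg ja) (Sseg lb) d)).card) := by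
      have : ∀ d, min (Rcnt (Sseg ja) (Sseg lb) d) mstar
          = ∑ θ ∈ Finset.Icc 1 mstar, (if θ ≤ Rcnt (Sseg ja) (Sseg lb) d then 1 else 0) := by
        intro d
        rw [← Finset.card_filter, min_card]
      rw [Finset.sum_congr rfl (fun d _ => this d), Finset.sum_comm]
      apply Finset.sum_congr rfl
      intro θ _
      rw [Finset.card_filter]
    -- split the θ-sum
    have hsplit : ∑ θ ∈ Finset.Icc 1 mstar, ((W.filter (fun d => θ ≤ Rcnt (Sseg ja) (Sseg lb) d)).card)
        = ∑ θ ∈ Finset.Ico 1 (m0+1), ((W.filter (fun d => θ ≤ Rcnt (Sseg ja) (Sseg lb) d)).card)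
          + ∑ θ ∈ Finset.Ico (m0+1) (mstar+1), ((W.filter (fun d => θ ≤ Rcnt (Sseg ja) (Sseg lb) d)).card) := by
      rw [← Finset.Ico_add_one_right_eq_Icc]
      rw [Finset.sum_Ico_consecutive _ (by omega) (by omega)]
    have g1 : ∀ θ ∈ Finset.Ico 1 (m0+1),
        2*t+1 ≤ (W.filter (fun d => θ ≤ Rcnt (Sseg ja) (Sseg lb) d)).card := by
      intro θ hθ
      simp only [Finset.mem_Ico] at hθ
      have hb1 := nseg_bound t θ ja lb (by omega) (by omega) (by omega)
      have : min (2*t+1) ((ja+1) + (lb+1) + 1 - 2*θ) = 2*t+1 := by omega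
      rw [this] at hb1
      exact hb1
    have g2 : ∀ θ ∈ Finset.Ico (m0+1) (mstar+1),
        a + b + 1 - 2*θ ≤ (W.filter (fun d => θ ≤ Rcnt (Sseg ja) (Sseg lb) d)).card := by
      intro θ hθ
      simp only [Finset.mem_Ico] at hθ
      have hb1 := nseg_bound t θ ja lb (by omega) (by omega) (by omega)
      exact le_trans (by omega) hb1
    have s1 : (m0) * (2*t+1) ≤ ∑ θ ∈ Finset.Ico 1 (m0+1), ((W.filter (fun d => θ ≤ Rcnt (Sseg ja) (Sseg lb) d)).card) := by
      calc (m0) * (2*t+1) = ∑ _θ ∈ Finset.Ico 1 (m0+1), (2*t+1) := by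
            rw [Finset.sum_const, Nat.card_Ico, smul_eq_mul, Nat.add_sub_cancel]
        _ ≤ _ := Finset.sum_le_sum g1
    have s2 : ∑ θ ∈ Finset.Ico (m0+1) (mstar+1), (a + b + 1 - 2*θ)
        ≤ ∑ θ ∈ Finset.Ico (m0+1) (mstar+1), ((W.filter (fun d => θ ≤ Rcnt (Sseg ja) (Sseg lb) d)).card) :=
      Finset.sum_le_sum g2
    have hgauss := gauss a b m0 mstar (by omega) (by omega)
    rw [← Finset.Ico_add_one_right_eq_Icc] at hgauss
    have hmm := mstar_mul a b
    rw [← hmstar] at hmm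
    have hcomm : (2*t+1) * m0 = m0 * (2*t+1) := Nat.mul_comm _ _
    have htot : ∑ d ∈ W, min (Rcnt (Sseg ja) (Sseg lb) d) mstar ≤ Pcnt t (Sseg ja) (Sseg lb) := by
      rw [f1]
      exact Finset.sum_le_sum (fun d _ => f2 d)
    rw [f3, hsplit] at htot
    have := Nat.add_le_add s1 s2
    -- (2t+1)*m0 + ab ≤ m0*(a+b-m0) + Pcnt
    have hx : m0 * (2*t+1) + ∑ θ ∈ Finset.Ico (m0+1) (mstar+1), (a+b+1-2*θ) ≤ Pcnt t (Sseg ja) (Sseg lb) :=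
      le_trans this htot
    -- from hgauss : m0*(a+b-m0) + Σ = mstar*(a+b-mstar) = a*b
    omega
  omega

def eplus (j : ℕ) : ℤ := if j % 2 = 1 then (((j+1)/2 : ℕ) : ℤ) else -(((j/2 : ℕ) : ℤ))

def pidx (r : ℤ) : ℕ := if 0 < r then (2*r - 1).toNat else (2*(-r)).toNat

lemma eplus_pidx (r : ℤ) : eplus (pidx r) = r := by
  by_cases h : 0 < r
  · simp only [pidx, if_pos h, eplus]
    split_ifs with h2
    · omega
    · omega
  · simp only [pidx, if_neg h, eplus]
    split_ifs with h2
    · omega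
    · omega

lemma mem_Sseg (j : ℕ) (r : ℤ) : r ∈ Sseg j ↔ pidx r ≤ j := by
  simp only [Sseg, Finset.mem_Icc, pidx]
  split_ifs with h <;> omega

lemma mem_I_iff (k : ℕ) (r : ℤ) : r ∈ Finset.Icc (-(k:ℤ)) (k:ℤ) ↔ pidx r ≤ 2*k := by
  simp only [Finset.mem_Icc, pidx]
  split_ifs with h <;> omega

lemma Sseg_subset_I (k j : ℕ) (hj : j ≤ 2*k) : Sseg j ⊆ Finset.Icc (-(k:ℤ)) (k:ℤ) := by
  intro r hr
  rw [mem_Sseg] at hr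
  rw [mem_I_iff]
  omega

lemma I_filter_Sseg (k j : ℕ) (hj : j ≤ 2*k) :
    (Finset.Icc (-(k:ℤ)) (k:ℤ)).filter (fun r => r ∈ Sseg j) = Sseg j := by
  ext r
  simp only [Finset.mem_filter, mem_Sseg, mem_I_iff]
  omega

lemma Sseg_card (j : ℕ) : (Sseg j).card = j + 1 := by
  rw [Sseg, Int.card_Icc]
  omega

noncomputable def Gx (k : ℕ) (x : ℤ → ℝ) (j : ℕ) : ℝ := if j ≤ 2*k then x (eplus j) else 0

noncomputable def lamb (k : ℕ) (x : ℤ → ℝ) (j : ℕ) : ℝ := Gx k x j - Gx k x (j+1)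

lemma eplus_even (i : ℕ) : eplus (2*i) = -(i:ℤ) := by
  simp only [eplus]
  rw [if_neg (by omega)]
  have : 2*i/2 = i := by omega
  rw [this]

lemma eplus_odd (i : ℕ) : eplus (2*i+1) = (i:ℤ)+1 := by
  simp only [eplus]
  rw [if_pos (by omega)]
  have : (2*i+1+1)/2 = i+1 := by omega
  rw [this]
  push_cast
  ring

lemma chain (k : ℕ) (x : ℤ → ℝ) (hx : PlusArranged k x) (j : ℕ) (hj : j + 1 ≤ 2*k) :
    x (eplus (j+1)) ≤ x (eplus j) := by
  rcases Nat.even_or_odd j with ⟨i, hi⟩ | ⟨i, hi⟩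
  · -- j = 2i even, j+1 = 2i+1
    have h1 : j = 2*i := by omega
    subst h1
    rw [eplus_odd, eplus_even]
    have hik : i + 1 ≤ k := by omega
    have hle := (hx (i+1) (by omega) hik).1
    have e1 : ((i+1 : ℕ) : ℤ) = (i:ℤ)+1 := by push_cast; ring
    rw [e1] at hle
    rw [show (1:ℤ) - ((i:ℤ)+1) = -(i:ℤ) from by ring] at hle
    exact hle
  · -- j = 2i+1 odd, j+1 = 2i+2 = 2(i+1)
    have h1 : j + 1 = 2*(i+1) := by omega
    have h2 : j = 2*i+1 := by omega
    rw [h1, h2, eplus_even, eplus_odd]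
    have hik : i + 1 ≤ k := by omega
    have hle := (hx (i+1) (by omega) hik).2
    have e1 : ((i+1 : ℕ) : ℤ) = (i:ℤ)+1 := by push_cast; ring
    rw [e1]
    exact hle

lemma lamb_nonneg (k : ℕ) (x : ℤ → ℝ) (hx : PlusArranged k x) (hx0 : ∀ i, 0 ≤ x i) (j : ℕ) :
    0 ≤ lamb k x j := by
  unfold lamb Gx
  rcases Nat.lt_trichotomy j (2*k) with h | h | h
  · rw [if_pos (by omega), if_pos (by omega)]
    have := chain k x hx j (by omega)
    linarith
  · rw [if_pos (by omega), if_neg (by omega)]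
    have := hx0 (eplus j)
    linarith
  · rw [if_neg (by omega), if_neg (by omega)]
    simp

lemma telescope (G : ℕ → ℝ) (p q : ℕ) (hpq : p ≤ q) :
    ∑ j ∈ Finset.Ico p q, (G j - G (j+1)) = G p - G q := by
  rw [Finset.sum_Ico_eq_sub _ hpq, Finset.sum_range_sub' G, Finset.sum_range_sub' G]
  ring

lemma layer (k : ℕ) (x : ℤ → ℝ) (r : ℤ) (hr : r ∈ Finset.Icc (-(k:ℤ)) (k:ℤ)) :
    x r = ∑ j ∈ Finset.range (2*k+1), lamb k x j * (if r ∈ Sseg j then 1 else 0) := by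
  have hidx : pidx r ≤ 2*k := (mem_I_iff k r).mp hr
  have h1 : ∀ j, lamb k x j * (if r ∈ Sseg j then 1 else 0)
      = if pidx r ≤ j then lamb k x j else 0 := by
    intro j
    by_cases h : r ∈ Sseg j
    · rw [if_pos h, if_pos ((mem_Sseg j r).mp h), mul_one]
    · rw [if_neg h, if_neg (fun hc => h ((mem_Sseg j r).mpr hc)), mul_zero]
  rw [Finset.sum_congr rfl (fun j _ => h1 j), Finset.sum_ite, Finset.sum_const_zero, add_zero]
  have h2 : (Finset.range (2*k+1)).filter (fun j => pidx r ≤ j) = Finset.Ico (pidx r) (2*k+1) := by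
    ext j
    simp only [Finset.mem_filter, Finset.mem_range, Finset.mem_Ico]
    omega
  rw [h2]
  unfold lamb
  rw [telescope (Gx k x) _ _ (by omega)]
  unfold Gx
  rw [if_pos (by omega), if_neg (by omega), eplus_pidx]
  ring

noncomputable def Hc (k : ℕ) (c : ℤ → ℝ) (t : ℕ) : ℝ := if t ≤ 2*k then c ((t:ℕ) : ℤ) else 0

noncomputable def nuc (k : ℕ) (c : ℤ → ℝ) (t : ℕ) : ℝ := Hc k c t - Hc k c (t+1)

lemma nuc_nonneg (k : ℕ) (c : ℤ → ℝ) (hc0 : ∀ j, 0 ≤ c j)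
    (hcdec : ∀ i j : ℕ, i ≤ j → c (j : ℤ) ≤ c (i : ℤ)) (t : ℕ) : 0 ≤ nuc k c t := by
  unfold nuc Hc
  rcases Nat.lt_trichotomy t (2*k) with h | h | h
  · rw [if_pos (by omega), if_pos (by omega)]
    have := hcdec t (t+1) (by omega)
    linarith
  · rw [if_pos (by omega), if_neg (by omega)]
    have := hc0 ((t:ℕ) : ℤ)
    linarith
  · rw [if_neg (by omega), if_neg (by omega)]
    simp

lemma cdecomp (k : ℕ) (c : ℤ → ℝ) (hcsymm : ∀ j, c (-j) = c j) (d : ℤ) (hd : |d| ≤ 2*(k:ℤ)) :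
    c d = ∑ t ∈ Finset.range (2*k+1), nuc k c t * (if |d| ≤ (t:ℤ) then 1 else 0) := by
  have habs : |d| = ((d.natAbs : ℕ) : ℤ) := Int.abs_eq_natAbs d
  have h1 : ∀ t : ℕ, nuc k c t * (if |d| ≤ (t:ℤ) then 1 else 0)
      = if d.natAbs ≤ t then nuc k c t else 0 := by
    intro t
    by_cases h : |d| ≤ (t:ℤ)
    · rw [if_pos h, if_pos (by omega), mul_one]
    · rw [if_neg h, if_neg (by omega), mul_zero]
  rw [Finset.sum_congr rfl (fun t _ => h1 t), Finset.sum_ite, Finset.sum_const_zero, add_zero]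
  have h2 : (Finset.range (2*k+1)).filter (fun t => d.natAbs ≤ t) = Finset.Ico d.natAbs (2*k+1) := by
    ext t
    simp only [Finset.mem_filter, Finset.mem_range, Finset.mem_Ico]
    omega
  rw [h2]
  unfold nuc
  rw [telescope (Hc k c) _ _ (by omega)]
  unfold Hc
  rw [if_pos (by omega), if_neg (by omega), sub_zero]
  rcases le_or_gt 0 d with h | h
  · rw [show ((d.natAbs : ℕ) : ℤ) = d by omega]
  · rw [show ((d.natAbs : ℕ) : ℤ) = -d by omega, hcsymm]

lemma Pcnt_real (t : ℕ) (A B : Finset ℤ) :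
    ((Pcnt t A B : ℕ) : ℝ) = ∑ r ∈ A, ∑ s ∈ B, (if |r - s| ≤ (t:ℤ) then (1:ℝ) else 0) := by
  rw [Pcnt, Finset.card_filter, Finset.sum_product]
  push_cast
  apply Finset.sum_congr rfl; intro r _
  apply Finset.sum_congr rfl; intro s _
  split_ifs <;> norm_num

lemma Aset_card (k : ℕ) (σ : Equiv.Perm ℤ)
    (hσ : ∀ i, i ∈ Finset.Icc (-(k : ℤ)) (k : ℤ) ↔ σ i ∈ Finset.Icc (-(k : ℤ)) (k : ℤ))
    (j : ℕ) (hj : j ≤ 2*k) :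
    ((Finset.Icc (-(k : ℤ)) (k : ℤ)).filter (fun r => σ r ∈ Sseg j)).card = j + 1 := by
  rw [← Sseg_card j]
  rw [← Finset.card_image_of_injective
    ((Finset.Icc (-(k : ℤ)) (k : ℤ)).filter (fun r => σ r ∈ Sseg j)) σ.injective]
  congr 1
  ext v
  simp only [Finset.mem_image, Finset.mem_filter]
  constructor
  · rintro ⟨r, ⟨_, hrS⟩, rfl⟩
    exact hrS
  · intro hv
    refine ⟨σ.symm v, ⟨?_, ?_⟩, by simp⟩
    · have hvI : v ∈ Finset.Icc (-(k : ℤ)) (k : ℤ) := Sseg_subset_I k j hj hv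
      have h2 := hσ (σ.symm v)
      rw [Equiv.apply_symm_apply] at h2
      exact h2.mpr hvI
    · rw [Equiv.apply_symm_apply]
      exact hv

lemma double_expand (k : ℕ) (c : ℤ → ℝ) (hcsymm : ∀ j, c (-j) = c j)
    (A B : Finset ℤ) (hA : A ⊆ Finset.Icc (-(k:ℤ)) (k:ℤ)) (hB : B ⊆ Finset.Icc (-(k:ℤ)) (k:ℤ)) :
    ∑ r ∈ A, ∑ s ∈ B, c (r - s)
      = ∑ t ∈ Finset.range (2*k+1), nuc k c t * ((Pcnt t A B : ℕ) : ℝ) := by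
  calc ∑ r ∈ A, ∑ s ∈ B, c (r - s)
      = ∑ r ∈ A, ∑ s ∈ B, ∑ t ∈ Finset.range (2*k+1),
          nuc k c t * (if |r-s| ≤ (t:ℤ) then 1 else 0) := by
        apply Finset.sum_congr rfl; intro r hr
        apply Finset.sum_congr rfl; intro s hs
        apply cdecomp k c hcsymm
        have h1 := Finset.mem_Icc.mp (hA hr)
        have h2 := Finset.mem_Icc.mp (hB hs)
        rw [abs_le]
        omega
    _ = ∑ r ∈ A, ∑ t ∈ Finset.range (2*k+1), ∑ s ∈ B,
          nuc k c t * (if |r-s| ≤ (t:ℤ) then 1 else 0) :=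
        Finset.sum_congr rfl (fun r _ => Finset.sum_comm)
    _ = ∑ t ∈ Finset.range (2*k+1), ∑ r ∈ A, ∑ s ∈ B,
          nuc k c t * (if |r-s| ≤ (t:ℤ) then 1 else 0) := Finset.sum_comm
    _ = ∑ t ∈ Finset.range (2*k+1), nuc k c t * ((Pcnt t A B : ℕ) : ℝ) := by
        apply Finset.sum_congr rfl; intro t _
        rw [Pcnt_real, Finset.mul_sum]
        apply Finset.sum_congr rfl; intro r _
        rw [Finset.mul_sum]

lemma expand (k : ℕ) (c x y : ℤ → ℝ) (hcsymm : ∀ j, c (-j) = c j)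
    (σ τ : Equiv.Perm ℤ)
    (hσ : ∀ i, i ∈ Finset.Icc (-(k : ℤ)) (k : ℤ) ↔ σ i ∈ Finset.Icc (-(k : ℤ)) (k : ℤ))
    (hτ : ∀ i, i ∈ Finset.Icc (-(k : ℤ)) (k : ℤ) ↔ τ i ∈ Finset.Icc (-(k : ℤ)) (k : ℤ)) :
    ∑ r ∈ Finset.Icc (-(k : ℤ)) (k : ℤ), ∑ s ∈ Finset.Icc (-(k : ℤ)) (k : ℤ),
        c (r - s) * x (σ r) * y (τ s)
    = ∑ j ∈ Finset.range (2*k+1), ∑ l ∈ Finset.range (2*k+1), lamb k x j * lamb k y l *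
        (∑ t ∈ Finset.range (2*k+1), nuc k c t *
          ((Pcnt t ((Finset.Icc (-(k : ℤ)) (k : ℤ)).filter (fun r => σ r ∈ Sseg j))
                  ((Finset.Icc (-(k : ℤ)) (k : ℤ)).filter (fun s => τ s ∈ Sseg l)) : ℕ) : ℝ)) := by
  set I := Finset.Icc (-(k : ℤ)) (k : ℤ) with hI
  calc ∑ r ∈ I, ∑ s ∈ I, c (r - s) * x (σ r) * y (τ s)
      = ∑ r ∈ I, ∑ s ∈ I, ∑ j ∈ Finset.range (2*k+1), ∑ l ∈ Finset.range (2*k+1),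
          lamb k x j * lamb k y l *
            ((if σ r ∈ Sseg j then (1:ℝ) else 0) * ((if τ s ∈ Sseg l then (1:ℝ) else 0) * c (r - s))) := by
        apply Finset.sum_congr rfl; intro r hr
        apply Finset.sum_congr rfl; intro s hs
        rw [layer k x (σ r) ((hσ r).mp hr), layer k y (τ s) ((hτ s).mp hs)]
        rw [mul_assoc, Finset.sum_mul_sum]
        rw [Finset.mul_sum]
        apply Finset.sum_congr rfl; intro j _
        rw [Finset.mul_sum]
        apply Finset.sum_congr rfl; intro l _
        ring
    _ = ∑ j ∈ Finset.range (2*k+1), ∑ l ∈ Finset.range (2*k+1), ∑ r ∈ I, ∑ s ∈ I,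
          lamb k x j * lamb k y l *
            ((if σ r ∈ Sseg j then (1:ℝ) else 0) * ((if τ s ∈ Sseg l then (1:ℝ) else 0) * c (r - s))) := by
        rw [show (∑ r ∈ I, ∑ s ∈ I, ∑ j ∈ Finset.range (2*k+1), ∑ l ∈ Finset.range (2*k+1),
          lamb k x j * lamb k y l *
            ((if σ r ∈ Sseg j then (1:ℝ) else 0) * ((if τ s ∈ Sseg l then (1:ℝ) else 0) * c (r - s))))
          = ∑ r ∈ I, ∑ j ∈ Finset.range (2*k+1), ∑ s ∈ I, ∑ l ∈ Finset.range (2*k+1),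
          lamb k x j * lamb k y l *
            ((if σ r ∈ Sseg j then (1:ℝ) else 0) * ((if τ s ∈ Sseg l then (1:ℝ) else 0) * c (r - s)))
          from Finset.sum_congr rfl (fun r _ => Finset.sum_comm)]
        rw [show (∑ r ∈ I, ∑ j ∈ Finset.range (2*k+1), ∑ s ∈ I, ∑ l ∈ Finset.range (2*k+1),
          lamb k x j * lamb k y l *
            ((if σ r ∈ Sseg j then (1:ℝ) else 0) * ((if τ s ∈ Sseg l then (1:ℝ) else 0) * c (r - s))))
          = ∑ j ∈ Finset.range (2*k+1), ∑ r ∈ I, ∑ s ∈ I, ∑ l ∈ Finset.range (2*k+1),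
          lamb k x j * lamb k y l *
            ((if σ r ∈ Sseg j then (1:ℝ) else 0) * ((if τ s ∈ Sseg l then (1:ℝ) else 0) * c (r - s)))
          from Finset.sum_comm]
        apply Finset.sum_congr rfl; intro j _
        rw [show (∑ r ∈ I, ∑ s ∈ I, ∑ l ∈ Finset.range (2*k+1),
          lamb k x j * lamb k y l *
            ((if σ r ∈ Sseg j then (1:ℝ) else 0) * ((if τ s ∈ Sseg l then (1:ℝ) else 0) * c (r - s))))
          = ∑ r ∈ I, ∑ l ∈ Finset.range (2*k+1), ∑ s ∈ I,
          lamb k x j * lamb k y l *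
            ((if σ r ∈ Sseg j then (1:ℝ) else 0) * ((if τ s ∈ Sseg l then (1:ℝ) else 0) * c (r - s)))
          from Finset.sum_congr rfl (fun r _ => Finset.sum_comm)]
        exact Finset.sum_comm
    _ = ∑ j ∈ Finset.range (2*k+1), ∑ l ∈ Finset.range (2*k+1), lamb k x j * lamb k y l *
          (∑ r ∈ I.filter (fun r => σ r ∈ Sseg j), ∑ s ∈ I.filter (fun s => τ s ∈ Sseg l), c (r - s)) := by
        apply Finset.sum_congr rfl; intro j _
        apply Finset.sum_congr rfl; intro l _
        rw [Finset.mul_sum, Finset.sum_filter]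
        apply Finset.sum_congr rfl; intro r _
        by_cases hjr : σ r ∈ Sseg j
        · simp only [if_pos hjr]
          rw [Finset.sum_filter, Finset.mul_sum]
          apply Finset.sum_congr rfl; intro s _
          split_ifs <;> ring
        · simp only [if_neg hjr]
          apply Finset.sum_eq_zero; intro s _
          ring
    _ = ∑ j ∈ Finset.range (2*k+1), ∑ l ∈ Finset.range (2*k+1), lamb k x j * lamb k y l *
        (∑ t ∈ Finset.range (2*k+1), nuc k c t *
          ((Pcnt t (I.filter (fun r => σ r ∈ Sseg j)) (I.filter (fun s => τ s ∈ Sseg l)) : ℕ) : ℝ)) := by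
        apply Finset.sum_congr rfl; intro j _
        apply Finset.sum_congr rfl; intro l _
        rw [double_expand k c hcsymm _ _ (Finset.filter_subset _ _) (Finset.filter_subset _ _)]

/-- Hardy–Littlewood–Pólya, Theorem 371: if `c` is a non-negative symmetrically decreasing
sequence and `x`, `y` are non-negative sequences on `{-k,…,k}` arranged in the `+` order, then
any rearrangement of `x` and `y` does not increase the bilinear form
`∑_{r=-k}^{k} ∑_{s=-k}^{k} c_{r-s} x_r y_s`; i.e. the form is maximized at the `+` order. -/
theorem bilinear_form_max_plus_order (k : ℕ) (c x y : ℤ → ℝ)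
    (hc0 : ∀ j, 0 ≤ c j)
    (hcsymm : ∀ j, c (-j) = c j)
    (hcdec : ∀ i j : ℕ, i ≤ j → c (j : ℤ) ≤ c (i : ℤ))
    (hx0 : ∀ i, 0 ≤ x i) (hy0 : ∀ i, 0 ≤ y i)
    (hx : PlusArranged k x) (hy : PlusArranged k y)
    (σ τ : Equiv.Perm ℤ)
    (hσ : ∀ i, i ∈ Finset.Icc (-(k : ℤ)) (k : ℤ) ↔ σ i ∈ Finset.Icc (-(k : ℤ)) (k : ℤ))
    (hτ : ∀ i, i ∈ Finset.Icc (-(k : ℤ)) (k : ℤ) ↔ τ i ∈ Finset.Icc (-(k : ℤ)) (k : ℤ)) :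
    ∑ r ∈ Finset.Icc (-(k : ℤ)) (k : ℤ), ∑ s ∈ Finset.Icc (-(k : ℤ)) (k : ℤ),
        c (r - s) * x (σ r) * y (τ s) ≤
      ∑ r ∈ Finset.Icc (-(k : ℤ)) (k : ℤ), ∑ s ∈ Finset.Icc (-(k : ℤ)) (k : ℤ),
        c (r - s) * x r * y s := by
  have hR := expand k c x y hcsymm (Equiv.refl ℤ) (Equiv.refl ℤ)
    (fun i => Iff.rfl) (fun i => Iff.rfl)
  simp only [Equiv.refl_apply] at hR
  rw [expand k c x y hcsymm σ τ hσ hτ, hR]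
  apply Finset.sum_le_sum
  intro j hj
  apply Finset.sum_le_sum
  intro l hl
  rw [Finset.mem_range] at hj hl
  apply mul_le_mul_of_nonneg_left ?_
    (mul_nonneg (lamb_nonneg k x hx hx0 j) (lamb_nonneg k y hy hy0 l))
  apply Finset.sum_le_sum
  intro t _
  apply mul_le_mul_of_nonneg_left ?_ (nuc_nonneg k c hc0 hcdec t)
  have key : Pcnt t ((Finset.Icc (-(k : ℤ)) (k : ℤ)).filter (fun r => σ r ∈ Sseg j))
      ((Finset.Icc (-(k : ℤ)) (k : ℤ)).filter (fun s => τ s ∈ Sseg l)) ≤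
      Pcnt t ((Finset.Icc (-(k : ℤ)) (k : ℤ)).filter (fun r => r ∈ Sseg j))
      ((Finset.Icc (-(k : ℤ)) (k : ℤ)).filter (fun s => s ∈ Sseg l)) := by
    rw [I_filter_Sseg k j (by omega), I_filter_Sseg k l (by omega)]
    exact core t j l _ _ (Aset_card k σ hσ j (by omega)) (Aset_card k τ hτ l (by omega))
  exact_mod_cast key
end

section
/- Let G be a unicyclic graph with an odd cycle of length 2k-1 labelled u_1,...,u_k,w_{k-1},...,w_1 (cycle u_1 u_2 ... u_k w_{k-1} ... w_1 u_1), with trees U_i attached at u_i and W_j at w_j. Let T_G be the tree obtained by deleting the edge u_k w_{k-1}. Then W(T_G) - W(G) = \sum_{i=2}^{k} \sum_{j=k+1-i}^{k-1} (2(i+j-k)-1) |V(U_i)| |V(W_j)|. -/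
open SimpleGraph Finset

/-- Subgraph of `G` keeping only intra-class edges. -/
private def Pg {V : Type*} (G : SimpleGraph V) (c : V → ℕ) : SimpleGraph V where
  Adj x y := G.Adj x y ∧ c x = c y
  symm := ⟨fun x y h => ⟨h.1.symm, h.2.symm⟩⟩
  loopless := ⟨fun x h => G.irrefl h.1⟩

private def dcyc (γ a b : ℕ) : ℕ := min (max a b - min a b) (γ - (max a b - min a b))

private def sigk (k a : ℕ) : ℕ := if a < k then a + (k - 1) else a - k

private def dpath (k a b : ℕ) : ℕ :=
  max (sigk k a) (sigk k b) - min (sigk k a) (sigk k b)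

private lemma dcyc_self (γ a : ℕ) : dcyc γ a a = 0 := by unfold dcyc; omega

private lemma dcyc_comm (γ a b : ℕ) : dcyc γ a b = dcyc γ b a := by unfold dcyc; omega

private lemma dcyc_pos {γ a b : ℕ} (ha : a < γ) (hb : b < γ) (h : a ≠ b) : 1 ≤ dcyc γ a b := by
  unfold dcyc; omega

private lemma dpath_self (k a : ℕ) : dpath k a a = 0 := by unfold dpath; omega

private lemma dpath_comm (k a b : ℕ) : dpath k a b = dpath k b a := by unfold dpath; omega

private lemma dpath_pos {k a b : ℕ} (hk : 2 ≤ k) (ha : a < 2 * k - 1) (hb : b < 2 * k - 1)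
    (h : a ≠ b) : 1 ≤ dpath k a b := by
  unfold dpath sigk; split_ifs <;> omega

/-- characterization of consecutive mod. -/
private lemma consec_iff {γ a b : ℕ} (ha : a < γ) (_hb : b < γ) (h : (a + 1) % γ = b) :
    b = a + 1 ∨ (a = γ - 1 ∧ b = 0) := by
  rcases eq_or_lt_of_le (Nat.succ_le_of_lt ha) with h1 | h1
  · right; rw [← h1, Nat.mod_self] at h; omega
  · left; rw [Nat.mod_eq_of_lt h1] at h; omega

private lemma dcyc_consec {γ a b : ℕ} (h3 : 3 ≤ γ) (ha : a < γ) (hb : b < γ)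
    (h : b = a + 1 ∨ a = b + 1 ∨ (a = γ - 1 ∧ b = 0) ∨ (b = γ - 1 ∧ a = 0)) :
    dcyc γ a b = 1 := by
  unfold dcyc; omega

private lemma dcyc_lip {γ a b d : ℕ} (h3 : 3 ≤ γ) (ha : a < γ) (hb : b < γ) (hd : d < γ)
    (h : b = a + 1 ∨ a = b + 1 ∨ (a = γ - 1 ∧ b = 0) ∨ (b = γ - 1 ∧ a = 0)) :
    dcyc γ a d ≤ dcyc γ b d + 1 := by
  unfold dcyc; omega

private lemma dpath_consec {k a b : ℕ} (hk : 2 ≤ k) (ha : a < 2 * k - 1) (hb : b < 2 * k - 1)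
    (h : b = a + 1 ∨ a = b + 1 ∨ (a = 2 * k - 1 - 1 ∧ b = 0) ∨ (b = 2 * k - 1 - 1 ∧ a = 0))
    (hex : ¬(a = k - 1 ∧ b = k) ∧ ¬(b = k - 1 ∧ a = k)) :
    dpath k a b = 1 := by
  unfold dpath sigk; split_ifs <;> omega

private lemma dpath_lip {k a b d : ℕ} (hk : 2 ≤ k) (ha : a < 2 * k - 1) (hb : b < 2 * k - 1)
    (hd : d < 2 * k - 1)
    (h : b = a + 1 ∨ a = b + 1 ∨ (a = 2 * k - 1 - 1 ∧ b = 0) ∨ (b = 2 * k - 1 - 1 ∧ a = 0))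
    (hex : ¬(a = k - 1 ∧ b = k) ∧ ¬(b = k - 1 ∧ a = k)) :
    dpath k a d ≤ dpath k b d + 1 := by
  unfold dpath sigk; split_ifs <;> omega

private lemma dist_eq_of_fun {V : Type*} (H : SimpleGraph V) (D : V → V → ℕ)
    (h0 : ∀ x, D x x = 0)
    (hlip : ∀ x y z, H.Adj x y → D x z ≤ D y z + 1)
    (hwalk : ∀ x y, ∃ p : H.Walk x y, p.length = D x y) :
    ∀ x y, H.dist x y = D x y := by
  have key : ∀ {x y : V} (p : H.Walk x y), D x y ≤ p.length := by
    intro x y p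
    induction p with
    | nil => simp [h0]
    | @cons a b _ h q ih =>
      calc D _ _ ≤ D b _ + 1 := hlip _ _ _ h
        _ ≤ q.length + 1 := by omega
  intro x y
  obtain ⟨p, hp⟩ := hwalk x y
  refine le_antisymm (hp ▸ H.dist_le p) ?_
  obtain ⟨q, hq⟩ := (p.reachable).exists_walk_length_eq_dist
  rw [← hq]; exact key q

private lemma Pg_reach {V : Type*} {G : SimpleGraph V} {γ : ℕ} {c : V → ℕ}
    (hc : ∀ x, c x < γ)
    (htree : ∀ i, i < γ → (G.induce {x | c x = i}).IsTree)
    {x y : V} (hxy : c x = c y) : (Pg G c).Reachable x y := by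
  have hx : x ∈ {z | c z = c x} := rfl
  have hy : y ∈ {z | c z = c x} := hxy.symm
  obtain ⟨p⟩ := ((htree (c x) (hc x)).isConnected.preconnected ⟨x, hx⟩ ⟨y, hy⟩)
  let f : G.induce {z | c z = c x} →g Pg G c :=
    ⟨Subtype.val, fun {a b} h => ⟨h, by rw [a.2, b.2]⟩⟩
  exact ⟨(p.map f)⟩

private lemma dist_lip {V : Type*} {H : SimpleGraph V} {x y z : V}
    (h : H.Adj x y) (hr : H.Reachable y z) : H.dist x z ≤ H.dist y z + 1 := by
  obtain ⟨q, hq⟩ := hr.exists_walk_length_eq_dist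
  calc H.dist x z ≤ (Walk.cons h q).length := H.dist_le _
    _ = H.dist y z + 1 := by simp [hq]

private lemma dist_eq_D {V : Type*} (G H : SimpleGraph V) (γ : ℕ) (c : V → ℕ) (v : ℕ → V)
    (hc : ∀ x, c x < γ) (hcv : ∀ i, i < γ → c (v i) = i)
    (htree : ∀ i, i < γ → (G.induce {x | c x = i}).IsTree)
    (hPH : Pg G c ≤ H) (hHG : H ≤ G)
    (dd : ℕ → ℕ → ℕ)
    (hdd1 : ∀ a b, a < γ → b < γ → a ≠ b → 1 ≤ dd a b)
    (hcross : ∀ x y, H.Adj x y → c x ≠ c y → x = v (c x) ∧ y = v (c y) ∧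
      dd (c x) (c y) = 1 ∧ ∀ d, d < γ → dd (c x) d ≤ dd (c y) d + 1)
    (hwcross : ∀ a b, a < γ → b < γ → ∃ p : H.Walk (v a) (v b), p.length = dd a b) :
    ∀ x y, H.dist x y = (if c x = c y then (Pg G c).dist x y
      else (Pg G c).dist x (v (c x)) + dd (c x) (c y) + (Pg G c).dist (v (c y)) y) := by
  apply dist_eq_of_fun
  · intro x; rw [if_pos rfl]; exact SimpleGraph.dist_self
  · intro x y z hadjxy
    by_cases hab : c x = c y
    · have hP : (Pg G c).Adj x y := ⟨hHG hadjxy, hab⟩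
      by_cases had : c x = c z
      · rw [if_pos had, if_pos (hab.symm.trans had)]
        exact dist_lip hP (Pg_reach hc htree (hab.symm.trans had))
      · rw [if_neg had, if_neg (fun h => had (hab.trans h))]
        have h1 : (Pg G c).dist x (v (c x)) ≤ (Pg G c).dist y (v (c x)) + 1 :=
          dist_lip hP (Pg_reach hc htree (by rw [hcv (c x) (hc x)]; exact hab.symm))
        rw [← hab]
        omega
    · obtain ⟨hx, hy, hdd, hlips⟩ := hcross x y hadjxy hab
      by_cases had : c x = c z
      · rw [if_pos had, if_neg (fun h => hab (had.trans h.symm))]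
        have e1 : (Pg G c).dist y (v (c y)) = 0 := by
          rw [← hy]; exact SimpleGraph.dist_self
        have e2 : (Pg G c).dist x z = (Pg G c).dist (v (c z)) z := by rw [← had, ← hx]
        have e3 : 1 ≤ dd (c y) (c z) :=
          hdd1 _ _ (hc y) (hc z) (fun h => hab (had.trans h.symm))
        omega
      · by_cases hbd : c y = c z
        · rw [if_neg had, if_pos hbd]
          have e1 : (Pg G c).dist x (v (c x)) = 0 := by
            rw [← hx]; exact SimpleGraph.dist_self
          have e2 : (Pg G c).dist y z = (Pg G c).dist (v (c y)) z := by rw [← hy]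
          rw [← hbd, hdd]
          omega
        · rw [if_neg had, if_neg hbd]
          have e1 : (Pg G c).dist x (v (c x)) = 0 := by
            rw [← hx]; exact SimpleGraph.dist_self
          have e2 : (Pg G c).dist y (v (c y)) = 0 := by
            rw [← hy]; exact SimpleGraph.dist_self
          have := hlips (c z) (hc z)
          omega
  · intro x y
    by_cases hab : c x = c y
    · rw [if_pos hab]
      obtain ⟨p, hp⟩ := (Pg_reach hc htree hab).exists_walk_length_eq_dist
      exact ⟨p.mapLe hPH, by simp only [Walk.length_map]; exact hp⟩
    · rw [if_neg hab]
      obtain ⟨p1, h1⟩ := (Pg_reach hc htree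
        (show c x = c (v (c x)) from (hcv _ (hc x)).symm)).exists_walk_length_eq_dist
      obtain ⟨p2, h2⟩ := hwcross (c x) (c y) (hc x) (hc y)
      obtain ⟨p3, h3⟩ := (Pg_reach hc htree
        (show c (v (c y)) = c y from hcv _ (hc y))).exists_walk_length_eq_dist
      refine ⟨(p1.mapLe hPH).append (p2.append (p3.mapLe hPH)), ?_⟩
      simp only [Walk.length_append, Walk.length_map]
      omega

section walks
variable {V : Type*} {G : SimpleGraph V} {γ k : ℕ} {c : V → ℕ} {v : ℕ → V}

/-- the basic cycle edge. -/
private lemma cyc_edge (hcv : ∀ i, i < γ → c (v i) = i)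
    (hadj : ∀ x y, c x ≠ c y → (G.Adj x y ↔ x = v (c x) ∧ y = v (c y) ∧
      ((c x + 1) % γ = c y ∨ (c y + 1) % γ = c x)))
    (h3 : 3 ≤ γ) {a : ℕ} (ha : a < γ) : G.Adj (v a) (v ((a + 1) % γ)) := by
  set b := (a + 1) % γ with hbdef
  have hb : b < γ := Nat.mod_lt _ (by omega)
  have hab : a ≠ b := by
    have : b = a + 1 ∨ (a + 1 = γ ∧ b = 0) := by
      rcases Nat.lt_or_ge (a + 1) γ with h | h
      · left; rw [hbdef, Nat.mod_eq_of_lt h]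
      · right; have : a + 1 = γ := by omega
        constructor
        · exact this
        · rw [hbdef, this, Nat.mod_self]
    omega
  have hne : c (v a) ≠ c (v b) := by rw [hcv a ha, hcv b hb]; exact hab
  rw [hadj _ _ hne]
  refine ⟨by rw [hcv a ha], by rw [hcv b hb], Or.inl ?_⟩
  rw [hcv a ha, hcv b hb]

private lemma cyc_walk (hcv : ∀ i, i < γ → c (v i) = i)
    (hadj : ∀ x y, c x ≠ c y → (G.Adj x y ↔ x = v (c x) ∧ y = v (c y) ∧
      ((c x + 1) % γ = c y ∨ (c y + 1) % γ = c x)))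
    (h3 : 3 ≤ γ) :
    ∀ (n a : ℕ), a < γ → ∃ p : G.Walk (v a) (v ((a + n) % γ)), p.length = n := by
  intro n
  induction n with
  | zero =>
    intro a ha
    rw [show (a + 0) % γ = a by rw [Nat.add_zero, Nat.mod_eq_of_lt ha]]
    exact ⟨Walk.nil, rfl⟩
  | succ n ih =>
    intro a ha
    have hb : (a + 1) % γ < γ := Nat.mod_lt _ (by omega)
    obtain ⟨p, hp⟩ := ih ((a + 1) % γ) hb
    refine ⟨Walk.cons (cyc_edge hcv hadj h3 ha) (p.copy rfl (congrArg v (by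
      rw [Nat.mod_add_mod]; ring_nf))), by simp [hp]⟩

private lemma cyc_walk_le (hcv : ∀ i, i < γ → c (v i) = i)
    (hadj : ∀ x y, c x ≠ c y → (G.Adj x y ↔ x = v (c x) ∧ y = v (c y) ∧
      ((c x + 1) % γ = c y ∨ (c y + 1) % γ = c x)))
    (h3 : 3 ≤ γ) {a b : ℕ} (ha : a < γ) (hb : b < γ) (hab : a ≤ b) :
    ∃ p : G.Walk (v a) (v b), p.length = dcyc γ a b := by
  have w1 : ∃ p : G.Walk (v a) (v b), p.length = b - a := by
    obtain ⟨p, hp⟩ := cyc_walk hcv hadj h3 (b - a) a ha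
    exact ⟨p.copy rfl (congrArg v (by
      rw [show a + (b - a) = b by omega, Nat.mod_eq_of_lt hb])), by simp [hp]⟩
  have w2 : ∃ p : G.Walk (v a) (v b), p.length = γ - (b - a) := by
    obtain ⟨p, hp⟩ := cyc_walk hcv hadj h3 (γ - (b - a)) b hb
    exact ⟨(p.copy rfl (congrArg v (by
      rw [show b + (γ - (b - a)) = γ + a by omega, Nat.add_mod_left,
        Nat.mod_eq_of_lt ha]))).reverse, by simp [hp]⟩
  rcases Nat.le_total (b - a) (γ - (b - a)) with h | h
  · obtain ⟨p, hp⟩ := w1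
    exact ⟨p, by rw [hp]; unfold dcyc; omega⟩
  · obtain ⟨p, hp⟩ := w2
    exact ⟨p, by rw [hp]; unfold dcyc; omega⟩

private lemma cyc_walk' (hcv : ∀ i, i < γ → c (v i) = i)
    (hadj : ∀ x y, c x ≠ c y → (G.Adj x y ↔ x = v (c x) ∧ y = v (c y) ∧
      ((c x + 1) % γ = c y ∨ (c y + 1) % γ = c x)))
    (h3 : 3 ≤ γ) {a b : ℕ} (ha : a < γ) (hb : b < γ) :
    ∃ p : G.Walk (v a) (v b), p.length = dcyc γ a b := by
  rcases Nat.le_total a b with h | h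
  · exact cyc_walk_le hcv hadj h3 ha hb h
  · obtain ⟨p, hp⟩ := cyc_walk_le hcv hadj h3 hb ha h
    exact ⟨p.reverse, by simp [hp, dcyc_comm]⟩

end walks

private def invs (k t : ℕ) : ℕ := if t + 1 < k then t + k else t - (k - 1)
private lemma invs_step {k s : ℕ} (hk : 2 ≤ k) (hs : s + 1 ≤ 2 * k - 2) :
    invs k s < 2 * k - 1 ∧ invs k (s + 1) < 2 * k - 1 ∧
    ((invs k (s + 1) = invs k s + 1 ∧ invs k s + 1 < 2 * k - 1) ∨
      (invs k s = 2 * k - 2 ∧ invs k (s + 1) = 0)) ∧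
    ¬(invs k s = k - 1 ∧ invs k (s + 1) = k) ∧
    ¬(invs k s = k ∧ invs k (s + 1) = k - 1) := by
  unfold invs; split_ifs <;> omega

private lemma invs_sigk {k a : ℕ} (hk : 2 ≤ k) (ha : a < 2 * k - 1) :
    invs k (sigk k a) = a := by
  unfold invs sigk; split_ifs <;> omega

section walks
variable {V : Type*} {G : SimpleGraph V} {k : ℕ} {c : V → ℕ} {v : ℕ → V}

private lemma path_edge (hcv : ∀ i, i < 2 * k - 1 → c (v i) = i)
    (hadj : ∀ x y, c x ≠ c y → (G.Adj x y ↔ x = v (c x) ∧ y = v (c y) ∧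
      ((c x + 1) % (2 * k - 1) = c y ∨ (c y + 1) % (2 * k - 1) = c x)))
    (hk : 2 ≤ k) {s : ℕ} (hs : s + 1 ≤ 2 * k - 2) :
    (G.deleteEdges {s(v (k - 1), v k)}).Adj (v (invs k s)) (v (invs k (s + 1))) := by
  obtain ⟨ha, hb, hcons, hne1, hne2⟩ := invs_step hk hs
  set a := invs k s
  set b := invs k (s + 1)
  have hmod : (a + 1) % (2 * k - 1) = b := by
    rcases hcons with ⟨h1, h2⟩ | ⟨h1, h2⟩
    · rw [Nat.mod_eq_of_lt h2]; omega
    · rw [show a + 1 = 2 * k - 1 by omega, Nat.mod_self]; omega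
  have hab : a ≠ b := by omega
  have hne : c (v a) ≠ c (v b) := by rw [hcv a ha, hcv b hb]; exact hab
  have hGadj : G.Adj (v a) (v b) := by
    rw [hadj _ _ hne]
    exact ⟨by rw [hcv a ha], by rw [hcv b hb],
      Or.inl (by rw [hcv a ha, hcv b hb]; exact hmod)⟩
  rw [SimpleGraph.deleteEdges_adj]
  refine ⟨hGadj, ?_⟩
  rw [Set.mem_singleton_iff, Sym2.eq_iff]
  rintro (⟨h1, h2⟩ | ⟨h1, h2⟩)
  · refine hne1 ⟨?_, ?_⟩
    · have := congrArg c h1; rwa [hcv a ha, hcv (k - 1) (by omega)] at this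
    · have := congrArg c h2; rwa [hcv b hb, hcv k (by omega)] at this
  · refine hne2 ⟨?_, ?_⟩
    · have := congrArg c h1; rwa [hcv a ha, hcv k (by omega)] at this
    · have := congrArg c h2; rwa [hcv b hb, hcv (k - 1) (by omega)] at this

private lemma path_walk (hcv : ∀ i, i < 2 * k - 1 → c (v i) = i)
    (hadj : ∀ x y, c x ≠ c y → (G.Adj x y ↔ x = v (c x) ∧ y = v (c y) ∧
      ((c x + 1) % (2 * k - 1) = c y ∨ (c y + 1) % (2 * k - 1) = c x)))
    (hk : 2 ≤ k) :
    ∀ (m s : ℕ), s + m ≤ 2 * k - 2 →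
      ∃ p : (G.deleteEdges {s(v (k - 1), v k)}).Walk (v (invs k s)) (v (invs k (s + m))),
        p.length = m := by
  intro m
  induction m with
  | zero => intro s _; exact ⟨Walk.nil.copy rfl (by rw [Nat.add_zero]), by simp⟩
  | succ m ih =>
    intro s hs
    obtain ⟨p, hp⟩ := ih (s + 1) (by omega)
    refine ⟨Walk.cons (path_edge hcv hadj hk (by omega))
      (p.copy rfl (congrArg v (by rw [Nat.add_assoc, Nat.add_comm 1 m]))), by simp [hp]⟩

private lemma path_walk_le (hcv : ∀ i, i < 2 * k - 1 → c (v i) = i)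
    (hadj : ∀ x y, c x ≠ c y → (G.Adj x y ↔ x = v (c x) ∧ y = v (c y) ∧
      ((c x + 1) % (2 * k - 1) = c y ∨ (c y + 1) % (2 * k - 1) = c x)))
    (hk : 2 ≤ k) {a b : ℕ} (ha : a < 2 * k - 1) (hb : b < 2 * k - 1)
    (hle : sigk k a ≤ sigk k b) :
    ∃ p : (G.deleteEdges {s(v (k - 1), v k)}).Walk (v a) (v b), p.length = dpath k a b := by
  have hsb : sigk k b ≤ 2 * k - 2 := by unfold sigk; split_ifs <;> omega
  obtain ⟨p, hp⟩ := path_walk hcv hadj hk (sigk k b - sigk k a) (sigk k a) (by omega)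
  refine ⟨p.copy (congrArg v (invs_sigk hk ha)) (congrArg v ?_), ?_⟩
  · rw [show sigk k a + (sigk k b - sigk k a) = sigk k b by omega]
    exact invs_sigk hk hb
  · rw [Walk.length_copy, hp]; unfold dpath; omega

private lemma path_walk' (hcv : ∀ i, i < 2 * k - 1 → c (v i) = i)
    (hadj : ∀ x y, c x ≠ c y → (G.Adj x y ↔ x = v (c x) ∧ y = v (c y) ∧
      ((c x + 1) % (2 * k - 1) = c y ∨ (c y + 1) % (2 * k - 1) = c x)))
    (hk : 2 ≤ k) {a b : ℕ} (ha : a < 2 * k - 1) (hb : b < 2 * k - 1) :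
    ∃ p : (G.deleteEdges {s(v (k - 1), v k)}).Walk (v a) (v b), p.length = dpath k a b := by
  rcases Nat.le_total (sigk k a) (sigk k b) with h | h
  · exact path_walk_le hcv hadj hk ha hb h
  · obtain ⟨p, hp⟩ := path_walk_le hcv hadj hk hb ha h
    exact ⟨p.reverse, by simp [hp, dpath_comm]⟩

end walks


private lemma two_mul_sym2_sum {V : Type*} [Fintype V] [DecidableEq V] (F : Sym2 V → ℤ)
    (hdiag : ∀ x, F s(x, x) = 0) :
    2 * ∑ p : Sym2 V, F p = ∑ x : V, ∑ y : V, F s(x, y) := by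
  have hsurj : Function.Surjective (fun p : V × V => s(p.1, p.2)) := fun p =>
    p.ind (fun x y => ⟨(x, y), rfl⟩)
  have h1 : ∑ x : V, ∑ y : V, F s(x, y) =
      ∑ p ∈ (univ ×ˢ univ : Finset (V × V)), F s(p.1, p.2) :=
    (Finset.sum_product' _ _ _).symm
  rw [h1, Finset.sum_comp F (fun p : V × V => s(p.1, p.2)), Finset.univ_product_univ,
    Finset.image_univ_of_surjective hsurj, Finset.mul_sum]
  refine Finset.sum_congr rfl fun p _ => ?_
  induction p using Sym2.ind with
  | _ x y =>
    by_cases hxy : x = y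
    · subst hxy; simp [hdiag]
    · have hset : {a ∈ (univ : Finset (V × V)) | s(a.1, a.2) = s(x, y)} =
          ({(x, y), (y, x)} : Finset (V × V)) := by
        ext ⟨a1, a2⟩
        simp only [Finset.mem_filter, Finset.mem_univ, true_and, Sym2.eq_iff,
          Finset.mem_insert, Finset.mem_singleton, Prod.mk.injEq]
      have hcard : #{a ∈ (univ : Finset (V × V)) | s(a.1, a.2) = s(x, y)} = 2 := by
        rw [hset, Finset.card_insert_of_notMem (by
          simp only [Finset.mem_singleton, Prod.mk.injEq]
          exact fun h => hxy h.1), Finset.card_singleton]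
      rw [hcard]
      push_cast
      ring


private lemma sum_fiber {V : Type*} [Fintype V] [DecidableEq V] (c : V → ℕ) (γ : ℕ)
    (hc : ∀ x, c x < γ) (f : ℕ → ℤ) :
    ∑ x : V, f (c x) =
      ∑ a ∈ Finset.range γ, ((Finset.univ.filter fun x => c x = a).card : ℤ) * f a := by
  rw [← Finset.sum_fiberwise_of_maps_to' (fun x _ => Finset.mem_range.mpr (hc x)) f]
  refine Finset.sum_congr rfl fun a _ => ?_
  rw [Finset.sum_const, nsmul_eq_mul]

private lemma g_val' {k a b : ℕ} (hk : 2 ≤ k) (h1 : 1 ≤ a) (h2 : a < k) (h3 : k ≤ b)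
    (h4 : b + 1 ≤ a + k) (hb : b < 2 * k - 1) :
    (dpath k a b : ℤ) - (dcyc (2 * k - 1) a b : ℤ) =
      2 * ((↑(a + 1) : ℤ) + (↑(2 * k - 1 - b) : ℤ) - (k : ℤ)) - 1 := by
  have e1 : dpath k a b = a + (2 * k - 1) - b := by unfold dpath sigk; split_ifs <;> omega
  have e2 : dcyc (2 * k - 1) a b = b - a := by unfold dcyc; omega
  rw [e1, e2]; omega

private lemma g_zero {k a b : ℕ} (hk : 2 ≤ k) (ha : a < 2 * k - 1) (hb : b < 2 * k - 1)
    (h1 : ¬(1 ≤ a ∧ a < k ∧ k ≤ b ∧ b + 1 ≤ a + k))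
    (h2 : ¬(1 ≤ b ∧ b < k ∧ k ≤ a ∧ a + 1 ≤ b + k)) :
    dpath k a b = dcyc (2 * k - 1) a b := by
  unfold dpath sigk dcyc; split_ifs <;> omega

private lemma final_sum (k : ℕ) (hk : 2 ≤ k) (n : ℕ → ℤ) :
    ∑ a ∈ Finset.range (2 * k - 1), ∑ b ∈ Finset.range (2 * k - 1),
      n a * n b * ((dpath k a b : ℤ) - (dcyc (2 * k - 1) a b : ℤ))
    = 2 * ∑ i ∈ Finset.Icc 2 k, ∑ j ∈ Finset.Icc (k + 1 - i) (k - 1),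
        (2 * ((i : ℤ) + (j : ℤ) - (k : ℤ)) - 1) * n (i - 1) * n (2 * k - 1 - j) := by
  set R := Finset.range (2 * k - 1) with hR
  set f : ℕ × ℕ → ℤ := fun p =>
    n p.1 * n p.2 * ((dpath k p.1 p.2 : ℤ) - (dcyc (2 * k - 1) p.1 p.2 : ℤ)) with hf
  set S1 : Finset (ℕ × ℕ) :=
    (R ×ˢ R).filter (fun p => 1 ≤ p.1 ∧ p.1 < k ∧ k ≤ p.2 ∧ p.2 + 1 ≤ p.1 + k) with hS1
  set S2 : Finset (ℕ × ℕ) :=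
    (R ×ˢ R).filter (fun p => 1 ≤ p.2 ∧ p.2 < k ∧ k ≤ p.1 ∧ p.1 + 1 ≤ p.2 + k) with hS2
  have hmem1 : ∀ p : ℕ × ℕ, p ∈ S1 ↔
      (1 ≤ p.1 ∧ p.1 < k ∧ k ≤ p.2 ∧ p.2 + 1 ≤ p.1 + k ∧ p.2 < 2 * k - 1) := by
    intro p
    rw [hS1, Finset.mem_filter, Finset.mem_product, hR, Finset.mem_range, Finset.mem_range]
    constructor
    · rintro ⟨⟨hp1, hp2⟩, hc⟩; exact ⟨hc.1, hc.2.1, hc.2.2.1, hc.2.2.2, hp2⟩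
    · rintro ⟨a1, a2, a3, a4, a5⟩; exact ⟨⟨by omega, a5⟩, a1, a2, a3, a4⟩
  have hmem2 : ∀ p : ℕ × ℕ, p ∈ S2 ↔
      (1 ≤ p.2 ∧ p.2 < k ∧ k ≤ p.1 ∧ p.1 + 1 ≤ p.2 + k ∧ p.1 < 2 * k - 1) := by
    intro p
    rw [hS2, Finset.mem_filter, Finset.mem_product, hR, Finset.mem_range, Finset.mem_range]
    constructor
    · rintro ⟨⟨hp1, hp2⟩, hc⟩; exact ⟨hc.1, hc.2.1, hc.2.2.1, hc.2.2.2, hp1⟩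
    · rintro ⟨a1, a2, a3, a4, a5⟩; exact ⟨⟨a5, by omega⟩, a1, a2, a3, a4⟩
  have h0 : ∑ a ∈ R, ∑ b ∈ R,
      n a * n b * ((dpath k a b : ℤ) - (dcyc (2 * k - 1) a b : ℤ)) = ∑ p ∈ R ×ˢ R, f p :=
    (Finset.sum_product' R R (fun a b =>
      n a * n b * ((dpath k a b : ℤ) - (dcyc (2 * k - 1) a b : ℤ)))).symm
  have hsub : ∑ p ∈ R ×ˢ R, f p = ∑ p ∈ S1 ∪ S2, f p := by
    refine (Finset.sum_subset (Finset.union_subset (Finset.filter_subset _ _)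
      (Finset.filter_subset _ _)) ?_).symm
    intro p hp hnp
    rw [Finset.mem_union] at hnp
    push_neg at hnp
    have hp' := hp
    rw [Finset.mem_product, hR, Finset.mem_range, Finset.mem_range] at hp'
    have h1 : ¬(1 ≤ p.1 ∧ p.1 < k ∧ k ≤ p.2 ∧ p.2 + 1 ≤ p.1 + k) := fun hcond =>
      hnp.1 (Finset.mem_filter.mpr ⟨hp, hcond⟩)
    have h2 : ¬(1 ≤ p.2 ∧ p.2 < k ∧ k ≤ p.1 ∧ p.1 + 1 ≤ p.2 + k) := fun hcond =>
      hnp.2 (Finset.mem_filter.mpr ⟨hp, hcond⟩)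
    have hz := g_zero hk hp'.1 hp'.2 h1 h2
    rw [hf]
    simp only [hz, sub_self, mul_zero]
  have hdisj : Disjoint S1 S2 := by
    rw [Finset.disjoint_left]
    intro p h1 h2
    rw [hS1, Finset.mem_filter] at h1
    rw [hS2, Finset.mem_filter] at h2
    omega
  have hswap : ∑ p ∈ S2, f p = ∑ p ∈ S1, f p := by
    refine Finset.sum_nbij' Prod.swap Prod.swap ?_ ?_ ?_ ?_ ?_
    · intro p hp
      rw [hmem2] at hp
      rw [hmem1]
      simp only [Prod.fst_swap, Prod.snd_swap]
      omega
    · intro p hp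
      rw [hmem1] at hp
      rw [hmem2]
      simp only [Prod.fst_swap, Prod.snd_swap]
      omega
    · intro p _; rfl
    · intro p _; rfl
    · intro p _
      rw [hf]
      simp only [Prod.fst_swap, Prod.snd_swap]
      rw [dpath_comm, dcyc_comm]
      ring
  have hbij : ∑ p ∈ S1, f p = ∑ i ∈ Finset.Icc 2 k, ∑ j ∈ Finset.Icc (k + 1 - i) (k - 1),
      (2 * ((i : ℤ) + (j : ℤ) - (k : ℤ)) - 1) * n (i - 1) * n (2 * k - 1 - j) := by
    rw [Finset.sum_sigma' (Finset.Icc 2 k) (fun i => Finset.Icc (k + 1 - i) (k - 1))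
      (fun i j => (2 * ((i : ℤ) + (j : ℤ) - (k : ℤ)) - 1) * n (i - 1) * n (2 * k - 1 - j))]
    refine Finset.sum_bij' (fun p _ => ⟨p.1 + 1, 2 * k - 1 - p.2⟩)
      (fun q _ => (q.1 - 1, 2 * k - 1 - q.2)) ?_ ?_ ?_ ?_ ?_
    · intro p hp
      rw [hmem1] at hp
      obtain ⟨p1, p2⟩ := p
      dsimp only at hp ⊢
      simp only [Finset.mem_sigma, Finset.mem_Icc]
      omega
    · intro q hq
      rw [Finset.mem_sigma, Finset.mem_Icc, Finset.mem_Icc] at hq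
      obtain ⟨q1, q2⟩ := q
      rw [hmem1]
      dsimp only at hq ⊢
      omega
    · intro p hp
      rw [hmem1] at hp
      obtain ⟨p1, p2⟩ := p
      dsimp only at hp ⊢
      rw [Prod.mk.injEq]
      constructor <;> omega
    · intro q hq
      rw [Finset.mem_sigma, Finset.mem_Icc, Finset.mem_Icc] at hq
      obtain ⟨q1, q2⟩ := q
      dsimp only at hq ⊢
      refine Sigma.ext ?_ (heq_of_eq ?_) <;> dsimp only <;> omega
    · intro p hp
      rw [hmem1] at hp
      obtain ⟨p1, p2⟩ := p
      rw [hf]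
      dsimp only at hp ⊢
      rw [show p1 + 1 - 1 = p1 by omega, show 2 * k - 1 - (2 * k - 1 - p2) = p2 by omega,
        g_val' hk hp.1 hp.2.1 hp.2.2.1 hp.2.2.2.1 hp.2.2.2.2]
      ring
  rw [h0, hsub, Finset.sum_union hdisj, hswap, hbij]
  ring


/-- For a unicyclic graph `G = C_{2k-1}(U_1,…,U_k,W_{k-1},…,W_1)` with odd cycle
`u_1 ⋯ u_k w_{k-1} ⋯ w_1 u_1` (here `u_i` is the root at position `i-1` and `w_j` the root at
position `2k-1-j`), deleting the cycle edge `u_k w_{k-1}` yields a tree `T_G` with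
`W(T_G) - W(G) = ∑_{i=2}^{k} ∑_{j=k+1-i}^{k-1} (2(i+j-k)-1) |V(U_i)| |V(W_j)|`. -/
theorem wiener_diff_odd_cycle {V : Type*} [Fintype V] [DecidableEq V]
    (G : SimpleGraph V) (k : ℕ) (hk : 2 ≤ k) (c : V → ℕ) (v : ℕ → V)
    (hattach : CycleAttach G (2 * k - 1) c v) :
    (wienerIndex (G.deleteEdges {s(v (k - 1), v k)}) : ℤ) - (wienerIndex G : ℤ) =
      ∑ i ∈ Finset.Icc 2 k, ∑ j ∈ Finset.Icc (k + 1 - i) (k - 1),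
        (2 * ((i : ℤ) + (j : ℤ) - (k : ℤ)) - 1) *
          ((Finset.univ.filter fun x => c x = i - 1).card : ℤ) *
          ((Finset.univ.filter fun x => c x = 2 * k - 1 - j).card : ℤ) := by
  obtain ⟨hc, hcv, htree, hadj⟩ := hattach
  have h3 : 3 ≤ 2 * k - 1 := by omega
  have hPT : Pg G c ≤ G.deleteEdges {s(v (k - 1), v k)} := by
    intro x y h
    rw [SimpleGraph.deleteEdges_adj]
    refine ⟨h.1, fun hmem => ?_⟩
    rw [Set.mem_singleton_iff, Sym2.eq_iff] at hmem
    have h2 := h.2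
    rcases hmem with ⟨h1', h2'⟩ | ⟨h1', h2'⟩
    · rw [h1', h2', hcv (k - 1) (by omega), hcv k (by omega)] at h2; omega
    · rw [h1', h2', hcv k (by omega), hcv (k - 1) (by omega)] at h2; omega
  have hconsof : ∀ x y : V, c x ≠ c y →
      ((c x + 1) % (2 * k - 1) = c y ∨ (c y + 1) % (2 * k - 1) = c x) →
      (c y = c x + 1 ∨ c x = c y + 1 ∨ (c x = 2 * k - 1 - 1 ∧ c y = 0) ∨
        (c y = 2 * k - 1 - 1 ∧ c x = 0)) := by
    intro x y hne hor
    rcases hor with h | h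
    · rcases consec_iff (hc x) (hc y) h with h' | h'
      · left; omega
      · right; right; left; exact h'
    · rcases consec_iff (hc y) (hc x) h with h' | h'
      · right; left; omega
      · right; right; right; exact h'
  have hcrossG : ∀ x y, G.Adj x y → c x ≠ c y → x = v (c x) ∧ y = v (c y) ∧
      dcyc (2 * k - 1) (c x) (c y) = 1 ∧
      ∀ d, d < 2 * k - 1 → dcyc (2 * k - 1) (c x) d ≤ dcyc (2 * k - 1) (c y) d + 1 := by
    intro x y hxy hne
    obtain ⟨hx, hy, hor⟩ := (hadj x y hne).mp hxy
    have hcons := hconsof x y hne hor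
    exact ⟨hx, hy, dcyc_consec h3 (hc x) (hc y) hcons,
      fun d hd => dcyc_lip h3 (hc x) (hc y) hd hcons⟩
  have hdG := dist_eq_D G G (2 * k - 1) c v hc hcv htree (fun _ _ h => h.1) (le_refl G)
    (dcyc (2 * k - 1)) (fun a b ha hb hne => dcyc_pos ha hb hne) hcrossG
    (fun a b ha hb => cyc_walk' hcv hadj h3 ha hb)
  have hcrossT : ∀ x y, (G.deleteEdges {s(v (k - 1), v k)}).Adj x y → c x ≠ c y →
      x = v (c x) ∧ y = v (c y) ∧ dpath k (c x) (c y) = 1 ∧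
      ∀ d, d < 2 * k - 1 → dpath k (c x) d ≤ dpath k (c y) d + 1 := by
    intro x y hxy hne
    have hGxy : G.Adj x y := (SimpleGraph.deleteEdges_le _) hxy
    obtain ⟨hx, hy, hor⟩ := (hadj x y hne).mp hGxy
    have hcons := hconsof x y hne hor
    rw [SimpleGraph.deleteEdges_adj] at hxy
    have hex : ¬(c x = k - 1 ∧ c y = k) ∧ ¬(c y = k - 1 ∧ c x = k) := by
      constructor
      · rintro ⟨e1, e2⟩
        refine hxy.2 ?_
        rw [Set.mem_singleton_iff, Sym2.eq_iff]
        left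
        constructor
        · rw [hx, e1]
        · rw [hy, e2]
      · rintro ⟨e1, e2⟩
        refine hxy.2 ?_
        rw [Set.mem_singleton_iff, Sym2.eq_iff]
        right
        constructor
        · rw [hx, e2]
        · rw [hy, e1]
    exact ⟨hx, hy, dpath_consec hk (hc x) (hc y) hcons hex,
      fun d hd => dpath_lip hk (hc x) (hc y) hd hcons hex⟩
  have hdT := dist_eq_D G (G.deleteEdges {s(v (k - 1), v k)}) (2 * k - 1) c v hc hcv htree hPT
    (SimpleGraph.deleteEdges_le _) (dpath k) (fun a b ha hb hne => dpath_pos hk ha hb hne)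
    hcrossT (fun a b ha hb => path_walk' hcv hadj hk ha hb)
  have hdiff : ∀ x y : V,
      ((G.deleteEdges {s(v (k - 1), v k)}).dist x y : ℤ) - (G.dist x y : ℤ) =
        (dpath k (c x) (c y) : ℤ) - (dcyc (2 * k - 1) (c x) (c y) : ℤ) := by
    intro x y
    rw [hdT x y, hdG x y]
    by_cases h : c x = c y
    · rw [if_pos h, if_pos h, h, dpath_self, dcyc_self]
      simp
    · rw [if_neg h, if_neg h]
      push_cast
      ring
  have hWsum : 2 * ((wienerIndex (G.deleteEdges {s(v (k - 1), v k)}) : ℤ) -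
      (wienerIndex G : ℤ)) =
      ∑ x : V, ∑ y : V, (((G.deleteEdges {s(v (k - 1), v k)}).dist x y : ℤ) -
        (G.dist x y : ℤ)) := by
    unfold wienerIndex
    push_cast
    rw [← Finset.sum_sub_distrib]
    rw [two_mul_sym2_sum _ (fun x => by simp [SimpleGraph.dist_self])]
    simp only [Sym2.lift_mk]
  have hfib : ∑ x : V, ∑ y : V,
      ((dpath k (c x) (c y) : ℤ) - (dcyc (2 * k - 1) (c x) (c y) : ℤ)) =
      ∑ a ∈ Finset.range (2 * k - 1), ∑ b ∈ Finset.range (2 * k - 1),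
        ((Finset.univ.filter fun x => c x = a).card : ℤ) *
          ((Finset.univ.filter fun x => c x = b).card : ℤ) *
          ((dpath k a b : ℤ) - (dcyc (2 * k - 1) a b : ℤ)) := by
    calc ∑ x : V, ∑ y : V,
        ((dpath k (c x) (c y) : ℤ) - (dcyc (2 * k - 1) (c x) (c y) : ℤ))
        = ∑ x : V, ∑ b ∈ Finset.range (2 * k - 1),
            ((Finset.univ.filter fun z => c z = b).card : ℤ) *
            ((dpath k (c x) b : ℤ) - (dcyc (2 * k - 1) (c x) b : ℤ)) :=
          Finset.sum_congr rfl fun x _ =>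
            sum_fiber c (2 * k - 1) hc
              (fun b => (dpath k (c x) b : ℤ) - (dcyc (2 * k - 1) (c x) b : ℤ))
      _ = ∑ a ∈ Finset.range (2 * k - 1),
            ((Finset.univ.filter fun z => c z = a).card : ℤ) *
            ∑ b ∈ Finset.range (2 * k - 1),
              ((Finset.univ.filter fun z => c z = b).card : ℤ) *
              ((dpath k a b : ℤ) - (dcyc (2 * k - 1) a b : ℤ)) :=
          sum_fiber c (2 * k - 1) hc
            (fun a => ∑ b ∈ Finset.range (2 * k - 1),
              ((Finset.univ.filter fun z => c z = b).card : ℤ) *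
              ((dpath k a b : ℤ) - (dcyc (2 * k - 1) a b : ℤ)))
      _ = _ := by
          refine Finset.sum_congr rfl fun a _ => ?_
          rw [Finset.mul_sum]
          refine Finset.sum_congr rfl fun b _ => ?_
          ring
  have hfinal := final_sum k hk (fun a => ((Finset.univ.filter fun x => c x = a).card : ℤ))
  have h2 : 2 * ((wienerIndex (G.deleteEdges {s(v (k - 1), v k)}) : ℤ) -
      (wienerIndex G : ℤ)) =
      2 * ∑ i ∈ Finset.Icc 2 k, ∑ j ∈ Finset.Icc (k + 1 - i) (k - 1),
        (2 * ((i : ℤ) + (j : ℤ) - (k : ℤ)) - 1) *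
          ((Finset.univ.filter fun x => c x = i - 1).card : ℤ) *
          ((Finset.univ.filter fun x => c x = 2 * k - 1 - j).card : ℤ) := by
    rw [hWsum]
    rw [Finset.sum_congr rfl fun x _ => Finset.sum_congr rfl fun y _ => hdiff x y]
    rw [hfib]
    exact hfinal
  exact mul_left_cancel₀ (by norm_num : (2 : ℤ) ≠ 0) h2
end

section
/- For a unicyclic graph G with cycle C, the centroid M(G) (the subgraph induced by vertices u minimizing D_G(u)) is either a single vertex (K_1), or an edge (K_2), or a subgraph of the cycle C. -/
open SimpleGraph Finset

lemma no_avoid_path {V : Type*} [DecidableEq V] {G : SimpleGraph V} {u v₁ v₂ : V}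
    (hu : ∀ p : G.Walk u u, ¬ p.IsCycle) (h1 : G.Adj u v₁) (h2 : G.Adj u v₂)
    (hne : v₁ ≠ v₂) (p : G.Walk v₁ v₂) (hp : u ∉ p.support) : False := by
  classical
  have hq : p.bypass.IsPath := p.bypass_isPath
  have hqu : u ∉ p.bypass.support := fun h => hp (p.support_bypass_subset h)
  have hpath : (p.bypass.concat h2.symm).IsPath := by
    rw [Walk.isPath_def, Walk.support_concat, List.nodup_append]
    refine ⟨hq.support_nodup, List.nodup_singleton u, ?_⟩
    intro a ha b hb
    rw [List.mem_singleton] at hb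
    subst hb; exact fun h => hqu (h ▸ ha)
  have hedge : s(u, v₁) ∉ (p.bypass.concat h2.symm).edges := by
    rw [Walk.edges_concat]
    intro h
    rw [List.concat_eq_append, List.mem_append] at h
    rcases h with h | h
    · exact hqu (Walk.fst_mem_support_of_mem_edges _ h)
    · rw [List.mem_singleton, Sym2.eq_iff] at h
      rcases h with ⟨h', -⟩ | ⟨-, h'⟩
      · subst h'; exact G.loopless.irrefl _ h2
      · exact hne h'
  exact hu _ (SimpleGraph.Path.cons_isCycle ⟨_, hpath⟩ h1 hedge)

lemma dist_split {V : Type*} {G : SimpleGraph V} (hconn : G.Connected) {a b u : V}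
    (hall : ∀ p : G.Walk a b, u ∈ p.support) :
    G.dist a b = G.dist a u + G.dist u b := by
  classical
  refine le_antisymm (hconn.dist_triangle) ?_
  obtain ⟨p, hp⟩ := hconn.exists_walk_length_eq_dist a b
  have hmem := hall p
  calc G.dist a u + G.dist u b
      ≤ (p.takeUntil u hmem).length + (p.dropUntil u hmem).length :=
        add_le_add (SimpleGraph.dist_le _) (SimpleGraph.dist_le _)
    _ = p.length := by rw [← Walk.length_append, Walk.take_spec]
    _ = G.dist a b := hp

lemma centroid_core {V : Type*} [Fintype V] [DecidableEq V] (G : SimpleGraph V)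
    (hconn : G.Connected) {u w : V}
    (hu : ∀ p : G.Walk u u, ¬ p.IsCycle)
    (hmin : ∀ z : V, ∑ x : V, G.dist u x ≤ ∑ x : V, G.dist z x)
    (hwmin : ∀ z : V, ∑ x : V, G.dist w x ≤ ∑ x : V, G.dist z x)
    (hwu : w ≠ u) :
    G.Adj u w ∧ ∃ B : Finset V, u ∉ B ∧ 2 * B.card = Fintype.card V ∧
      ∀ x ∈ B, ∃ p : G.Walk w x, u ∉ p.support := by
  classical
  set A : Finset V := univ.filter (fun x => ∃ p : G.Walk w x, u ∉ p.support) with hAdef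
  have hmemA : ∀ x, x ∈ A ↔ ∃ p : G.Walk w x, u ∉ p.support := by
    intro x; simp [hAdef]
  have hwA : w ∈ A := (hmemA w).2 ⟨Walk.nil, by simpa using Ne.symm hwu⟩
  have huA : u ∉ A := by
    rw [hmemA]; rintro ⟨p, hp⟩; exact hp p.end_mem_support
  have htrans : ∀ {x y : V}, x ∈ A → (∃ q : G.Walk x y, u ∉ q.support) → y ∈ A := by
    rintro x y hx ⟨q, hq⟩
    obtain ⟨p, hp⟩ := (hmemA x).1 hx
    refine (hmemA y).2 ⟨p.append q, ?_⟩
    rw [Walk.mem_support_append_iff]; push_neg; exact ⟨hp, hq⟩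
  have hDsep : ∀ {a : V} (x : V), a ∈ A → x ∉ A → G.dist a x = G.dist a u + G.dist u x := by
    intro a x ha hx
    refine dist_split hconn ?_
    intro p
    by_contra hps
    exact hx (htrans ha ⟨p, hps⟩)
  have hnb : ∀ x ∈ A, ∃ v' : V, G.Adj u v' ∧ v' ∈ A ∧ G.dist u x = 1 + G.dist v' x := by
    intro x hx
    have hxu : u ≠ x := fun h => huA (h.symm ▸ hx)
    obtain ⟨p, hpath, hlen⟩ := (hconn u x).exists_path_of_dist
    obtain ⟨v', hadj, q, rfl⟩ := Walk.exists_eq_cons_of_ne hxu p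
    rw [Walk.cons_isPath_iff] at hpath
    have hv'A : v' ∈ A :=
      htrans hx ⟨q.reverse, by rw [Walk.support_reverse, List.mem_reverse]; exact hpath.2⟩
    refine ⟨v', hadj, hv'A, le_antisymm ?_ ?_⟩
    · calc G.dist u x ≤ G.dist u v' + G.dist v' x := hconn.dist_triangle
        _ = 1 + G.dist v' x := by rw [dist_eq_one_iff_adj.2 hadj]
    · have h1 : G.dist v' x ≤ q.length := SimpleGraph.dist_le q
      have h2 : (Walk.cons hadj q).length = q.length + 1 := Walk.length_cons _ _
      omega
  have huniq : ∀ v₁ v₂ : V, G.Adj u v₁ → G.Adj u v₂ → v₁ ∈ A → v₂ ∈ A → v₁ = v₂ := by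
    intro v₁ v₂ h1 h2 hA1 hA2
    by_contra hne
    obtain ⟨p1, hp1⟩ := (hmemA v₁).1 hA1
    obtain ⟨p2, hp2⟩ := (hmemA v₂).1 hA2
    refine no_avoid_path hu h1 h2 hne (p1.reverse.append p2) ?_
    rw [Walk.mem_support_append_iff]; push_neg
    exact ⟨by rw [Walk.support_reverse, List.mem_reverse]; exact hp1, hp2⟩
  obtain ⟨v, hadjv, hvA, hdw⟩ := hnb w hwA
  have hA1 : ∀ x ∈ A, G.dist u x = 1 + G.dist v x := by
    intro x hx
    obtain ⟨v', h', hv'A, hd⟩ := hnb x hx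
    rwa [huniq v' v h' hadjv hv'A hvA] at hd
  -- notation
  set n := Fintype.card V with hn
  set k := A.card with hk
  have hkk : A.card + Aᶜ.card = n := by
    rw [hn]; exact Finset.card_add_card_compl A
  have hsplit : ∀ f : V → ℤ, ∑ x : V, f x = ∑ x ∈ A, f x + ∑ x ∈ Aᶜ, f x :=
    fun f => (Finset.sum_add_sum_compl A f).symm
  have hduv : G.dist u v = 1 := dist_eq_one_iff_adj.2 hadjv
  -- Step 1 : 2k ≤ n
  have hcalc : (∑ x : V, (G.dist v x : ℤ))
        = (∑ x : V, (G.dist u x : ℤ)) - A.card + Aᶜ.card := by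
    rw [hsplit (fun x => (G.dist v x : ℤ)), hsplit (fun x => (G.dist u x : ℤ))]
    have e1 : ∑ x ∈ A, (G.dist v x : ℤ) = ∑ x ∈ A, ((G.dist u x : ℤ) - 1) := by
      refine Finset.sum_congr rfl fun x hx => ?_
      have := hA1 x hx; omega
    have e2 : ∑ x ∈ Aᶜ, (G.dist v x : ℤ) = ∑ x ∈ Aᶜ, ((G.dist u x : ℤ) + 1) := by
      refine Finset.sum_congr rfl fun x hx => ?_
      rw [Finset.mem_compl] at hx
      have h1 := hDsep x hvA hx
      have h2 : G.dist v u = G.dist u v := SimpleGraph.dist_comm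
      omega
    rw [e1, e2, Finset.sum_sub_distrib, Finset.sum_add_distrib]
    simp [Finset.sum_const, nsmul_eq_mul]
    ring
  have hstep1 : 2 * k ≤ n := by
    have hle : (∑ x : V, (G.dist u x : ℤ)) ≤ ∑ x : V, (G.dist v x : ℤ) := by
      exact_mod_cast Nat.cast_le.mpr (hmin v)
    rw [hcalc] at hle
    omega
  have heq : (∑ x : V, (G.dist w x : ℤ)) = ∑ x : V, (G.dist u x : ℤ) := by
    have hnat : (∑ x : V, G.dist w x) = ∑ x : V, G.dist u x := le_antisymm (hwmin u) (hmin w)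
    exact_mod_cast hnat
  -- Step 2 : w = v
  have hwv : w = v := by
    by_contra hne
    have hbound : ∀ x ∈ A, -((G.dist u w : ℤ)) ≤ (G.dist w x : ℤ) - (G.dist u x : ℤ) := by
      intro x hx
      have h1 := hA1 x hx
      have h3 : G.dist v x ≤ G.dist v w + G.dist w x := hconn.dist_triangle
      omega
    have hstrict : -((G.dist u w : ℤ)) < (G.dist w v : ℤ) - (G.dist u v : ℤ) := by
      have h4 : G.dist v w = G.dist w v := SimpleGraph.dist_comm
      have h5 : 0 < G.dist w v := (hconn w v).pos_dist_of_ne hne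
      omega
    have h0 : ∑ _x ∈ A, (-(G.dist u w : ℤ)) = -((k : ℤ) * (G.dist u w : ℤ)) := by
      rw [Finset.sum_const, nsmul_eq_mul, ← hk]; ring
    have hsumA : -((k : ℤ) * (G.dist u w : ℤ)) < ∑ x ∈ A, ((G.dist w x : ℤ) - (G.dist u x : ℤ)) := by
      have h1 := Finset.sum_lt_sum (f := fun _x => -((G.dist u w : ℤ)))
        (g := fun x => (G.dist w x : ℤ) - (G.dist u x : ℤ))
        (fun i hi => hbound i hi) ⟨v, hvA, hstrict⟩
      rw [h0] at h1
      exact h1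
    have hsumC : ∑ x ∈ Aᶜ, ((G.dist w x : ℤ) - (G.dist u x : ℤ))
        = (Aᶜ.card : ℤ) * (G.dist u w : ℤ) := by
      have e : ∀ x ∈ Aᶜ, (G.dist w x : ℤ) - (G.dist u x : ℤ) = ((G.dist u w : ℤ)) := by
        intro x hx
        rw [Finset.mem_compl] at hx
        have h1 := hDsep x hwA hx
        have h2 : G.dist w u = G.dist u w := SimpleGraph.dist_comm
        omega
      rw [Finset.sum_congr rfl e, Finset.sum_const, nsmul_eq_mul]
    have htotal : (0 : ℤ) = ∑ x ∈ A, ((G.dist w x : ℤ) - (G.dist u x : ℤ))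
        + ∑ x ∈ Aᶜ, ((G.dist w x : ℤ) - (G.dist u x : ℤ)) := by
      rw [← hsplit (fun x => (G.dist w x : ℤ) - (G.dist u x : ℤ)),
        Finset.sum_sub_distrib, heq]
      ring
    rw [hsumC] at htotal
    have hc : (0:ℤ) ≤ (Aᶜ.card : ℤ) - (k : ℤ) := by omega
    have hd : (0:ℤ) ≤ (G.dist u w : ℤ) := by positivity
    nlinarith [mul_nonneg hc hd]
  subst hwv
  refine ⟨hadjv, A, huA, ?_, fun x hx => (hmemA x).1 hx⟩
  have h1 : (0:ℤ) = -(A.card : ℤ) + (Aᶜ.card : ℤ) := by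
    rw [heq] at hcalc
    linarith
  omega

/-- For a unicyclic graph `G` (connected with as many edges as vertices), the centroid —
the set of vertices `u` minimizing `D_G(u) = ∑_v d_G(u,v)` — is a single vertex (`K_1`),
or the two endpoints of an edge (`K_2`), or is contained in the unique cycle of `G`
(every centroid vertex lies on a cycle). -/
theorem centroid_unicyclic {V : Type*} [Fintype V] [DecidableEq V]
    (G : SimpleGraph V) [DecidableRel G.Adj]
    (hconn : G.Connected) (hedges : G.edgeFinset.card = Fintype.card V) :
    (Finset.univ.filter fun u : V =>
        ∀ w : V, ∑ x : V, G.dist u x ≤ ∑ x : V, G.dist w x).card = 1 ∨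
    (∃ a b : V, G.Adj a b ∧
      (Finset.univ.filter fun u : V =>
        ∀ w : V, ∑ x : V, G.dist u x ≤ ∑ x : V, G.dist w x) = {a, b}) ∨
    (∀ u ∈ Finset.univ.filter fun u : V =>
        ∀ w : V, ∑ x : V, G.dist u x ≤ ∑ x : V, G.dist w x,
      ∃ p : G.Walk u u, p.IsCycle) := by
  classical
  set S : Finset V := Finset.univ.filter (fun u : V =>
      ∀ w : V, ∑ x : V, G.dist u x ≤ ∑ x : V, G.dist w x) with hSdef
  by_cases hcyc : ∀ u ∈ S, ∃ p : G.Walk u u, p.IsCycle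
  · exact Or.inr (Or.inr hcyc)
  push_neg at hcyc
  obtain ⟨u, huS, hu⟩ := hcyc
  have hmin : ∀ z : V, ∑ x : V, G.dist u x ≤ ∑ x : V, G.dist z x :=
    (Finset.mem_filter.mp huS).2
  by_cases hone : ∀ z ∈ S, z = u
  · left
    rw [Finset.eq_singleton_iff_unique_mem.mpr ⟨huS, hone⟩]
    exact Finset.card_singleton u
  push_neg at hone
  obtain ⟨w, hwS, hwu⟩ := hone
  have hwmin : ∀ z : V, ∑ x : V, G.dist w x ≤ ∑ x : V, G.dist z x :=
    (Finset.mem_filter.mp hwS).2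
  obtain ⟨hadjw, Bw, huBw, hhalfw, havoidw⟩ := centroid_core G hconn hu hmin hwmin hwu
  refine Or.inr (Or.inl ⟨u, w, hadjw, ?_⟩)
  have hn1 : 1 ≤ Fintype.card V := Fintype.card_pos_iff.mpr hconn.nonempty
  ext z
  simp only [Finset.mem_insert, Finset.mem_singleton]
  constructor
  · intro hzS
    by_contra hz
    push_neg at hz
    obtain ⟨hzu, hzw⟩ := hz
    have hzmin : ∀ y : V, ∑ x : V, G.dist z x ≤ ∑ x : V, G.dist y x :=
      (Finset.mem_filter.mp hzS).2
    obtain ⟨hadjz, Bz, huBz, hhalfz, havoidz⟩ := centroid_core G hconn hu hmin hzmin hzu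
    have hdisj : Disjoint Bw Bz := by
      rw [Finset.disjoint_left]
      intro x hxw hxz
      obtain ⟨p1, hp1⟩ := havoidw x hxw
      obtain ⟨p2, hp2⟩ := havoidz x hxz
      refine no_avoid_path hu hadjw hadjz (Ne.symm hzw) (p1.append p2.reverse) ?_
      rw [Walk.mem_support_append_iff]
      push_neg
      exact ⟨hp1, by rw [Walk.support_reverse, List.mem_reverse]; exact hp2⟩
    have hsub : Bw ∪ Bz ⊆ Finset.univ.erase u := by
      intro x hx
      rw [Finset.mem_union] at hx
      rw [Finset.mem_erase]
      refine ⟨?_, Finset.mem_univ x⟩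
      rintro rfl
      rcases hx with hx | hx
      · exact huBw hx
      · exact huBz hx
    have hcard := Finset.card_le_card hsub
    rw [Finset.card_union_of_disjoint hdisj, Finset.card_erase_of_mem (Finset.mem_univ u),
      Finset.card_univ] at hcard
    omega
  · rintro (rfl | rfl)
    · exact huS
    · exact hwS
end

section
/- Let G be a unicyclic graph with the cycle ordered as in the optimality condition (|V(U_1)| \ge |V(W_1)| \ge |V(U_2)| \ge ...). Among all trees obtained from G by deleting a single cycle edge, the tree T_1 obtained by deleting the edge joining the two cycle vertices farthest from u_1 (namely u_k w_{k-1} in the odd case, u_k w_k in the even case) has the minimum Wiener index: for any other cycle edge e_2, W(T_1) \le W(G - e_2). -/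
open SimpleGraph Finset

namespace WAux

/-- distance on ℕ -/
def nd (x y : ℕ) : ℕ := x - y + (y - x)

lemma nd_self (x : ℕ) : nd x x = 0 := by simp [nd]

lemma mod2g {g x : ℕ} (h : x < 2 * g) : x % g = if x < g then x else x - g := by
  split_ifs with h1
  · exact Nat.mod_eq_of_lt h1
  · rw [Nat.mod_eq_sub_mod (Nat.le_of_not_lt h1), Nat.mod_eq_of_lt (by omega)]

/-! ### Distance characterization -/

lemma dist_eq_of {V : Type*} (H : SimpleGraph V) (D : V → V → ℕ)
    (h0 : ∀ x, D x x = 0)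
    (hlip : ∀ ⦃a b⦄, H.Adj a b → ∀ y, D a y ≤ D b y + 1)
    (hstep : ∀ x y, x ≠ y → ∃ z, H.Adj x z ∧ D z y < D x y)
    (x y : V) : H.dist x y = D x y := by
  have key : ∀ m (x y : V), D x y ≤ m → H.Reachable x y ∧ H.dist x y ≤ D x y := by
    intro m
    induction m with
    | zero =>
      intro x y h
      rcases eq_or_ne x y with rfl | hne
      · exact ⟨Reachable.refl x, by simp [SimpleGraph.dist_self]⟩
      · obtain ⟨z, _, hlt⟩ := hstep x y hne
        omega
    | succ m ih =>
      intro x y h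
      rcases eq_or_ne x y with rfl | hne
      · exact ⟨Reachable.refl x, by simp [SimpleGraph.dist_self]⟩
      · obtain ⟨z, hadj, hlt⟩ := hstep x y hne
        obtain ⟨hr, hd⟩ := ih z y (by omega)
        refine ⟨hadj.reachable.trans hr, ?_⟩
        obtain ⟨w, hw⟩ := hr.exists_walk_length_eq_dist
        have h2 := SimpleGraph.dist_le (Walk.cons hadj w)
        simp only [Walk.length_cons, hw] at h2
        omega
  have le2 : ∀ (x y : V) (w : H.Walk x y), D x y ≤ w.length := by
    intro x y w
    induction w with
    | nil => simp [h0]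
    | @cons a b y hadj w ih =>
      have := hlip hadj y
      simp only [Walk.length_cons]
      omega
  obtain ⟨hr, hd⟩ := key (D x y) x y le_rfl
  obtain ⟨w, hw⟩ := hr.exists_walk_length_eq_dist
  have := le2 x y w
  omega

/-! ### Combinatorial part -/

section Comb

variable (γ : ℕ) (n : ℕ → ℕ)

/-- position of class `i` along the path obtained by cutting the cycle edge `(p, p+1)` -/
def cpos (p i : ℕ) : ℕ := (i + γ - (p + 1)) % γ

lemma cpos_lt (hγ : 0 < γ) (p i : ℕ) : cpos γ p i < γ := Nat.mod_lt _ hγ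

/-- weighted Wiener-type sum of the cut path -/
def S (p : ℕ) : ℤ :=
  ∑ i ∈ Finset.range γ, ∑ j ∈ Finset.range γ,
    (n i : ℤ) * (n j : ℤ) * (nd (cpos γ p i) (cpos γ p j) : ℤ)

def Phi (a : ℕ) : ℤ :=
  ∑ s ∈ Finset.Ico 1 γ, (n ((a + s) % γ) : ℤ) * (2 * (s : ℤ) - γ)

lemma cpos_spec (a : ℕ) (ha1 : 1 ≤ a) (ha2 : a < γ) (i : ℕ) (hi : i < γ) :
    (i = a → cpos γ (a - 1) i = 0 ∧ cpos γ a i = γ - 1) ∧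
      (i ≠ a → cpos γ (a - 1) i = cpos γ a i + 1) := by
  unfold cpos
  have e1 : a - 1 + 1 = a := by omega
  rw [e1]
  rw [mod2g (by omega), mod2g (by omega)]
  split_ifs <;> constructor <;> intro h <;> first | (constructor <;> omega) | omega

lemma Phi_reindex (a : ℕ) (ha1 : 1 ≤ a) (ha2 : a < γ) :
    ∑ j ∈ Finset.range γ, (n j : ℤ) * (2 * (cpos γ (a - 1) j : ℤ) - γ) =
      ∑ s ∈ Finset.range γ, (n ((a + s) % γ) : ℤ) * (2 * (s : ℤ) - γ) := by
  refine Finset.sum_nbij' (fun j => cpos γ (a - 1) j) (fun s => (a + s) % γ) ?_ ?_ ?_ ?_ ?_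
  · intro j hj
    simp only [Finset.mem_range] at *
    exact cpos_lt γ (by omega) _ _
  · intro s hs
    simp only [Finset.mem_range] at *
    exact Nat.mod_lt _ (by omega)
  · intro j hj
    simp only [Finset.mem_range] at hj
    beta_reduce
    unfold cpos
    have e1 : a - 1 + 1 = a := by omega
    rw [e1, mod2g (x := j + γ - a) (by omega)]
    split_ifs with h1
    · rw [mod2g (x := a + (j + γ - a)) (by omega)]; split_ifs <;> omega
    · rw [mod2g (x := a + (j + γ - a - γ)) (by omega)]; split_ifs <;> omega
  · intro s hs
    simp only [Finset.mem_range] at hs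
    beta_reduce
    unfold cpos
    have e1 : a - 1 + 1 = a := by omega
    rw [e1, mod2g (x := a + s) (by omega)]
    split_ifs with h1
    · rw [mod2g (x := a + s + γ - a) (by omega)]; split_ifs <;> omega
    · rw [mod2g (x := a + s - γ + γ - a) (by omega)]; split_ifs <;> omega
  · intro j hj
    simp only [Finset.mem_range] at hj
    beta_reduce
    have hkey : (a + cpos γ (a - 1) j) % γ = j := by
      unfold cpos
      have e1 : a - 1 + 1 = a := by omega
      rw [e1, mod2g (x := j + γ - a) (by omega)]
      split_ifs with h1
      · rw [mod2g (x := a + (j + γ - a)) (by omega)]; split_ifs <;> omega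
      · rw [mod2g (x := a + (j + γ - a - γ)) (by omega)]; split_ifs <;> omega
    rw [hkey]

lemma S_step (a : ℕ) (ha1 : 1 ≤ a) (ha2 : a < γ) :
    S γ n (a - 1) - S γ n a = 2 * (n a : ℤ) * Phi γ n a := by
  have key : ∀ i ∈ Finset.range γ, ∀ j ∈ Finset.range γ,
      (n i : ℤ) * (n j : ℤ) * (nd (cpos γ (a - 1) i) (cpos γ (a - 1) j) : ℤ) -
        (n i : ℤ) * (n j : ℤ) * (nd (cpos γ a i) (cpos γ a j) : ℤ) =
      (if i = a then (n i : ℤ) * (n j : ℤ) * (2 * (cpos γ (a - 1) j : ℤ) - γ) else 0) +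
      (if j = a then (n i : ℤ) * (n j : ℤ) * (2 * (cpos γ (a - 1) i : ℤ) - γ) else 0) +
      (if i = a ∧ j = a then (n i : ℤ) * (n j : ℤ) * (2 * γ) else 0) := by
    intro i hi j hj
    simp only [Finset.mem_range] at hi hj
    have hsi := cpos_spec γ a ha1 ha2 i hi
    have hsj := cpos_spec γ a ha1 ha2 j hj
    have hlti := cpos_lt γ (by omega) (a - 1) i
    have hltj := cpos_lt γ (by omega) (a - 1) j
    rcases eq_or_ne i a with hia | hia <;> rcases eq_or_ne j a with hja | hja
    · rw [if_pos hia, if_pos hja, if_pos ⟨hia, hja⟩]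
      obtain ⟨h1, h2⟩ := hsi.1 hia
      obtain ⟨h3, h4⟩ := hsj.1 hja
      rw [h1, h2, h3, h4]
      have e0 : nd 0 0 = 0 := by simp [nd]
      have e0' : nd (γ - 1) (γ - 1) = 0 := by simp [nd]
      rw [e0, e0']
      push_cast
      ring
    · rw [if_pos hia, if_neg hja, if_neg (fun h => hja h.2)]
      obtain ⟨h1, h2⟩ := hsi.1 hia
      have h3 := hsj.2 hja
      rw [h1, h2, h3]
      have hl : cpos γ a j + 1 < γ := by omega
      have hA : ((nd 0 (cpos γ a j + 1) : ℕ) : ℤ) - ((nd (γ - 1) (cpos γ a j) : ℕ) : ℤ) =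
          2 * ((cpos γ a j : ℤ) + 1) - γ := by unfold nd; omega
      have := hA
      push_cast at this ⊢
      linear_combination ((n i : ℤ) * (n j : ℤ)) * this
    · rw [if_neg hia, if_pos hja, if_neg (fun h => hia h.1)]
      obtain ⟨h1, h2⟩ := hsj.1 hja
      have h3 := hsi.2 hia
      rw [h1, h2, h3]
      have hl : cpos γ a i + 1 < γ := by omega
      have hA : ((nd (cpos γ a i + 1) 0 : ℕ) : ℤ) - ((nd (cpos γ a i) (γ - 1) : ℕ) : ℤ) =
          2 * ((cpos γ a i : ℤ) + 1) - γ := by unfold nd; omega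
      have := hA
      push_cast at this ⊢
      linear_combination ((n i : ℤ) * (n j : ℤ)) * this
    · rw [if_neg hia, if_neg hja, if_neg (fun h => hia h.1)]
      rw [hsi.2 hia, hsj.2 hja]
      have : nd (cpos γ a i + 1) (cpos γ a j + 1) = nd (cpos γ a i) (cpos γ a j) := by
        unfold nd; omega
      rw [this]
      ring
  have expand : S γ n (a - 1) - S γ n a =
      ∑ i ∈ Finset.range γ, ∑ j ∈ Finset.range γ,
        ((if i = a then (n i : ℤ) * (n j : ℤ) * (2 * (cpos γ (a - 1) j : ℤ) - γ) else 0) +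
        (if j = a then (n i : ℤ) * (n j : ℤ) * (2 * (cpos γ (a - 1) i : ℤ) - γ) else 0) +
        (if i = a ∧ j = a then (n i : ℤ) * (n j : ℤ) * (2 * γ) else 0)) := by
    unfold S
    rw [← Finset.sum_sub_distrib]
    refine Finset.sum_congr rfl fun i hi => ?_
    rw [← Finset.sum_sub_distrib]
    exact Finset.sum_congr rfl fun j hj => key i hi j hj
  rw [expand]
  have ha' : a ∈ Finset.range γ := Finset.mem_range.mpr ha2
  have e1 : ∀ g : ℕ → ℕ → ℤ,
      (∑ i ∈ Finset.range γ, ∑ j ∈ Finset.range γ, if i = a then g i j else 0) =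
        ∑ j ∈ Finset.range γ, g a j := by
    intro g
    have : ∀ i ∈ Finset.range γ,
        (∑ j ∈ Finset.range γ, if i = a then g i j else 0) =
          if i = a then ∑ j ∈ Finset.range γ, g i j else 0 := by
      intro i _; split_ifs <;> simp
    rw [Finset.sum_congr rfl this, Finset.sum_ite_eq' (Finset.range γ) a, if_pos ha']
  have e2 : ∀ g : ℕ → ℕ → ℤ,
      (∑ i ∈ Finset.range γ, ∑ j ∈ Finset.range γ, if j = a then g i j else 0) =
        ∑ i ∈ Finset.range γ, g i a := by
    intro g
    refine Finset.sum_congr rfl fun i _ => ?_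
    rw [Finset.sum_ite_eq' (Finset.range γ) a, if_pos ha']
  have e3 : ∀ g : ℕ → ℕ → ℤ,
      (∑ i ∈ Finset.range γ, ∑ j ∈ Finset.range γ, if i = a ∧ j = a then g i j else 0) =
        g a a := by
    intro g
    have : ∀ i ∈ Finset.range γ,
        (∑ j ∈ Finset.range γ, if i = a ∧ j = a then g i j else 0) =
          if i = a then g i a else 0 := by
      intro i _
      simp only [ite_and]
      split_ifs with h
      · rw [Finset.sum_ite_eq' (Finset.range γ) a, if_pos ha']
      · simp
    rw [Finset.sum_congr rfl this, Finset.sum_ite_eq' (Finset.range γ) a, if_pos ha']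
  simp only [Finset.sum_add_distrib]
  rw [e1, e2, e3]
  set P := ∑ j ∈ Finset.range γ, (n j : ℤ) * (2 * (cpos γ (a - 1) j : ℤ) - γ) with hP
  have hP1 : (∑ j ∈ Finset.range γ, (n a : ℤ) * (n j : ℤ) * (2 * (cpos γ (a - 1) j : ℤ) - γ)) =
      (n a : ℤ) * P := by
    rw [hP, Finset.mul_sum]
    exact Finset.sum_congr rfl fun j _ => by ring
  have hP2 : (∑ i ∈ Finset.range γ, (n i : ℤ) * (n a : ℤ) * (2 * (cpos γ (a - 1) i : ℤ) - γ)) =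
      (n a : ℤ) * P := by
    rw [hP, Finset.mul_sum]
    exact Finset.sum_congr rfl fun j _ => by ring
  rw [hP1, hP2]
  have hPPhi : P = Phi γ n a - γ * (n a : ℤ) := by
    rw [hP, Phi_reindex γ n a ha1 ha2]
    rw [Finset.range_eq_Ico, Finset.sum_eq_sum_Ico_succ_bot (by omega : 0 < γ)]
    have ez : (a + 0) % γ = a := by rw [Nat.add_zero, Nat.mod_eq_of_lt ha2]
    rw [ez]
    unfold Phi
    push_cast
    ring
  rw [hPPhi]
  ring

lemma rank_claim1 (a s : ℕ) (ha1 : 1 ≤ a) (ha2 : 2 * a < γ) (hs1 : 1 ≤ s) (hs2 : 2 * s < γ) :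
    min (2 * ((a + γ - s) % γ)) (2 * γ - 2 * ((a + γ - s) % γ) - 1) ≤
      min (2 * ((a + s) % γ)) (2 * γ - 2 * ((a + s) % γ) - 1) := by
  rw [mod2g (by omega), mod2g (by omega)]
  split_ifs <;> omega

lemma rank_claim2 (a s : ℕ) (ha1 : γ ≤ 2 * a) (ha2 : a < γ) (hs1 : 1 ≤ s) (hs2 : 2 * s < γ) :
    min (2 * ((a + s) % γ)) (2 * γ - 2 * ((a + s) % γ) - 1) ≤
      min (2 * ((a + γ - s) % γ)) (2 * γ - 2 * ((a + γ - s) % γ) - 1) := by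
  rw [mod2g (by omega), mod2g (by omega)]
  split_ifs <;> omega

lemma Phi_pairing (a : ℕ) :
    2 * Phi γ n a = ∑ s ∈ Finset.Ico 1 γ,
      ((n ((a + s) % γ) : ℤ) * (2 * (s : ℤ) - γ) +
        (n ((a + (γ - s)) % γ) : ℤ) * (2 * ((γ - s : ℕ) : ℤ) - γ)) := by
  rw [Finset.sum_add_distrib]
  have hrefl : (∑ s ∈ Finset.Ico 1 γ, (n ((a + (γ - s)) % γ) : ℤ) * (2 * ((γ - s : ℕ) : ℤ) - γ)) =
      ∑ s ∈ Finset.Ico 1 γ, (n ((a + s) % γ) : ℤ) * (2 * (s : ℤ) - γ) := by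
    refine Finset.sum_nbij' (fun s => γ - s) (fun s => γ - s) ?_ ?_ ?_ ?_ ?_ <;>
      intro s hs <;> simp only [Finset.mem_Ico] at hs ⊢
    · omega
    · omega
    · omega
    · omega
  rw [hrefl]
  unfold Phi
  ring

lemma Phi_nonneg (hγ : 3 ≤ γ)
    (hmono : ∀ x y, x < γ → y < γ →
      min (2 * x) (2 * γ - 2 * x - 1) ≤ min (2 * y) (2 * γ - 2 * y - 1) → n y ≤ n x)
    (a : ℕ) (ha1 : 1 ≤ a) (ha2 : 2 * a < γ) : 0 ≤ Phi γ n a := by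
  have h2 : 0 ≤ 2 * Phi γ n a := by
    rw [Phi_pairing]
    apply Finset.sum_nonneg
    intro s hs
    simp only [Finset.mem_Ico] at hs
    have heq : a + (γ - s) = a + γ - s := by omega
    have hterm : (n ((a + s) % γ) : ℤ) * (2 * (s : ℤ) - γ) +
        (n ((a + (γ - s)) % γ) : ℤ) * (2 * ((γ - s : ℕ) : ℤ) - γ) =
        (2 * (s : ℤ) - γ) * ((n ((a + s) % γ) : ℤ) - (n ((a + γ - s) % γ) : ℤ)) := by
      have hc : ((γ - s : ℕ) : ℤ) = (γ : ℤ) - s := by omega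
      rw [heq, hc]; ring
    rw [hterm]
    rcases lt_trichotomy (2 * s) γ with h | h | h
    · have hle : n ((a + s) % γ) ≤ n ((a + γ - s) % γ) :=
        hmono _ _ (Nat.mod_lt _ (by omega)) (Nat.mod_lt _ (by omega))
          (rank_claim1 γ a s ha1 ha2 hs.1 h)
      have c1 : 2 * (s : ℤ) - γ ≤ 0 := by omega
      have c2 : (n ((a + s) % γ) : ℤ) - (n ((a + γ - s) % γ) : ℤ) ≤ 0 := by
        exact_mod_cast sub_nonpos.mpr (Int.ofNat_le.mpr hle)
      nlinarith [c1, c2]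
    · have : 2 * (s : ℤ) - γ = 0 := by omega
      rw [this]; simp
    · have hkey := rank_claim1 γ a (γ - s) ha1 ha2 (by omega) (by omega)
      have e1 : a + γ - (γ - s) = a + s := by omega
      rw [e1] at hkey
      have hle : n ((a + (γ - s)) % γ) ≤ n ((a + s) % γ) :=
        hmono _ _ (Nat.mod_lt _ (by omega)) (Nat.mod_lt _ (by omega)) hkey
      rw [heq] at hle
      have c1 : 0 ≤ 2 * (s : ℤ) - γ := by omega
      have c2 : 0 ≤ (n ((a + s) % γ) : ℤ) - (n ((a + γ - s) % γ) : ℤ) := by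
        exact sub_nonneg.mpr (Int.ofNat_le.mpr hle)
      exact mul_nonneg c1 c2
  omega

lemma Phi_nonpos (hγ : 3 ≤ γ)
    (hmono : ∀ x y, x < γ → y < γ →
      min (2 * x) (2 * γ - 2 * x - 1) ≤ min (2 * y) (2 * γ - 2 * y - 1) → n y ≤ n x)
    (a : ℕ) (ha1 : γ ≤ 2 * a) (ha2 : a < γ) : Phi γ n a ≤ 0 := by
  have h2 : 2 * Phi γ n a ≤ 0 := by
    rw [Phi_pairing]
    apply Finset.sum_nonpos
    intro s hs
    simp only [Finset.mem_Ico] at hs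
    have heq : a + (γ - s) = a + γ - s := by omega
    have hterm : (n ((a + s) % γ) : ℤ) * (2 * (s : ℤ) - γ) +
        (n ((a + (γ - s)) % γ) : ℤ) * (2 * ((γ - s : ℕ) : ℤ) - γ) =
        (2 * (s : ℤ) - γ) * ((n ((a + s) % γ) : ℤ) - (n ((a + γ - s) % γ) : ℤ)) := by
      have hc : ((γ - s : ℕ) : ℤ) = (γ : ℤ) - s := by omega
      rw [heq, hc]; ring
    rw [hterm]
    rcases lt_trichotomy (2 * s) γ with h | h | h
    · have hle : n ((a + γ - s) % γ) ≤ n ((a + s) % γ) :=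
        hmono _ _ (Nat.mod_lt _ (by omega)) (Nat.mod_lt _ (by omega))
          (rank_claim2 γ a s ha1 ha2 hs.1 h)
      have c1 : 2 * (s : ℤ) - γ ≤ 0 := by omega
      have c2 : 0 ≤ (n ((a + s) % γ) : ℤ) - (n ((a + γ - s) % γ) : ℤ) := by
        exact sub_nonneg.mpr (Int.ofNat_le.mpr hle)
      exact mul_nonpos_of_nonpos_of_nonneg c1 c2
    · have : 2 * (s : ℤ) - γ = 0 := by omega
      rw [this]; simp
    · have hkey := rank_claim2 γ a (γ - s) ha1 ha2 (by omega) (by omega)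
      have e1 : a + γ - (γ - s) = a + s := by omega
      rw [e1] at hkey
      have hle : n ((a + s) % γ) ≤ n ((a + (γ - s)) % γ) := by
        have := hmono _ _ (Nat.mod_lt (a + (γ - s)) (by omega)) (Nat.mod_lt _ (by omega)) hkey
        exact this
      rw [heq] at hle
      have c1 : 0 ≤ 2 * (s : ℤ) - γ := by omega
      have c2 : (n ((a + s) % γ) : ℤ) - (n ((a + γ - s) % γ) : ℤ) ≤ 0 := by
        exact sub_nonpos.mpr (Int.ofNat_le.mpr hle)
      exact mul_nonpos_of_nonneg_of_nonpos c1 c2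
  omega

theorem S_min (hγ : 3 ≤ γ)
    (hmono : ∀ x y, x < γ → y < γ →
      min (2 * x) (2 * γ - 2 * x - 1) ≤ min (2 * y) (2 * γ - 2 * y - 1) → n y ≤ n x)
    (p : ℕ) (hp : p < γ) : S γ n ((γ + 1) / 2 - 1) ≤ S γ n p := by
  set k := (γ + 1) / 2 with hk
  have hk2 : 2 * k = γ + 1 ∨ 2 * k = γ := by omega
  have stepL : ∀ a, 1 ≤ a → 2 * a < γ → S γ n a ≤ S γ n (a - 1) := by
    intro a h1 h2
    have hs := S_step γ n a h1 (by omega)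
    have hphi := Phi_nonneg γ n hγ hmono a h1 h2
    nlinarith [Int.ofNat_nonneg (n a)]
  have stepR : ∀ a, γ ≤ 2 * a → a < γ → S γ n (a - 1) ≤ S γ n a := by
    intro a h1 h2
    have hs := S_step γ n a (by omega) h2
    have hphi := Phi_nonpos γ n hγ hmono a h1 h2
    nlinarith [Int.ofNat_nonneg (n a)]
  rcases le_or_gt p (k - 1) with hcase | hcase
  · have L : ∀ d p', p' + d = k - 1 → S γ n (k - 1) ≤ S γ n p' := by
      intro d
      induction d with
      | zero => intro p' hp'; simp at hp'; rw [hp']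
      | succ d ih =>
        intro p' hp'
        have h1 := ih (p' + 1) (by omega)
        have h2 := stepL (p' + 1) (by omega) (by omega)
        simp only [Nat.add_sub_cancel] at h2
        omega
    exact L (k - 1 - p) p (by omega)
  · have R : ∀ d p', p' = k - 1 + d → p' < γ → S γ n (k - 1) ≤ S γ n p' := by
      intro d
      induction d with
      | zero =>
        intro p' hp' _
        have hpe : p' = k - 1 := by omega
        rw [hpe]
      | succ d ih =>
        intro p' hp' hplt
        have h1 := ih (p' - 1) (by omega) (by omega)
        have h2 := stepR p' (by omega) hplt
        have e : p' - 1 = p' - 1 := rfl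
        omega
    exact R (p - (k - 1)) p (by omega) hp

end Comb

/-! ### Graph part -/

section Graph

variable {V : Type*} (G : SimpleGraph V) (γ : ℕ) (c : V → ℕ) (v : ℕ → V)

/-- distance within the attached tree containing `x` (junk value if classes differ) -/
noncomputable def dd (x y : V) : ℕ :=
  if h : c y = c x then (G.induce {z | c z = c x}).dist ⟨x, rfl⟩ ⟨y, h⟩ else 0

/-- depth of `x` in its attached tree -/
noncomputable def dep (x : V) : ℕ := dd G c x (v (c x))

/-- candidate distance function for the spanning tree obtained by cutting edge `(p, p+1)` -/
noncomputable def DD (p : ℕ) (x y : V) : ℕ :=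
  if c x = c y then dd G c x y
  else dep G c v x + dep G c v y + nd (cpos γ p (c x)) (cpos γ p (c y))

lemma dd_eq (i : ℕ) (x y : V) (hx : c x = i) (hy : c y = i) :
    dd G c x y = (G.induce {z | c z = i}).dist ⟨x, hx⟩ ⟨y, hy⟩ := by
  subst hx
  rw [dd, dif_pos hy]

lemma dd_self (x : V) : dd G c x x = 0 := by
  rw [dd_eq G c (c x) x x rfl rfl]
  exact SimpleGraph.dist_self

lemma dd_symm {x y : V} (hc : c y = c x) : dd G c x y = dd G c y x := by
  rw [dd_eq G c (c x) x y rfl hc, dd_eq G c (c x) y x hc rfl]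
  exact SimpleGraph.dist_comm

variable (htree : ∀ i, i < γ → (G.induce {x | c x = i}).IsTree)
    (h1 : ∀ x, c x < γ) (h2 : ∀ i, i < γ → c (v i) = i)

include htree h1 in
lemma dd_lip {a b y : V} (hab : G.Adj a b) (hcab : c a = c b) (hy : c y = c a) :
    dd G c a y ≤ dd G c b y + 1 := by
  rw [dd_eq G c (c a) a y rfl hy, dd_eq G c (c a) b y hcab.symm hy]
  have hconn := (htree (c a) (h1 a)).isConnected
  have hadj : (G.induce {z | c z = c a}).Adj ⟨a, rfl⟩ ⟨b, hcab.symm⟩ := by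
    simpa using hab
  have htr := hconn.dist_triangle (u := (⟨a, rfl⟩ : {z | c z = c a}))
    (v := ⟨b, hcab.symm⟩) (w := ⟨y, hy⟩)
  rw [SimpleGraph.dist_eq_one_iff_adj.mpr hadj] at htr
  omega

include htree h1 in
lemma dd_step {x y : V} (hc : c y = c x) (hne : x ≠ y) :
    ∃ z, G.Adj x z ∧ c z = c x ∧ dd G c z y < dd G c x y := by
  have hconn := (htree (c x) (h1 x)).isConnected
  have hXY : (⟨x, rfl⟩ : {z | c z = c x}) ≠ ⟨y, hc⟩ := by
    intro h
    exact hne (congrArg Subtype.val h)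
  obtain ⟨w, hw⟩ := (hconn.preconnected ⟨x, rfl⟩ ⟨y, hc⟩).exists_walk_length_eq_dist
  cases w with
  | nil => exact absurd rfl hXY
  | @cons _ u _ hadj w' =>
    obtain ⟨z, hz⟩ := u
    refine ⟨z, by simpa using hadj, hz, ?_⟩
    rw [dd_eq G c (c x) x y rfl hc, dd_eq G c (c x) z y hz hc]
    have hle := SimpleGraph.dist_le w'
    simp only [Walk.length_cons] at hw
    omega

include h2 in
lemma dep_root {i : ℕ} (hi : i < γ) : dep G c v (v i) = 0 := by
  unfold dep
  rw [h2 i hi]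
  exact dd_self G c (v i)

include h2 in
lemma dd_root_eq_dep {i : ℕ} (hi : i < γ) {y : V} (hy : c y = i) :
    dd G c (v i) y = dep G c v y := by
  unfold dep
  rw [dd_symm G c (show c y = c (v i) by rw [h2 i hi, hy]), hy]

include h2 in
lemma vinj {i j : ℕ} (hi : i < γ) (hj : j < γ) (hv : v i = v j) : i = j := by
  have h := h2 i hi
  rw [hv, h2 j hj] at h
  exact h.symm

end Graph

/-! ### cut-position arithmetic -/

section CutArith

variable {γ p : ℕ}

lemma cpos_pp (hγ : 3 ≤ γ) (hp : p < γ) : cpos γ p p = γ - 1 := by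
  unfold cpos
  rw [mod2g (by omega)]
  split_ifs <;> omega

lemma cpos_pq (hγ : 3 ≤ γ) (hp : p < γ) : cpos γ p ((p + 1) % γ) = 0 := by
  unfold cpos
  rw [mod2g (x := p + 1) (by omega)]
  split_ifs with h
  · rw [mod2g (by omega)]; split_ifs <;> omega
  · rw [mod2g (by omega)]; split_ifs <;> omega

lemma cpos_succ (hγ : 3 ≤ γ) (hp : p < γ) {i : ℕ} (hi : i < γ) (hip : i ≠ p) :
    cpos γ p ((i + 1) % γ) = cpos γ p i + 1 := by
  unfold cpos
  rw [mod2g (x := i + 1) (by omega)]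
  split_ifs with h
  · rw [mod2g (x := i + 1 + γ - (p + 1)) (by omega), mod2g (x := i + γ - (p + 1)) (by omega)]
    split_ifs <;> omega
  · rw [mod2g (x := i + 1 - γ + γ - (p + 1)) (by omega), mod2g (x := i + γ - (p + 1)) (by omega)]
    split_ifs <;> omega

lemma cpos_inj (hγ : 3 ≤ γ) (hp : p < γ) {i j : ℕ} (hi : i < γ) (hj : j < γ)
    (h : cpos γ p i = cpos γ p j) : i = j := by
  unfold cpos at h
  rw [mod2g (by omega), mod2g (by omega)] at h
  split_ifs at h <;> omega

lemma pred_lt (hγ : 3 ≤ γ) {i : ℕ} (hi : i < γ) : (i + (γ - 1)) % γ < γ :=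
  Nat.mod_lt _ (by omega)

lemma pred_succ (hγ : 3 ≤ γ) {i : ℕ} (hi : i < γ) : ((i + (γ - 1)) % γ + 1) % γ = i := by
  rw [mod2g (x := i + (γ - 1)) (by omega)]
  split_ifs with h
  · rw [mod2g (by omega)]; split_ifs <;> omega
  · rw [mod2g (by omega)]; split_ifs <;> omega

lemma no_wrap (hγ : 3 ≤ γ) (hp : p < γ) : ((p + 1) % γ + 1) % γ ≠ p := by
  rw [mod2g (x := p + 1) (by omega)]
  split_ifs with h
  · rw [mod2g (by omega)]; split_ifs <;> omega
  · rw [mod2g (by omega)]; split_ifs <;> omega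

lemma q_ne_p (hγ : 3 ≤ γ) (hp : p < γ) : (p + 1) % γ ≠ p := by
  rw [mod2g (by omega)]
  split_ifs <;> omega

lemma q_lt (hγ : 3 ≤ γ) (hp : p < γ) : (p + 1) % γ < γ := Nat.mod_lt _ (by omega)

lemma succ_ne_self (hγ : 3 ≤ γ) {i : ℕ} (hi : i < γ) : (i + 1) % γ ≠ i := by
  rw [mod2g (by omega)]
  split_ifs <;> omega

end CutArith

/-! ### the master distance computation -/

section Master

variable {V : Type*} {G : SimpleGraph V} {γ : ℕ} {c : V → ℕ} {v : ℕ → V}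

lemma adj_roots (hatt : CycleAttach G γ c v) (hγ : 3 ≤ γ) {i : ℕ} (hi : i < γ) :
    G.Adj (v i) (v ((i + 1) % γ)) := by
  obtain ⟨h1, h2, h3, h4⟩ := hatt
  have hj : (i + 1) % γ < γ := Nat.mod_lt _ (by omega)
  have hne : c (v i) ≠ c (v ((i + 1) % γ)) := by
    rw [h2 i hi, h2 _ hj]
    exact fun h => succ_ne_self hγ hi h.symm
  rw [h4 _ _ hne]
  exact ⟨by rw [h2 i hi], by rw [h2 _ hj], Or.inl (by rw [h2 i hi, h2 _ hj])⟩

lemma dist_eq_DD (hatt : CycleAttach G γ c v) (hγ : 3 ≤ γ) {p : ℕ} (hp : p < γ) (x y : V) :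
    (G.deleteEdges {s(v p, v ((p + 1) % γ))}).dist x y = DD G γ c v p x y := by
  obtain ⟨h1, h2, h3, h4⟩ := hatt
  have hq : (p + 1) % γ < γ := q_lt hγ hp
  have Tadj : ∀ a b : V, (G.deleteEdges {s(v p, v ((p + 1) % γ))}).Adj a b ↔
      G.Adj a b ∧ s(a, b) ≠ s(v p, v ((p + 1) % γ)) := by
    intro a b
    rw [SimpleGraph.deleteEdges_adj, Set.mem_singleton_iff]
  have same_ne : ∀ a b : V, c a = c b → s(a, b) ≠ s(v p, v ((p + 1) % γ)) := by
    intro a b hcab hmem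
    rw [Sym2.eq_iff] at hmem
    rcases hmem with ⟨ha, hb⟩ | ⟨ha, hb⟩
    · rw [ha, hb, h2 p hp, h2 _ hq] at hcab
      exact q_ne_p hγ hp hcab.symm
    · rw [ha, hb, h2 p hp, h2 _ hq] at hcab
      exact q_ne_p hγ hp hcab
  apply dist_eq_of
  · intro x
    unfold DD
    rw [if_pos rfl]
    exact dd_self G c x
  · -- edge-Lipschitz
    intro a b hab y
    rw [Tadj] at hab
    obtain ⟨hG, hnd⟩ := hab
    by_cases hcab : c a = c b
    · by_cases hya : c a = c y
      · unfold DD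
        rw [if_pos hya, if_pos (hcab.symm.trans hya)]
        exact dd_lip G γ c h3 h1 hG hcab hya.symm
      · unfold DD
        rw [if_neg hya, if_neg (fun h => hya (hcab.trans h))]
        have hdep : dep G c v a ≤ dep G c v b + 1 := by
          unfold dep
          rw [← hcab]
          exact dd_lip G γ c h3 h1 hG hcab (h2 (c a) (h1 a))
        rw [← hcab]
        omega
    · obtain ⟨hav, hbv, hcons⟩ := (h4 a b hcab).mp hG
      have hia := h1 a
      have hjb := h1 b
      have hnd1 : nd (cpos γ p (c a)) (cpos γ p (c b)) = 1 := by
        rcases hcons with hcs | hcs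
        · have hip : c a ≠ p := by
            intro hh
            apply hnd
            rw [Sym2.eq_iff]
            left
            exact ⟨by rw [hav, hh], by rw [hbv, ← hcs, hh]⟩
          have hsucc := cpos_succ hγ hp hia hip
          rw [hcs] at hsucc
          unfold nd
          omega
        · have hip : c b ≠ p := by
            intro hh
            apply hnd
            rw [Sym2.eq_iff]
            right
            exact ⟨by rw [hav, ← hcs, hh], by rw [hbv, hh]⟩
          have hsucc := cpos_succ hγ hp hjb hip
          rw [hcs] at hsucc
          unfold nd
          omega
      unfold DD
      by_cases hya : c a = c y
      · rw [if_pos hya, if_neg (fun h => hcab (hya.trans h.symm))]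
        have e1 : dd G c a y = dep G c v y := by
          rw [hav]
          exact dd_root_eq_dep G γ c v h2 hia hya.symm
        have e2 : dep G c v b = 0 := by
          rw [hbv]
          exact dep_root G γ c v h2 hjb
        omega
      · by_cases hyb : c b = c y
        · rw [if_neg hya, if_pos hyb]
          have e1 : dd G c b y = dep G c v y := by
            rw [hbv]
            exact dd_root_eq_dep G γ c v h2 hjb hyb.symm
          have e2 : dep G c v a = 0 := by
            rw [hav]
            exact dep_root G γ c v h2 hia
          have e3 : nd (cpos γ p (c a)) (cpos γ p (c y)) ≤ 1 := by
            rw [← hyb]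
            unfold nd at hnd1 ⊢
            omega
          omega
        · rw [if_neg hya, if_neg hyb]
          have e2 : dep G c v a = 0 := by
            rw [hav]; exact dep_root G γ c v h2 hia
          have e3 : dep G c v b = 0 := by
            rw [hbv]; exact dep_root G γ c v h2 hjb
          have e4 : nd (cpos γ p (c a)) (cpos γ p (c y)) ≤
              nd (cpos γ p (c b)) (cpos γ p (c y)) + 1 := by
            unfold nd at hnd1 ⊢
            omega
          omega
  · -- step towards y
    intro x y hxy
    by_cases hc : c x = c y
    · obtain ⟨z, hadj, hcz, hlt⟩ := dd_step G γ c h3 h1 hc.symm hxy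
      refine ⟨z, (Tadj x z).mpr ⟨hadj, same_ne x z hcz.symm⟩, ?_⟩
      unfold DD
      rw [if_pos (hcz.trans hc), if_pos hc]
      exact hlt
    · have hia := h1 x
      by_cases hroot : x = v (c x)
      · have htu : cpos γ p (c x) ≠ cpos γ p (c y) :=
          fun h => hc (cpos_inj hγ hp hia (h1 y) h)
        rcases Nat.lt_or_ge (cpos γ p (c x)) (cpos γ p (c y)) with hlt | hge
        · -- move forward along the path
          have hip : c x ≠ p := by
            intro hh
            rw [hh, cpos_pp hγ hp] at hlt
            have := cpos_lt γ (by omega) p (c y)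
            omega
          have hj : (c x + 1) % γ < γ := Nat.mod_lt _ (by omega)
          have hcj : cpos γ p ((c x + 1) % γ) = cpos γ p (c x) + 1 := cpos_succ hγ hp hia hip
          have hadj : G.Adj x (v ((c x + 1) % γ)) := by
            have h5 := adj_roots ⟨h1, h2, h3, h4⟩ hγ hia
            rwa [← hroot] at h5
          have hndel : s(x, v ((c x + 1) % γ)) ≠ s(v p, v ((p + 1) % γ)) := by
            intro heq
            rw [Sym2.eq_iff] at heq
            rcases heq with ⟨ha, hb⟩ | ⟨ha, hb⟩
            · exact hip (vinj γ c v h2 hia hp (hroot.symm.trans ha))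
            · have hxq : c x = (p + 1) % γ := vinj γ c v h2 hia hq (hroot.symm.trans ha)
              have hjp : (c x + 1) % γ = p := vinj γ c v h2 hj hp hb
              rw [hxq] at hjp
              exact no_wrap hγ hp hjp
          refine ⟨v ((c x + 1) % γ), (Tadj _ _).mpr ⟨hadj, hndel⟩, ?_⟩
          unfold DD
          rw [if_neg hc]
          have hcvj : c (v ((c x + 1) % γ)) = (c x + 1) % γ := h2 _ hj
          by_cases hjy : (c x + 1) % γ = c y
          · rw [if_pos (by rw [hcvj, hjy])]
            have e1 : dd G c (v ((c x + 1) % γ)) y = dep G c v y :=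
              dd_root_eq_dep G γ c v h2 hj hjy.symm
            have e2 : dep G c v x = 0 := by
              rw [show dep G c v x = dep G c v (v (c x)) from by rw [← hroot]]
              exact dep_root G γ c v h2 hia
            have e3 : 1 ≤ nd (cpos γ p (c x)) (cpos γ p (c y)) := by
              unfold nd; omega
            omega
          · rw [if_neg (by rw [hcvj]; exact hjy)]
            have e2 : dep G c v x = 0 := by
              rw [show dep G c v x = dep G c v (v (c x)) from by rw [← hroot]]
              exact dep_root G γ c v h2 hia
            have e4 : dep G c v (v ((c x + 1) % γ)) = 0 := dep_root G γ c v h2 hj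
            rw [hcvj, hcj]
            have e5 : nd (cpos γ p (c x) + 1) (cpos γ p (c y)) <
                nd (cpos γ p (c x)) (cpos γ p (c y)) := by
              unfold nd; omega
            omega
        · -- move backward along the path
          have hlt' : cpos γ p (c y) < cpos γ p (c x) := by omega
          have hiq : c x ≠ (p + 1) % γ := by
            intro hh
            rw [hh, cpos_pq hγ hp] at hlt'
            omega
          have hj : (c x + (γ - 1)) % γ < γ := pred_lt hγ hia
          have hji : ((c x + (γ - 1)) % γ + 1) % γ = c x := pred_succ hγ hia
          have hjp : (c x + (γ - 1)) % γ ≠ p := by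
            intro hh
            apply hiq
            rw [← hji, hh]
          have hcj : cpos γ p (c x) = cpos γ p ((c x + (γ - 1)) % γ) + 1 := by
            have := cpos_succ hγ hp hj hjp
            rw [hji] at this
            omega
          have hadj : G.Adj x (v ((c x + (γ - 1)) % γ)) := by
            have h5 := adj_roots ⟨h1, h2, h3, h4⟩ hγ hj
            rw [hji] at h5
            rw [← hroot] at h5
            exact h5.symm
          have hndel : s(x, v ((c x + (γ - 1)) % γ)) ≠ s(v p, v ((p + 1) % γ)) := by
            intro heq
            rw [Sym2.eq_iff] at heq
            rcases heq with ⟨ha, hb⟩ | ⟨ha, hb⟩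
            · have hip : c x = p := vinj γ c v h2 hia hp (hroot.symm.trans ha)
              have hjq : (c x + (γ - 1)) % γ = (p + 1) % γ := vinj γ c v h2 hj hq hb
              apply no_wrap hγ hp
              rw [← hjq, hji]
              exact hip
            · exact hiq (vinj γ c v h2 hia hq (hroot.symm.trans ha))
          refine ⟨v ((c x + (γ - 1)) % γ), (Tadj _ _).mpr ⟨hadj, hndel⟩, ?_⟩
          unfold DD
          rw [if_neg hc]
          have hcvj : c (v ((c x + (γ - 1)) % γ)) = (c x + (γ - 1)) % γ := h2 _ hj
          by_cases hjy : (c x + (γ - 1)) % γ = c y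
          · rw [if_pos (by rw [hcvj, hjy])]
            have e1 : dd G c (v ((c x + (γ - 1)) % γ)) y = dep G c v y :=
              dd_root_eq_dep G γ c v h2 hj hjy.symm
            have e2 : dep G c v x = 0 := by
              rw [show dep G c v x = dep G c v (v (c x)) from by rw [← hroot]]
              exact dep_root G γ c v h2 hia
            have e3 : 1 ≤ nd (cpos γ p (c x)) (cpos γ p (c y)) := by
              unfold nd; omega
            omega
          · rw [if_neg (by rw [hcvj]; exact hjy)]
            have e2 : dep G c v x = 0 := by
              rw [show dep G c v x = dep G c v (v (c x)) from by rw [← hroot]]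
              exact dep_root G γ c v h2 hia
            have e4 : dep G c v (v ((c x + (γ - 1)) % γ)) = 0 := dep_root G γ c v h2 hj
            rw [hcvj]
            have e5 : nd (cpos γ p ((c x + (γ - 1)) % γ)) (cpos γ p (c y)) <
                nd (cpos γ p (c x)) (cpos γ p (c y)) := by
              unfold nd; omega
            omega
      · -- descend towards the root of the attached tree
        have hcx : c (v (c x)) = c x := h2 (c x) hia
        obtain ⟨z, hadj, hcz, hlt⟩ := dd_step G γ c h3 h1 hcx hroot
        refine ⟨z, (Tadj x z).mpr ⟨hadj, same_ne x z hcz.symm⟩, ?_⟩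
        unfold DD
        rw [if_neg hc, if_neg (by rw [hcz]; exact hc)]
        have e1 : dep G c v z < dep G c v x := by
          unfold dep
          rw [hcz]
          exact hlt
        rw [hcz]
        omega

end Master

/-! ### summation lemmas -/

section Sums

variable {V : Type*} [Fintype V] [DecidableEq V]

lemma two_wiener (H : SimpleGraph V) :
    2 * wienerIndex H = ∑ x : V, ∑ y : V, H.dist x y := by
  classical
  have hfib : ∑ q ∈ (Finset.univ : Finset (V × V)), H.dist q.1 q.2 =
      ∑ z ∈ (Finset.univ : Finset (Sym2 V)),
        ∑ q ∈ Finset.univ.filter (fun q : V × V => Sym2.mk q.1 q.2 = z), H.dist q.1 q.2 :=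
    (Finset.sum_fiberwise_of_maps_to (fun q _ => Finset.mem_univ _) _).symm
  have hfiber : ∀ z : Sym2 V,
      (∑ q ∈ Finset.univ.filter (fun q : V × V => Sym2.mk q.1 q.2 = z), H.dist q.1 q.2) =
        2 * Sym2.lift ⟨fun u v => H.dist u v, fun u v => SimpleGraph.dist_comm⟩ z := by
    intro z
    induction z using Sym2.ind with
    | _ a b =>
      rcases eq_or_ne a b with rfl | hab
      · have hset : Finset.univ.filter (fun q : V × V => Sym2.mk q.1 q.2 = s(a, a)) = {(a, a)} := by
          ext ⟨x1, x2⟩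
          simp only [Finset.mem_filter, Finset.mem_univ, true_and, Finset.mem_singleton,
            Prod.mk.injEq, Sym2.eq_iff]
          tauto
        rw [hset]
        simp [SimpleGraph.dist_self]
      · have hset : Finset.univ.filter (fun q : V × V => Sym2.mk q.1 q.2 = s(a, b)) =
            {(a, b), (b, a)} := by
          ext ⟨x1, x2⟩
          simp only [Finset.mem_filter, Finset.mem_univ, true_and, Finset.mem_insert,
            Finset.mem_singleton, Prod.mk.injEq, Sym2.eq_iff]
        rw [hset, Finset.sum_insert (by simp [Prod.ext_iff]; exact fun h => absurd h hab)]
        simp only [Finset.sum_singleton, Sym2.lift_mk]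
        rw [SimpleGraph.dist_comm (u := b) (v := a)]
        ring
  have hprod : ∑ x : V, ∑ y : V, H.dist x y =
      ∑ q ∈ (Finset.univ : Finset (V × V)), H.dist q.1 q.2 := by
    rw [← Finset.univ_product_univ, Finset.sum_product]
  rw [hprod, hfib]
  unfold wienerIndex
  rw [Finset.mul_sum]
  exact (Finset.sum_congr rfl fun z _ => hfiber z).symm

lemma sum_class (c : V → ℕ) (γ : ℕ) (h1 : ∀ x, c x < γ) (f : ℕ → ℕ) :
    ∑ x : V, f (c x) =
      ∑ i ∈ Finset.range γ, (Finset.univ.filter fun x => c x = i).card * f i := by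
  rw [← Finset.sum_fiberwise_of_maps_to (fun x _ => Finset.mem_range.mpr (h1 x))
    (fun x => f (c x))]
  refine Finset.sum_congr rfl fun i _ => ?_
  calc (∑ x ∈ Finset.univ.filter fun x => c x = i, f (c x)) =
      ∑ _x ∈ Finset.univ.filter fun x => c x = i, f i :=
        Finset.sum_congr rfl fun x hx => by rw [(Finset.mem_filter.mp hx).2]
    _ = (Finset.univ.filter fun x => c x = i).card * f i := by
        rw [Finset.sum_const, smul_eq_mul]

lemma sum_class2 (c : V → ℕ) (γ : ℕ) (h1 : ∀ x, c x < γ) (g : ℕ → ℕ → ℕ) :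
    ∑ x : V, ∑ y : V, g (c x) (c y) =
      ∑ i ∈ Finset.range γ, ∑ j ∈ Finset.range γ,
        (Finset.univ.filter fun x => c x = i).card *
          (Finset.univ.filter fun x => c x = j).card * g i j := by
  have hin : ∀ x : V, (∑ y : V, g (c x) (c y)) =
      ∑ j ∈ Finset.range γ, (Finset.univ.filter fun y => c y = j).card * g (c x) j :=
    fun x => sum_class c γ h1 _
  rw [Finset.sum_congr rfl fun x _ => hin x,
    sum_class c γ h1 (fun i => ∑ j ∈ Finset.range γ,
      (Finset.univ.filter fun y => c y = j).card * g i j)]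
  refine Finset.sum_congr rfl fun i _ => ?_
  rw [Finset.mul_sum]
  exact Finset.sum_congr rfl fun j _ => by ring

end Sums

/-- rank-to-class map: rank `2m` is class `m`, rank `2m+1` is class `γ - (m+1)` -/
def idx (γ r : ℕ) : ℕ := if r % 2 = 0 then r / 2 else γ - (r + 1) / 2

end WAux

open WAux in
theorem delete_farthest_edge_min_wiener' {V : Type*} [Fintype V] [DecidableEq V]
    (G : SimpleGraph V) (γ : ℕ) (hγ : 3 ≤ γ) (c : V → ℕ) (v : ℕ → V)
    (hattach : CycleAttach G γ c v)
    (hchain1 : ∀ (i : ℕ) (_h1 : 1 ≤ i) (_h2 : 2 * i ≤ γ),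
      (Finset.univ.filter fun x => c x = γ - i).card ≤
        (Finset.univ.filter fun x => c x = i - 1).card)
    (hchain2 : ∀ (i : ℕ) (_h1 : 1 ≤ i) (_h2 : 2 * i + 1 ≤ γ),
      (Finset.univ.filter fun x => c x = i).card ≤
        (Finset.univ.filter fun x => c x = γ - i).card) :
    ∀ p : ℕ, p < γ →
      wienerIndex (G.deleteEdges {s(v ((γ + 1) / 2 - 1), v ((γ + 1) / 2))}) ≤
        wienerIndex (G.deleteEdges {s(v p, v ((p + 1) % γ))}) := by
  intro p hp
  obtain ⟨h1, h2, h3, h4⟩ := hattach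
  set n : ℕ → ℕ := fun i => (Finset.univ.filter fun x => c x = i).card with hn
  -- monotonicity of class sizes along the rank order
  have hstepm : ∀ r, r + 1 < γ → n (idx γ (r + 1)) ≤ n (idx γ r) := by
    intro r hr
    rcases Nat.even_or_odd r with ⟨m, rfl⟩ | ⟨m, rfl⟩
    · have e1 : idx γ (m + m) = m := by
        unfold idx; rw [if_pos (by omega)]; omega
      have e2 : idx γ (m + m + 1) = γ - (m + 1) := by
        unfold idx; rw [if_neg (by omega)]; omega
      rw [e1, e2]
      have := hchain1 (m + 1) (by omega) (by omega)
      simpa using this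
    · have e1 : idx γ (2 * m + 1) = γ - (m + 1) := by
        unfold idx; rw [if_neg (by omega)]; omega
      have e2 : idx γ (2 * m + 1 + 1) = m + 1 := by
        unfold idx; rw [if_pos (by omega)]; omega
      rw [e1, e2]
      exact hchain2 (m + 1) (by omega) (by omega)
  have hmonod : ∀ d r, r + d < γ → n (idx γ (r + d)) ≤ n (idx γ r) := by
    intro d
    induction d with
    | zero => intro r _; exact le_refl _
    | succ d ih =>
      intro r hr
      calc n (idx γ (r + (d + 1))) = n (idx γ ((r + d) + 1)) := by ring_nf
        _ ≤ n (idx γ (r + d)) := hstepm (r + d) (by omega)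
        _ ≤ n (idx γ r) := ih r (by omega)
  have hrho : ∀ j, j < γ →
      idx γ (min (2 * j) (2 * γ - 2 * j - 1)) = j ∧ min (2 * j) (2 * γ - 2 * j - 1) < γ := by
    intro j hj
    rcases le_or_gt (2 * j + 1) γ with h | h
    · have e : min (2 * j) (2 * γ - 2 * j - 1) = 2 * j := by omega
      rw [e]
      refine ⟨?_, by omega⟩
      unfold idx; rw [if_pos (by omega)]; omega
    · have e : min (2 * j) (2 * γ - 2 * j - 1) = 2 * γ - 2 * j - 1 := by omega
      rw [e]
      refine ⟨?_, by omega⟩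
      unfold idx; rw [if_neg (by omega)]; omega
  have hmono : ∀ x y, x < γ → y < γ →
      min (2 * x) (2 * γ - 2 * x - 1) ≤ min (2 * y) (2 * γ - 2 * y - 1) → n y ≤ n x := by
    intro x y hx hy hle
    obtain ⟨ex, _⟩ := hrho x hx
    obtain ⟨ey, hylt⟩ := hrho y hy
    have e3 : idx γ (min (2 * y) (2 * γ - 2 * y - 1)) =
        idx γ (min (2 * x) (2 * γ - 2 * x - 1) +
          (min (2 * y) (2 * γ - 2 * y - 1) - min (2 * x) (2 * γ - 2 * x - 1))) := by
      congr 1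
      omega
    calc n y = n (idx γ (min (2 * y) (2 * γ - 2 * y - 1))) := by rw [ey]
      _ ≤ n (idx γ (min (2 * x) (2 * γ - 2 * x - 1))) := by
          rw [e3]
          exact hmonod (min (2 * y) (2 * γ - 2 * y - 1) - min (2 * x) (2 * γ - 2 * x - 1))
            (min (2 * x) (2 * γ - 2 * x - 1)) (by omega)
      _ = n x := by rw [ex]
  -- the Wiener index decomposition
  have key : ∀ p' : ℕ, p' < γ →
      2 * wienerIndex (G.deleteEdges {s(v p', v ((p' + 1) % γ))}) =
        (∑ x : V, ∑ y : V,
          (if c x = c y then dd G c x y else dep G c v x + dep G c v y)) +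
        ∑ i ∈ Finset.range γ, ∑ j ∈ Finset.range γ,
          n i * n j * nd (cpos γ p' i) (cpos γ p' j) := by
    intro p' hp'
    rw [two_wiener]
    have hdist : ∀ x y : V,
        (G.deleteEdges {s(v p', v ((p' + 1) % γ))}).dist x y =
          (if c x = c y then dd G c x y else dep G c v x + dep G c v y) +
            nd (cpos γ p' (c x)) (cpos γ p' (c y)) := by
      intro x y
      rw [dist_eq_DD ⟨h1, h2, h3, h4⟩ hγ hp' x y]
      unfold DD
      split_ifs with h
      · rw [h, nd_self, Nat.add_zero]
      · rfl
    calc (∑ x : V, ∑ y : V, (G.deleteEdges {s(v p', v ((p' + 1) % γ))}).dist x y)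
        = ∑ x : V, ∑ y : V,
          ((if c x = c y then dd G c x y else dep G c v x + dep G c v y) +
            nd (cpos γ p' (c x)) (cpos γ p' (c y))) := by
          exact Finset.sum_congr rfl fun x _ => Finset.sum_congr rfl fun y _ => hdist x y
      _ = (∑ x : V, ∑ y : V,
            (if c x = c y then dd G c x y else dep G c v x + dep G c v y)) +
          ∑ x : V, ∑ y : V, nd (cpos γ p' (c x)) (cpos γ p' (c y)) := by
          rw [← Finset.sum_add_distrib]
          exact Finset.sum_congr rfl fun x _ => Finset.sum_add_distrib
      _ = (∑ x : V, ∑ y : V,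
            (if c x = c y then dd G c x y else dep G c v x + dep G c v y)) +
          ∑ i ∈ Finset.range γ, ∑ j ∈ Finset.range γ,
            n i * n j * nd (cpos γ p' i) (cpos γ p' j) := by
          rw [sum_class2 c γ h1 (fun i j => nd (cpos γ p' i) (cpos γ p' j))]
  -- rewrite the left-hand graph into the parametrized family
  have hk1 : 1 ≤ (γ + 1) / 2 := by omega
  have hklt : (γ + 1) / 2 < γ := by omega
  have hp0 : (γ + 1) / 2 - 1 < γ := by omega
  have hedge : ((γ + 1) / 2 - 1 + 1) % γ = (γ + 1) / 2 := by
    rw [show (γ + 1) / 2 - 1 + 1 = (γ + 1) / 2 by omega]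
    exact Nat.mod_eq_of_lt hklt
  have hgoal1 : wienerIndex (G.deleteEdges {s(v ((γ + 1) / 2 - 1), v ((γ + 1) / 2))}) =
      wienerIndex (G.deleteEdges
        {s(v ((γ + 1) / 2 - 1), v (((γ + 1) / 2 - 1 + 1) % γ))}) := by
    rw [hedge]
  rw [hgoal1]
  -- reduce to the combinatorial inequality
  have hS : S γ n ((γ + 1) / 2 - 1) ≤ S γ n p := S_min γ n hγ hmono p hp
  have hcast : ∀ p' : ℕ,
      ((∑ i ∈ Finset.range γ, ∑ j ∈ Finset.range γ,
        n i * n j * nd (cpos γ p' i) (cpos γ p' j) : ℕ) : ℤ) = S γ n p' := by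
    intro p'
    unfold S
    push_cast
    rfl
  have hSN : (∑ i ∈ Finset.range γ, ∑ j ∈ Finset.range γ,
        n i * n j * nd (cpos γ ((γ + 1) / 2 - 1) i) (cpos γ ((γ + 1) / 2 - 1) j)) ≤
      ∑ i ∈ Finset.range γ, ∑ j ∈ Finset.range γ,
        n i * n j * nd (cpos γ p i) (cpos γ p j) := by
    have := hS
    rw [← hcast ((γ + 1) / 2 - 1), ← hcast p] at this
    exact_mod_cast this
  have k1 := key ((γ + 1) / 2 - 1) hp0
  have k2 := key p hp
  omega

/-- Let `G` be a unicyclic graph whose cycle `u_1,…,u_k,(w_k),w_{k-1},…,w_1` (here `u_i` is the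
root at position `i-1` and `w_j` the root at position `γ-j`, with `k = ⌈γ/2⌉`) is ordered as in
the optimality condition `|V(U_1)| ≥ |V(W_1)| ≥ |V(U_2)| ≥ ⋯`.  Among the spanning trees of `G`
obtained by deleting one cycle edge, deleting the edge joining the two cycle vertices farthest
from `u_1` — the edge between positions `k-1` and `k`, i.e. `u_k w_{k-1}` in the odd case and
`u_k w_k` in the even case — minimizes the Wiener index. -/
theorem delete_farthest_edge_min_wiener {V : Type*} [Fintype V] [DecidableEq V]
    (G : SimpleGraph V) (γ : ℕ) (hγ : 3 ≤ γ) (c : V → ℕ) (v : ℕ → V)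
    (hattach : CycleAttach G γ c v)
    (hchain1 : ∀ (i : ℕ) (_h1 : 1 ≤ i) (_h2 : 2 * i ≤ γ),
      (Finset.univ.filter fun x => c x = γ - i).card ≤
        (Finset.univ.filter fun x => c x = i - 1).card)
    (hchain2 : ∀ (i : ℕ) (_h1 : 1 ≤ i) (_h2 : 2 * i + 1 ≤ γ),
      (Finset.univ.filter fun x => c x = i).card ≤
        (Finset.univ.filter fun x => c x = γ - i).card) :
    ∀ p : ℕ, p < γ →
      wienerIndex (G.deleteEdges {s(v ((γ + 1) / 2 - 1), v ((γ + 1) / 2))}) ≤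
        wienerIndex (G.deleteEdges {s(v p, v ((p + 1) % γ))}) :=
  delete_farthest_edge_min_wiener' G γ hγ c v hattach hchain1 hchain2
end
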